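/- arXiv:1011.0266 — 4 statements merged into one kernel-verified Lean document; each statement's English description precedes it below -/
import Mathlib

section
/- Let λ > 0 and β ≥ 0. If h ∈ ℝ^d satisfies 𝔞*_λ(h) < 1, then Σ_{x∈ℤ^d} e^{h·x} A_λ(x) < ∞. Analogously, with V bounded, if 𝔮*_λ(h) < 1 then ℙ-almost surely Σ_{x∈ℤ^d} e^{h·x} Q_λ(x) < ∞. -/
open MeasureTheory ProbabilityTheory Real Filter Topology
open scoped ENNReal NNReal BigOperators Classical

noncomputable section

/-- A polymer: a nearest-neighbour path in `ℤ^d` of length `len`, started at the origin,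
frozen after time `len`. -/
structure Polymer (d : ℕ) where
  len : ℕ
  path : ℕ → Fin d → ℤ
  start : path 0 = 0
  step : ∀ i, i < len → (∑ j, |path (i + 1) j - path i j|) = 1
  frozen : ∀ i, len ≤ i → path i = path len

namespace Polymer

variable {d : ℕ}

/-- The spatial extension `X(γ) = γ_{|γ|}`. -/
def X (γ : Polymer d) : Fin d → ℤ := γ.path γ.len

/-- The local time of `γ` at `x`: the number of visits of `x` by `(γ_1, …, γ_{|γ|})`. -/
def localTime (γ : Polymer d) (x : Fin d → ℤ) : ℕ :=
  ((Finset.Icc 1 γ.len).filter fun i => γ.path i = x).card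

end Polymer

/-- Scalar product `h ⬝ x` between `h ∈ ℝ^d` and a lattice point `x ∈ ℤ^d`. -/
def dotZ {d : ℕ} (h : Fin d → ℝ) (x : Fin d → ℤ) : ℝ := ∑ j, h j * (x j : ℝ)

/-- Scalar product of two vectors of `ℝ^d`. -/
def dotR {d : ℕ} (h u : Fin d → ℝ) : ℝ := ∑ j, h j * u j

/-- Euclidean norm of a lattice point. -/
def znorm {d : ℕ} (x : Fin d → ℤ) : ℝ := Real.sqrt (∑ j, ((x j : ℝ)) ^ 2)

/-- Euclidean norm on `ℝ^d`. -/
def enorm' {d : ℕ} (u : Fin d → ℝ) : ℝ := Real.sqrt (∑ j, (u j) ^ 2)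

/-- Embedding of `ℤ^d` in `ℝ^d`. -/
def toR {d : ℕ} (x : Fin d → ℤ) : Fin d → ℝ := fun j => (x j : ℝ)

/-- The quenched weight `q_{λ,h}^β(γ)` of a polymer `γ` in the (frozen) environment `v`:
`exp(h·X(γ) − λ|γ| − β ∑_{i=1}^{|γ|} v(γ_i)) (2d)^{-|γ|}`. -/
def qweight {d : ℕ} (β lam : ℝ) (h : Fin d → ℝ) (v : (Fin d → ℤ) → ℝ) (γ : Polymer d) : ℝ≥0∞ :=
  ENNReal.ofReal
    (Real.exp (dotZ h γ.X - lam * γ.len - β * ∑ i ∈ Finset.Icc 1 γ.len, v (γ.path i)) *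
      (1 / (2 * d : ℝ)) ^ γ.len)

/-- The quenched point-to-point partition function `Q_λ(x)` (with `h = 0`). -/
def Qpart {d : ℕ} (β lam : ℝ) (v : (Fin d → ℤ) → ℝ) (x : Fin d → ℤ) : ℝ≥0∞ :=
  ∑' γ : {γ : Polymer d // γ.X = x}, qweight β lam 0 v γ

/-- The quenched point-to-point partition function restricted to a set `E` of polymers. -/
def QpartE {d : ℕ} (β lam : ℝ) (v : (Fin d → ℤ) → ℝ) (x : Fin d → ℤ)
    (E : Set (Polymer d)) : ℝ≥0∞ :=
  ∑' γ : {γ : Polymer d // γ.X = x ∧ γ ∈ E}, qweight β lam 0 v γ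

/-- The quenched point-to-point partition function `A_{λ,n}(x)`-style, with fixed length `n`. -/
def QpartLenPt {d : ℕ} (β lam : ℝ) (v : (Fin d → ℤ) → ℝ) (n : ℕ) (x : Fin d → ℤ) : ℝ≥0∞ :=
  ∑' γ : {γ : Polymer d // γ.len = n ∧ γ.X = x}, qweight β lam 0 v γ

/-- The quenched fixed-length partition function `Q_n(h)`. -/
def QpartLen {d : ℕ} (β : ℝ) (h : Fin d → ℝ) (v : (Fin d → ℤ) → ℝ) (n : ℕ) : ℝ≥0∞ :=
  ∑' γ : {γ : Polymer d // γ.len = n}, qweight β 0 h v γ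

/-- The quenched fixed-length partition function restricted to a set `E` of polymers. -/
def QpartLenE {d : ℕ} (β : ℝ) (h : Fin d → ℝ) (v : (Fin d → ℤ) → ℝ) (n : ℕ)
    (E : Set (Polymer d)) : ℝ≥0∞ :=
  ∑' γ : {γ : Polymer d // γ.len = n ∧ γ ∈ E}, qweight β 0 h v γ

/-- The quenched polymer measure `ℚ_n^h(E)` of a set `E` of polymers of length `n`. -/
def Qmeas {d : ℕ} (β : ℝ) (h : Fin d → ℝ) (v : (Fin d → ℤ) → ℝ) (n : ℕ)
    (E : Set (Polymer d)) : ℝ≥0∞ :=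
  QpartLenE β h v n E / QpartLen β h v n

/-- The standing assumptions on the random environment `{V(x)}_{x ∈ ℤ^d}`: a family of
i.i.d. non-degenerate non-negative bounded random variables with `0` in the support. -/
structure Environment (d : ℕ) {Ω : Type*} [MeasurableSpace Ω] (Pr : Measure Ω) where
  V : (Fin d → ℤ) → Ω → ℝ
  meas : ∀ x, Measurable (V x)
  nonneg : ∀ x ω, 0 ≤ V x ω
  bounded : ∃ M : ℝ, ∀ x ω, V x ω ≤ M
  indep : iIndepFun V Pr
  ident : ∀ x y, IdentDistrib (V x) (V y) Pr Pr
  nondeg : ∀ x (c : ℝ), ¬ (∀ᵐ ω ∂Pr, V x ω = c)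
  zeroSupp : ∀ x, ∀ ε : ℝ, 0 < ε → 0 < Pr {ω | V x ω < ε}

variable {Ω : Type*} [MeasurableSpace Ω]

/-- The annealed point-to-point partition function `A_λ(x) = 𝔼 Q_λ(x)`. -/
def Apart {d : ℕ} (Pr : Measure Ω) (env : Environment d Pr) (β lam : ℝ)
    (x : Fin d → ℤ) : ℝ≥0∞ :=
  ∫⁻ ω, Qpart β lam (fun z => env.V z ω) x ∂Pr

/-- The annealed point-to-point partition function restricted to a set `E` of polymers. -/
def ApartE {d : ℕ} (Pr : Measure Ω) (env : Environment d Pr) (β lam : ℝ)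
    (x : Fin d → ℤ) (E : Set (Polymer d)) : ℝ≥0∞ :=
  ∫⁻ ω, QpartE β lam (fun z => env.V z ω) x E ∂Pr

/-- The annealed fixed-length point-to-point partition function `A_{λ,n}(x)`. -/
def ApartLenPt {d : ℕ} (Pr : Measure Ω) (env : Environment d Pr) (β lam : ℝ)
    (n : ℕ) (x : Fin d → ℤ) : ℝ≥0∞ :=
  ∫⁻ ω, QpartLenPt β lam (fun z => env.V z ω) n x ∂Pr

/-- The annealed fixed-length partition function `A_n(h) = 𝔼 Q_n(h)`. -/
def ApartLen {d : ℕ} (Pr : Measure Ω) (env : Environment d Pr) (β : ℝ)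
    (h : Fin d → ℝ) (n : ℕ) : ℝ≥0∞ :=
  ∫⁻ ω, QpartLen β h (fun z => env.V z ω) n ∂Pr

/-- The annealed fixed-length partition function restricted to a set `E`. -/
def ApartLenE {d : ℕ} (Pr : Measure Ω) (env : Environment d Pr) (β : ℝ)
    (h : Fin d → ℝ) (n : ℕ) (E : Set (Polymer d)) : ℝ≥0∞ :=
  ∫⁻ ω, QpartLenE β h (fun z => env.V z ω) n E ∂Pr

/-- The annealed polymer measure `𝔸_n^h(E)` on polymers of length `n`. -/
def AmeasLen {d : ℕ} (Pr : Measure Ω) (env : Environment d Pr) (β : ℝ)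
    (h : Fin d → ℝ) (n : ℕ) (E : Set (Polymer d)) : ℝ≥0∞ :=
  ApartLenE Pr env β h n E / ApartLen Pr env β h n

/-- The annealed polymer measure `𝔸_λ^x(E)` on polymers from `0` to `x`. -/
def AmeasPt {d : ℕ} (Pr : Measure Ω) (env : Environment d Pr) (β lam : ℝ)
    (x : Fin d → ℤ) (E : Set (Polymer d)) : ℝ≥0∞ :=
  ApartE Pr env β lam x E / Apart Pr env β lam x

/-- `a` is the annealed Lyapunov exponent `𝔞_λ` (viewed as a function on `ℝ^d`, through its
values on lattice points). -/
def IsAnnealedLyapunov {d : ℕ} (Pr : Measure Ω) (env : Environment d Pr) (β lam : ℝ)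
    (a : (Fin d → ℝ) → ℝ) : Prop :=
  ∀ x : Fin d → ℤ,
    Tendsto (fun N : ℕ => -(1 / (N : ℝ)) * Real.log (Apart Pr env β lam (N • x)).toReal)
      atTop (𝓝 (a (toR x)))

/-- `q` is the (deterministic) quenched Lyapunov exponent `𝔮_λ` (viewed as a function on
`ℝ^d`, through its values on lattice points). -/
def IsQuenchedLyapunov {d : ℕ} (Pr : Measure Ω) (env : Environment d Pr) (β lam : ℝ)
    (q : (Fin d → ℝ) → ℝ) : Prop :=
  ∀ᵐ ω ∂Pr, ∀ x : Fin d → ℤ,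
    Tendsto (fun N : ℕ => -(1 / (N : ℝ)) * Real.log (Qpart β lam (fun z => env.V z ω) (N • x)).toReal)
      atTop (𝓝 (q (toR x)))

/-- `a` is a norm on `ℝ^d`, equivalent to the Euclidean norm. -/
def IsEquivNorm {d : ℕ} (a : (Fin d → ℝ) → ℝ) : Prop :=
  (∀ u v, a (u + v) ≤ a u + a v) ∧ (∀ (c : ℝ) (u), a (c • u) = |c| * a u) ∧
  (∃ C : ℝ, 0 < C ∧ ∀ u, C⁻¹ * enorm' u ≤ a u ∧ a u ≤ C * enorm' u)

/-- The polar norm `a*(h) = sup_{u ≠ 0} h·u / a(u)`. -/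
def polar {d : ℕ} (a : (Fin d → ℝ) → ℝ) (h : Fin d → ℝ) : ℝ :=
  ⨆ u : {u : Fin d → ℝ // u ≠ 0}, dotR h u.1 / a u.1


namespace SubAux

variable {d : ℕ}

def l1 (x : Fin d → ℤ) : ℕ := ∑ j, (x j).natAbs

lemma eq_zero_of_l1 {x : Fin d → ℤ} (h : l1 x = 0) : x = 0 := by
  funext j
  have := Finset.sum_eq_zero_iff.mp h j (Finset.mem_univ j)
  simpa [Int.natAbs_eq_zero] using this

lemma l1_sub_comm (x y : Fin d → ℤ) : l1 (x - y) = l1 (y - x) := by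
  unfold l1
  refine Finset.sum_congr rfl fun j _ => ?_
  have : (x j - y j) = -(y j - x j) := by ring
  rw [Pi.sub_apply, Pi.sub_apply, this, Int.natAbs_neg]

lemma l1_real (x : Fin d → ℤ) : ((l1 x : ℕ) : ℝ) = ∑ j, |((x j : ℤ) : ℝ)| := by
  unfold l1
  push_cast [Nat.cast_natAbs]
  rfl

lemma natAbs_le_l1 (x : Fin d → ℤ) (j : Fin d) : (x j).natAbs ≤ l1 x :=
  Finset.single_le_sum (f := fun j => (x j).natAbs) (fun _ _ => Nat.zero_le _) (Finset.mem_univ j)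

/-! ### counting -/

lemma unit_step_classify {s : Fin d → ℤ} (hs : (∑ j, |s j|) = 1) :
    ∃ p : Fin d × Bool, s = fun k => if k = p.1 then (if p.2 then 1 else -1) else 0 := by
  have h1 : ∃ j, s j ≠ 0 := by
    by_contra h
    push_neg at h
    simp [h] at hs
  obtain ⟨j, hj⟩ := h1
  have hle : |s j| ≤ ∑ k, |s k| :=
    Finset.single_le_sum (f := fun k => |s k|) (fun k _ => abs_nonneg (s k)) (Finset.mem_univ j)
  have h1le : 1 ≤ |s j| := Int.one_le_abs hj
  have habs : |s j| = 1 := by omega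
  have hrest : ∀ k, k ≠ j → s k = 0 := by
    intro k hk
    have hsplit : |s j| + ∑ k ∈ Finset.univ.erase j, |s k| = 1 := by
      rw [Finset.add_sum_erase Finset.univ (fun k => |s k|) (Finset.mem_univ j)]
      exact hs
    have hzero : ∑ k ∈ Finset.univ.erase j, |s k| = 0 := by linarith [habs, hsplit]
    have := (Finset.sum_eq_zero_iff_of_nonneg (fun k _ => abs_nonneg (s k))).mp hzero k
      (Finset.mem_erase.mpr ⟨hk, Finset.mem_univ k⟩)
    exact abs_eq_zero.mp this
  refine ⟨(j, decide (s j = 1)), ?_⟩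
  funext k
  by_cases hk : k = j
  · subst hk
    rcases (abs_eq (by norm_num : (0:ℤ) ≤ 1)).mp habs with h | h <;> simp [h]
  · simp [hk, hrest k hk]

abbrev StepVec (d : ℕ) := {s : Fin d → ℤ // (∑ j, |s j|) = 1}

def stepEmb (s : StepVec d) : Fin d × Bool := Classical.choose (unit_step_classify s.2)

lemma stepEmb_spec (s : StepVec d) :
    s.1 = fun k => if k = (stepEmb s).1 then (if (stepEmb s).2 then 1 else -1) else 0 :=
  Classical.choose_spec (unit_step_classify s.2)

lemma stepEmb_inj : Function.Injective (stepEmb (d := d)) := fun s t h =>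
  Subtype.ext (by rw [stepEmb_spec s, stepEmb_spec t, h])

instance : Finite (StepVec d) := Finite.of_injective _ stepEmb_inj

lemma natCard_stepVec_le : Nat.card (StepVec d) ≤ 2 * d := by
  have h := Nat.card_le_card_of_injective _ (stepEmb_inj (d := d))
  have : Nat.card (Fin d × Bool) = 2 * d := by
    simp [Nat.card_eq_fintype_card]
    omega
  omega

def incs {n : ℕ} (γ : {γ : Polymer d // γ.len = n}) : Fin n → StepVec d :=
  fun i => ⟨fun j => γ.1.path (i + 1) j - γ.1.path i j, γ.1.step i (by rw [γ.2]; exact i.2)⟩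

lemma Polymer.ext_of (γ γ' : Polymer d) (h1 : γ.len = γ'.len)
    (h2 : ∀ i, γ.path i = γ'.path i) : γ = γ' := by
  obtain ⟨l, p, _, _, _⟩ := γ
  obtain ⟨l', p', _, _, _⟩ := γ'
  simp only at h1 h2
  subst h1
  have : p = p' := funext h2
  subst this
  rfl

lemma fiber_inj {n : ℕ} : Function.Injective (incs (d := d) (n := n)) := by
  rintro ⟨γ, hγ⟩ ⟨γ', hγ'⟩ h
  have hkey : ∀ i, i ≤ n → γ.path i = γ'.path i := by
    intro i
    induction i with
    | zero => intro _; rw [γ.start, γ'.start]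
    | succ i ih =>
      intro hi
      have hi' : i < n := hi
      have hv := congrArg Subtype.val (congrFun h ⟨i, hi'⟩)
      funext j
      have h3 := congrFun hv j
      simp only [incs] at h3
      have h4 := congrFun (ih (le_of_lt hi')) j
      omega
  have hall : ∀ i, γ.path i = γ'.path i := by
    intro i
    rcases le_or_gt i n with h' | h'
    · exact hkey i h'
    · rw [γ.frozen i (by omega), γ'.frozen i (by omega), hγ, hγ']
      exact hkey n le_rfl
  exact Subtype.ext (Polymer.ext_of _ _ (by rw [hγ, hγ']) hall)

instance fiberFinite (n : ℕ) : Finite {γ : Polymer d // γ.len = n} :=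
  Finite.of_injective _ (fiber_inj (d := d) (n := n))

lemma card_fiber_le (n : ℕ) : Nat.card {γ : Polymer d // γ.len = n} ≤ (2 * d) ^ n := by
  have h1 := Nat.card_le_card_of_injective _ (fiber_inj (d := d) (n := n))
  have h2 : Nat.card (Fin n → StepVec d) = Nat.card (StepVec d) ^ n := by
    rw [Nat.card_fun]
    simp [Nat.card_eq_fintype_card]
  rw [h2] at h1
  exact h1.trans (Nat.pow_le_pow_left natCard_stepVec_le n)

lemma tsum_const_finite {ι : Type*} [Finite ι] (c : ℝ≥0∞) :
    ∑' _ : ι, c = (Nat.card ι : ℝ≥0∞) * c := by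
  cases nonempty_fintype ι
  rw [tsum_fintype]
  simp [Finset.sum_const, Nat.card_eq_fintype_card, nsmul_eq_mul]

lemma tsum_polymer_le (g : ℕ → ℝ≥0∞) :
    ∑' γ : Polymer d, g γ.len ≤ ∑' n : ℕ, (((2*d)^n : ℕ) : ℝ≥0∞) * g n := by
  rw [← (Equiv.sigmaFiberEquiv (fun γ : Polymer d => γ.len)).tsum_eq
    (fun γ : Polymer d => g γ.len)]
  have hco : ∀ p : Σ n : ℕ, {γ : Polymer d // γ.len = n},
      g (((Equiv.sigmaFiberEquiv (fun γ : Polymer d => γ.len)) p).len) = g p.1 := by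
    rintro ⟨n, γ, hγ⟩
    exact congrArg g hγ
  rw [tsum_congr hco, ENNReal.tsum_sigma']
  refine ENNReal.tsum_le_tsum fun n => ?_
  show (∑' _ : {γ : Polymer d // γ.len = n}, g n) ≤ _
  rw [tsum_const_finite]
  exact mul_le_mul_left (by exact_mod_cast Nat.cast_le.mpr (card_fiber_le n)) _

lemma qweight_le_of_nonneg {β lam : ℝ} {v : (Fin d → ℤ) → ℝ} (hβ : 0 ≤ β)
    (hv : ∀ z, 0 ≤ v z) (γ : Polymer d) :
    qweight β lam 0 v γ ≤
      ENNReal.ofReal ((Real.exp (-lam)) ^ γ.len * (1 / (2 * (d:ℝ))) ^ γ.len) := by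
  unfold qweight
  apply ENNReal.ofReal_le_ofReal
  apply mul_le_mul_of_nonneg_right _ (pow_nonneg (by positivity) _)
  rw [← Real.exp_nat_mul]
  apply Real.exp_le_exp.mpr
  have h0 : dotZ 0 γ.X = 0 := by simp [dotZ]
  have hH : 0 ≤ β * ∑ i ∈ Finset.Icc 1 γ.len, v (γ.path i) :=
    mul_nonneg hβ (Finset.sum_nonneg fun i _ => hv _)
  rw [h0]
  nlinarith [hH]

lemma Qpart_le_C0 {β lam : ℝ} {v : (Fin d → ℤ) → ℝ} (hβ : 0 ≤ β)
    (hv : ∀ z, 0 ≤ v z) (x : Fin d → ℤ) :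
    Qpart β lam v x ≤ (1 - ENNReal.ofReal (Real.exp (-lam)))⁻¹ := by
  have h1 : Qpart β lam v x ≤
      ∑' γ : Polymer d, ENNReal.ofReal ((Real.exp (-lam)) ^ γ.len * (1 / (2 * (d:ℝ))) ^ γ.len) := by
    unfold Qpart
    calc ∑' γ : {γ : Polymer d // γ.X = x}, qweight β lam 0 v γ.1
        ≤ ∑' γ : {γ : Polymer d // γ.X = x},
            ENNReal.ofReal ((Real.exp (-lam)) ^ γ.1.len * (1 / (2 * (d:ℝ))) ^ γ.1.len) :=
          ENNReal.tsum_le_tsum fun γ => qweight_le_of_nonneg hβ hv γ.1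
      _ ≤ _ := ENNReal.tsum_comp_le_tsum_of_injective Subtype.val_injective _
  refine h1.trans ?_
  refine (tsum_polymer_le (d := d)
    (fun n => ENNReal.ofReal ((Real.exp (-lam)) ^ n * (1 / (2 * (d:ℝ))) ^ n))).trans ?_
  rw [← ENNReal.tsum_geometric (ENNReal.ofReal (Real.exp (-lam)))]
  refine ENNReal.tsum_le_tsum fun n => ?_
  rw [← mul_pow, ENNReal.ofReal_pow (by positivity), ENNReal.ofReal_mul (Real.exp_nonneg _)]
  calc (((2*d)^n : ℕ) : ℝ≥0∞) * (ENNReal.ofReal (Real.exp (-lam)) * ENNReal.ofReal (1 / (2 * (d:ℝ)))) ^ n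
      = ((((2*d) : ℕ) : ℝ≥0∞) * ENNReal.ofReal (1 / (2 * (d:ℝ)))) ^ n * ENNReal.ofReal (Real.exp (-lam)) ^ n := by
        rw [mul_pow, mul_pow]
        push_cast
        ring
    _ ≤ 1 ^ n * ENNReal.ofReal (Real.exp (-lam)) ^ n := by
        gcongr
        rw [← ENNReal.ofReal_natCast, ← ENNReal.ofReal_mul (by positivity)]
        refine ENNReal.ofReal_le_ofReal ?_ |>.trans_eq ENNReal.ofReal_one
        rcases Nat.eq_zero_or_pos d with hd | hd
        · subst hd; norm_num
        · have : (0:ℝ) < 2 * d := by positivity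
          push_cast
          rw [mul_one_div, div_self (by positivity)]
    _ = ENNReal.ofReal (Real.exp (-lam)) ^ n := by rw [one_pow, one_mul]

/-! ### one-step extension and Lipschitz bound -/

def ext1 (γ : Polymer d) (s : Fin d → ℤ) (hs : (∑ j, |s j|) = 1) : Polymer d where
  len := γ.len + 1
  path := fun i => if i ≤ γ.len then γ.path i else γ.X + s
  start := by simp [γ.start]
  step := by
    intro i hi
    rcases Nat.lt_or_ge i γ.len with h | h
    · have h1 : i ≤ γ.len := le_of_lt h
      have h2 : i + 1 ≤ γ.len := h
      simp only [if_pos h1, if_pos h2]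
      exact γ.step i h
    · have h' : i = γ.len := by omega
      subst h'
      simp only [if_pos (le_refl γ.len), if_neg (by omega : ¬ γ.len + 1 ≤ γ.len)]
      simpa [Polymer.X] using hs
  frozen := by
    intro i hi
    have h1 : ¬ i ≤ γ.len := by omega
    have h2 : ¬ γ.len + 1 ≤ γ.len := by omega
    simp [if_neg h1, if_neg h2]

lemma ext1_len (γ : Polymer d) (s : Fin d → ℤ) (hs : (∑ j, |s j|) = 1) :
    (ext1 γ s hs).len = γ.len + 1 := rfl

lemma ext1_path_le (γ : Polymer d) (s : Fin d → ℤ) (hs : (∑ j, |s j|) = 1)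
    {i : ℕ} (hi : i ≤ γ.len) : (ext1 γ s hs).path i = γ.path i := by
  simp only [ext1, if_pos hi]

lemma ext1_X (γ : Polymer d) (s : Fin d → ℤ) (hs : (∑ j, |s j|) = 1) :
    (ext1 γ s hs).X = γ.X + s := by
  show (ext1 γ s hs).path (γ.len + 1) = γ.X + s
  simp only [ext1, if_neg (by omega : ¬ γ.len + 1 ≤ γ.len)]

lemma ext1_inj (s : Fin d → ℤ) (hs : (∑ j, |s j|) = 1) :
    Function.Injective (fun γ : Polymer d => ext1 γ s hs) := by
  intro γ γ' h
  have hlen : γ.len = γ'.len := by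
    have := congrArg Polymer.len h
    simpa [ext1_len] using this
  have hpath : ∀ i, i ≤ γ.len → γ.path i = γ'.path i := by
    intro i hi
    have := congrArg (fun p => Polymer.path p i) h
    simp only at this
    rwa [ext1_path_le γ s hs hi, ext1_path_le γ' s hs (hlen ▸ hi)] at this
  apply Polymer.ext_of _ _ hlen
  intro i
  rcases le_or_gt i γ.len with hi | hi
  · exact hpath i hi
  · rw [γ.frozen i (le_of_lt hi), γ'.frozen i (by omega)]
    rw [← hlen]
    exact hpath γ.len le_rfl

lemma qweight_ext1 {β lam M : ℝ} {v : (Fin d → ℤ) → ℝ} (hd : 0 < d) (hβ : 0 ≤ β)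
    (hvM : ∀ z, v z ≤ M) (γ : Polymer d) (s : Fin d → ℤ) (hs : (∑ j, |s j|) = 1) :
    ENNReal.ofReal (Real.exp (-(lam + β * M + Real.log (2*d)))) * qweight β lam 0 v γ
      ≤ qweight β lam 0 v (ext1 γ s hs) := by
  have h2d : (0:ℝ) < 2 * d := by positivity
  unfold qweight
  rw [← ENNReal.ofReal_mul (Real.exp_nonneg _)]
  apply ENNReal.ofReal_le_ofReal
  have hX : dotZ 0 (ext1 γ s hs).X = 0 := by simp [dotZ]
  have hX' : dotZ 0 γ.X = 0 := by simp [dotZ]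
  have hlen : (ext1 γ s hs).len = γ.len + 1 := rfl
  have hsum : ∑ i ∈ Finset.Icc 1 ((ext1 γ s hs).len), v ((ext1 γ s hs).path i)
      = (∑ i ∈ Finset.Icc 1 γ.len, v (γ.path i)) + v (γ.X + s) := by
    rw [hlen, Finset.sum_Icc_succ_top (by omega : 1 ≤ γ.len + 1)]
    congr 1
    · refine Finset.sum_congr rfl fun i hi => ?_
      rw [ext1_path_le γ s hs (Finset.mem_Icc.mp hi).2]
    · rw [show γ.len + 1 = (ext1 γ s hs).len from rfl, ← Polymer.X, ext1_X]
  have hw : v (γ.X + s) ≤ M := hvM _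
  have hinv2 : (1 / (2 * (d:ℝ))) ^ (γ.len + 1) = Real.exp (-(Real.log (2*(d:ℝ)))) ^ (γ.len + 1) := by
    rw [Real.exp_neg, Real.exp_log h2d, one_div]
  have hinv2n : (1 / (2 * (d:ℝ))) ^ γ.len = Real.exp (-(Real.log (2*(d:ℝ)))) ^ γ.len := by
    rw [Real.exp_neg, Real.exp_log h2d, one_div]
  rw [hX, hX', hsum, hlen, hinv2, hinv2n, ← Real.exp_nat_mul, ← Real.exp_nat_mul,
    ← Real.exp_add, ← Real.exp_add, ← Real.exp_add]
  apply Real.exp_le_exp.mpr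
  have hww : β * v (γ.X + s) ≤ β * M := mul_le_mul_of_nonneg_left hw hβ
  push_cast
  nlinarith [hww]

lemma Qpart_step {β lam M : ℝ} {v : (Fin d → ℤ) → ℝ} (hd : 0 < d) (hβ : 0 ≤ β)
    (hvM : ∀ z, v z ≤ M) (x : Fin d → ℤ) (s : Fin d → ℤ) (hs : (∑ j, |s j|) = 1) :
    Qpart β lam v x ≤
      ENNReal.ofReal (Real.exp (lam + β * M + Real.log (2*d))) * Qpart β lam v (x + s) := by
  set K := lam + β * M + Real.log (2*(d:ℝ)) with hK
  unfold Qpart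
  rw [← ENNReal.tsum_mul_left]
  refine ENNReal.summable.tsum_le_tsum_of_inj
    (fun γp : {γ : Polymer d // γ.X = x} =>
      (⟨ext1 γp.1 s hs, by rw [ext1_X, γp.2]⟩ : {γ : Polymer d // γ.X = x + s}))
    (fun γ γ' hh => Subtype.ext (ext1_inj s hs (congrArg Subtype.val hh)))
    (fun c _ => zero_le) (fun γp => ?_) ENNReal.summable
  calc qweight β lam 0 v γp.1
      = (ENNReal.ofReal (Real.exp K) * ENNReal.ofReal (Real.exp (-K))) * qweight β lam 0 v γp.1 := by
        rw [← ENNReal.ofReal_mul (Real.exp_nonneg _), ← Real.exp_add, add_neg_cancel,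
          Real.exp_zero, ENNReal.ofReal_one, one_mul]
    _ = ENNReal.ofReal (Real.exp K) * (ENNReal.ofReal (Real.exp (-K)) * qweight β lam 0 v γp.1) := by
        rw [mul_assoc]
    _ ≤ ENNReal.ofReal (Real.exp K) * qweight β lam 0 v (ext1 γp.1 s hs) :=
        mul_le_mul_right (qweight_ext1 hd hβ hvM γp.1 s hs) _

lemma Qpart_lip {β lam M : ℝ} {v : (Fin d → ℤ) → ℝ} (hβ : 0 ≤ β) (hvM : ∀ z, v z ≤ M) :
    ∀ (n : ℕ) (x w : Fin d → ℤ), l1 w = n →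
      Qpart β lam v x ≤
        ENNReal.ofReal (Real.exp ((lam + β * M + Real.log (2*(d:ℝ))) * n)) *
          Qpart β lam v (x + w) := by
  intro n
  induction n with
  | zero =>
    intro x w hw
    have hw0 : w = 0 := eq_zero_of_l1 hw
    subst hw0
    simp
  | succ n ih =>
    intro x w hw
    have hex : ∃ j, w j ≠ 0 := by
      by_contra hcon
      push_neg at hcon
      have : w = 0 := funext hcon
      subst this
      simp [l1] at hw
    obtain ⟨j, hj⟩ := hex
    have hd : 0 < d := j.pos
    set s : Fin d → ℤ := fun k => if k = j then Int.sign (w j) else 0 with hsdef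
    have habs : |Int.sign (w j)| = 1 := by
      rcases hj.lt_or_gt with h | h
      · rw [Int.sign_eq_neg_one_of_neg h]; rfl
      · rw [Int.sign_eq_one_of_pos h]; rfl
    have hs : (∑ k, |s k|) = 1 := by
      rw [Finset.sum_eq_single j]
      · simpa [hsdef] using habs
      · intro k _ hk; simp [hsdef, hk]
      · intro hin; exact absurd (Finset.mem_univ j) hin
    have hstep : ((w - s) j).natAbs = (w j).natAbs - 1 ∧ 1 ≤ (w j).natAbs := by
      constructor
      · rcases hj.lt_or_gt with h | h
        · rw [Pi.sub_apply]
          simp only [hsdef, if_pos rfl, Int.sign_eq_neg_one_of_neg h]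
          omega
        · rw [Pi.sub_apply]
          simp only [hsdef, if_pos rfl, Int.sign_eq_one_of_pos h]
          omega
      · omega
    have hw' : l1 (w - s) = n := by
      have e1 : (w j).natAbs + ∑ k ∈ Finset.univ.erase j, (w k).natAbs = l1 w :=
        Finset.add_sum_erase Finset.univ (fun k => (w k).natAbs) (Finset.mem_univ j)
      have e2 : ((w - s) j).natAbs + ∑ k ∈ Finset.univ.erase j, ((w - s) k).natAbs = l1 (w - s) :=
        Finset.add_sum_erase Finset.univ (fun k => ((w - s) k).natAbs) (Finset.mem_univ j)
      have e3 : ∑ k ∈ Finset.univ.erase j, ((w - s) k).natAbs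
          = ∑ k ∈ Finset.univ.erase j, (w k).natAbs := by
        refine Finset.sum_congr rfl fun k hk => ?_
        have hk' : k ≠ j := (Finset.mem_erase.mp hk).1
        simp [hsdef, hk']
      omega
    have hxsw : (x + s) + (w - s) = x + w := by ring
    calc Qpart β lam v x
        ≤ ENNReal.ofReal (Real.exp (lam + β * M + Real.log (2*(d:ℝ)))) * Qpart β lam v (x + s) :=
          Qpart_step hd hβ hvM x s hs
      _ ≤ ENNReal.ofReal (Real.exp (lam + β * M + Real.log (2*(d:ℝ)))) *
            (ENNReal.ofReal (Real.exp ((lam + β * M + Real.log (2*(d:ℝ))) * n)) *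
              Qpart β lam v ((x + s) + (w - s))) :=
          mul_le_mul_right (ih (x + s) (w - s) hw') _
      _ = ENNReal.ofReal (Real.exp ((lam + β * M + Real.log (2*(d:ℝ))) * ((n:ℝ) + 1))) *
            Qpart β lam v (x + w) := by
          rw [hxsw, ← mul_assoc, ← ENNReal.ofReal_mul (Real.exp_nonneg _), ← Real.exp_add]
          ring_nf
      _ = ENNReal.ofReal (Real.exp ((lam + β * M + Real.log (2*(d:ℝ))) * ((n + 1 : ℕ) : ℝ))) *
            Qpart β lam v (x + w) := by
          push_cast
          ring_nf

/-! ### summability over the lattice -/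

lemma tsum_geom_int {r : ℝ≥0∞} (hr : r < 1) : ∑' k : ℤ, r ^ (k.natAbs) < ⊤ := by
  have h1 : HasSum (fun n : ℕ => r ^ n) (∑' n : ℕ, r ^ n) := ENNReal.summable.hasSum
  have h2 : HasSum (fun n : ℕ => r ^ (n + 1)) (∑' n : ℕ, r ^ (n + 1)) := ENNReal.summable.hasSum
  have h3 := h1.int_rec h2
  have h4 : (fun k : ℤ => r ^ (k.natAbs))
      = fun k : ℤ => Int.rec (fun n : ℕ => r ^ n) (fun n : ℕ => r ^ (n + 1)) k := by
    funext k
    cases k <;> rfl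
  rw [h4, h3.tsum_eq]
  have hne : (1 : ℝ≥0∞) - r ≠ 0 := by
    intro hcon
    exact absurd (tsub_eq_zero_iff_le.mp hcon) (not_le.mpr hr)
  have hfin : (1 - r)⁻¹ < ⊤ := ENNReal.inv_lt_top.mpr (pos_iff_ne_zero.mpr hne)
  have g1 : ∑' n : ℕ, r ^ n < ⊤ := by rw [ENNReal.tsum_geometric]; exact hfin
  have g2 : ∑' n : ℕ, r ^ (n + 1) < ⊤ := by
    rw [ENNReal.tsum_geometric_add_one]
    exact ENNReal.mul_lt_top (hr.trans_le le_top) hfin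
  exact ENNReal.add_lt_top.mpr ⟨g1, g2⟩

lemma tsum_pi_int (m : ℕ) (g : ℤ → ℝ≥0∞) :
    ∑' x : Fin m → ℤ, ∏ j, g (x j) = (∑' k : ℤ, g k) ^ m := by
  induction m with
  | zero =>
    rw [tsum_eq_single (default : Fin 0 → ℤ) (fun b hb => absurd (Subsingleton.elim b default) hb)]
    simp
  | succ n ih =>
    rw [← (Fin.consEquiv fun _ : Fin (n+1) => ℤ).tsum_eq (fun x : Fin (n+1) → ℤ => ∏ j, g (x j))]
    have hsplit : ∀ p : ℤ × (Fin n → ℤ),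
        (∏ j, g (((Fin.consEquiv fun _ : Fin (n+1) => ℤ) p) j)) = g p.1 * ∏ j : Fin n, g (p.2 j) := by
      rintro ⟨k, y⟩
      rw [Fin.prod_univ_succ]
      simp [Fin.consEquiv]
    rw [tsum_congr hsplit, ENNReal.tsum_prod']
    have : ∀ k : ℤ, ∑' y : Fin n → ℤ, g k * ∏ j : Fin n, g (y j)
        = g k * (∑' k' : ℤ, g k') ^ n := by
      intro k
      rw [ENNReal.tsum_mul_left, ih]
    rw [tsum_congr this, ENNReal.tsum_mul_right, pow_succ]
    ring

lemma tsum_exp_l1 {c : ℝ} (hc : 0 < c) :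
    ∑' x : Fin d → ℤ, ENNReal.ofReal (Real.exp (-c * (l1 x : ℝ))) < ⊤ := by
  have hterm : ∀ x : Fin d → ℤ, ENNReal.ofReal (Real.exp (-c * (l1 x : ℝ)))
      = ∏ j, (ENNReal.ofReal (Real.exp (-c))) ^ ((x j).natAbs) := by
    intro x
    have h1 : -c * (l1 x : ℝ) = ∑ j, (((x j).natAbs : ℝ) * (-c)) := by
      unfold l1
      push_cast
      rw [← Finset.sum_mul]
      ring
    rw [h1, Real.exp_sum, ENNReal.ofReal_prod_of_nonneg (fun i _ => Real.exp_nonneg _)]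
    refine Finset.prod_congr rfl fun j _ => ?_
    rw [Real.exp_nat_mul, ENNReal.ofReal_pow (Real.exp_nonneg _)]
  rw [tsum_congr hterm,
    tsum_pi_int d (fun k => ENNReal.ofReal (Real.exp (-c)) ^ k.natAbs)]
  refine ENNReal.pow_lt_top ?_
  exact tsum_geom_int (ENNReal.ofReal_lt_one.mpr (Real.exp_lt_one_iff.mpr (by linarith)))

/-! ### norm facts -/

lemma enorm'_nonneg (u : Fin d → ℝ) : 0 ≤ enorm' u := Real.sqrt_nonneg _

lemma enorm'_le_sum_abs (u : Fin d → ℝ) : enorm' u ≤ ∑ j, |u j| := by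
  have h0 : ∀ j, u j ^ 2 = |u j| ^ 2 := fun j => (sq_abs (u j)).symm
  have h : ∑ j, u j ^ 2 ≤ (∑ j, |u j|) ^ 2 := by
    rw [Finset.sum_congr rfl fun j _ => h0 j]
    exact Finset.sum_sq_le_sq_sum_of_nonneg fun j _ => abs_nonneg _
  calc enorm' u ≤ Real.sqrt ((∑ j, |u j|) ^ 2) := Real.sqrt_le_sqrt h
    _ = ∑ j, |u j| := Real.sqrt_sq (Finset.sum_nonneg fun j _ => abs_nonneg _)

lemma sum_abs_le_sqrt_enorm' (u : Fin d → ℝ) :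
    ∑ j, |u j| ≤ Real.sqrt d * enorm' u := by
  have h := Finset.sum_mul_sq_le_sq_mul_sq Finset.univ (fun j => |u j|) (fun _ => (1:ℝ))
  simp only [mul_one, one_pow, Finset.sum_const, Finset.card_univ, Fintype.card_fin,
    nsmul_eq_mul] at h
  -- h : (∑ |u j|)^2 ≤ (∑ |u j|^2) * d
  have h2 : (∑ j, |u j|) ^ 2 ≤ (∑ j, u j ^ 2) * d := by
    calc (∑ j, |u j|) ^ 2 ≤ (∑ j, |u j| ^ 2) * d := h
      _ = (∑ j, u j ^ 2) * d := by
          congr 1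
          exact Finset.sum_congr rfl fun j _ => sq_abs (u j)
  calc ∑ j, |u j| = Real.sqrt ((∑ j, |u j|) ^ 2) :=
        (Real.sqrt_sq (Finset.sum_nonneg fun j _ => abs_nonneg _)).symm
    _ ≤ Real.sqrt ((∑ j, u j ^ 2) * d) := Real.sqrt_le_sqrt h2
    _ = Real.sqrt (d * (∑ j, u j ^ 2)) := by rw [mul_comm]
    _ = Real.sqrt d * enorm' u := Real.sqrt_mul (Nat.cast_nonneg d) _

lemma toR_sub (x y : Fin d → ℤ) : toR x - toR y = toR (x - y) := by
  funext j
  simp [toR]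

lemma sum_abs_toR (w : Fin d → ℤ) : ∑ j, |toR w j| = (l1 w : ℝ) := by
  rw [l1_real]
  rfl

/-! ### the master summability lemma -/

set_option maxHeartbeats 2000000 in
lemma master {d : ℕ} (hd : 0 < d)
    (f : (Fin d → ℤ) → ℝ≥0∞) (b : (Fin d → ℝ) → ℝ) (h : Fin d → ℝ) (θ : ℝ)
    (hθ0 : 0 ≤ θ) (hθ : θ < 1)
    (C₀ : ℝ≥0∞) (hC₀ : C₀ ≠ ⊤) (hf : ∀ x, f x ≤ C₀)
    (K : ℝ) (hK : 0 ≤ K)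
    (hlip : ∀ x w : Fin d → ℤ,
      f x ≤ ENNReal.ofReal (Real.exp (K * (l1 w : ℝ))) * f (x + w))
    (hb : IsEquivNorm b)
    (hlyap : ∀ z : Fin d → ℤ, Tendsto
      (fun N : ℕ => -(1 / (N : ℝ)) * Real.log (f (N • z)).toReal) atTop (𝓝 (b (toR z))))
    (hpolar : ∀ x : Fin d → ℤ, dotZ h x ≤ θ * b (toR x)) :
    ∑' x : Fin d → ℤ, ENNReal.ofReal (Real.exp (dotZ h x)) * f x < ⊤ := by
  obtain ⟨hbadd, hbhom, C, hCpos, hCbd⟩ := hb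
  have hdR : (0:ℝ) < d := by exact_mod_cast hd
  have hsqd : (0:ℝ) < Real.sqrt d := Real.sqrt_pos.mpr hdR
  set c₀ : ℝ := (C * Real.sqrt d)⁻¹ with hc₀def
  have hc₀ : 0 < c₀ := by positivity
  have hlow : ∀ x : Fin d → ℤ, c₀ * (l1 x : ℝ) ≤ b (toR x) := by
    intro x
    have h1 : (l1 x : ℝ) ≤ Real.sqrt d * enorm' (toR x) := by
      rw [← sum_abs_toR]
      exact sum_abs_le_sqrt_enorm' (toR x)
    have h2 := (hCbd (toR x)).1
    rw [hc₀def]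
    rw [inv_mul_le_iff₀ (by positivity)]
    calc (l1 x : ℝ) ≤ Real.sqrt d * enorm' (toR x) := h1
      _ = Real.sqrt d * (C * (C⁻¹ * enorm' (toR x))) := by
          field_simp
      _ ≤ Real.sqrt d * (C * b (toR x)) := by
          have := mul_le_mul_of_nonneg_left h2 hCpos.le
          nlinarith [hsqd]
      _ = C * Real.sqrt d * b (toR x) := by ring
  have hup : ∀ w : Fin d → ℤ, b (toR w) ≤ C * (l1 w : ℝ) := by
    intro w
    calc b (toR w) ≤ C * enorm' (toR w) := (hCbd (toR w)).2
      _ ≤ C * (l1 w : ℝ) := by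
          rw [← sum_abs_toR]
          exact mul_le_mul_of_nonneg_left (enorm'_le_sum_abs _) hCpos.le
  have hbnn : ∀ u, 0 ≤ b u := fun u =>
    le_trans (mul_nonneg (inv_nonneg.mpr hCpos.le) (enorm'_nonneg u)) (hCbd u).1
  set δ : ℝ := (1 - θ) * c₀ with hδdef
  have hδ : 0 < δ := by
    rw [hδdef]
    nlinarith
  -- choose R
  set R : ℕ := max 1 ⌈4 * (K + C) * d / δ⌉₊ with hRdef
  have hR1 : 1 ≤ R := le_max_left _ _
  have hRpos : (0:ℝ) < R := by exact_mod_cast Nat.lt_of_lt_of_le Nat.zero_lt_one hR1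
  have hRb : 4 * (K + C) * d ≤ δ * R := by
    have h1 : (4 * (K + C) * d / δ : ℝ) ≤ (⌈4 * (K + C) * d / δ⌉₊ : ℝ) := Nat.le_ceil _
    have h2 : ((⌈4 * (K + C) * d / δ⌉₊ : ℕ) : ℝ) ≤ (R : ℝ) := by
      exact_mod_cast Nat.cast_le.mpr (le_max_right _ _)
    have h3 : 4 * (K + C) * d / δ ≤ (R:ℝ) := le_trans h1 h2
    calc 4 * (K + C) * d = (4 * (K + C) * d / δ) * δ := by field_simp
      _ ≤ (R:ℝ) * δ := mul_le_mul_of_nonneg_right h3 hδ.le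
      _ = δ * R := by ring
  -- per-direction thresholds
  have hth : ∀ z : Fin d → ℤ, ∃ Nz : ℕ, ∀ m : ℕ, Nz ≤ m → 1 ≤ m →
      f (m • z) ≤ ENNReal.ofReal (Real.exp (-(m:ℝ) * (b (toR z) - δ/4))) := by
    intro z
    have hev := (hlyap z).eventually
      (eventually_gt_nhds (show b (toR z) - δ/4 < b (toR z) by linarith))
    rw [eventually_atTop] at hev
    obtain ⟨Nz, hNz⟩ := hev
    refine ⟨Nz, fun m hm hm1 => ?_⟩
    have hcl := hNz m hm
    have hmpos : (0:ℝ) < m := by exact_mod_cast hm1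
    have hinv1 : (1/(m:ℝ)) * m = 1 := by field_simp
    have hlog : Real.log (f (m • z)).toReal < -(m:ℝ) * (b (toR z) - δ/4) := by
      have h1 := mul_lt_mul_of_pos_right hcl hmpos
      have h2 : -(1 / (m:ℝ)) * Real.log (f (m • z)).toReal * (m:ℝ)
          = -Real.log (f (m • z)).toReal := by field_simp
      rw [h2] at h1
      linarith
    have htofin : f (m • z) ≠ ⊤ := (lt_of_le_of_lt (hf _) (lt_top_iff_ne_top.mpr hC₀)).ne
    rw [← ENNReal.ofReal_toReal htofin]
    apply ENNReal.ofReal_le_ofReal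
    rcases eq_or_lt_of_le (ENNReal.toReal_nonneg : 0 ≤ (f (m • z)).toReal) with h0 | h0
    · rw [← h0]
      exact (Real.exp_pos _).le
    · calc (f (m • z)).toReal = Real.exp (Real.log (f (m • z)).toReal) := (Real.exp_log h0).symm
        _ ≤ _ := Real.exp_le_exp.mpr hlog.le
  choose Nz hNz using hth
  set Zfin : Finset (Fin d → ℤ) :=
    Fintype.piFinset (fun _ : Fin d => Finset.Icc (-(R:ℤ)) (R:ℤ)) with hZfin
  set N₀ : ℕ := Zfin.sup (fun z => max (Nz z) 1) with hN₀
  set n₁ : ℕ := R * (N₀ + 1) with hn₁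
  set H : ℝ := ∑ j, |h j| with hH
  have hHnn : 0 ≤ H := Finset.sum_nonneg fun j _ => abs_nonneg _
  -- the big-x bound
  have hbig : ∀ x : Fin d → ℤ, n₁ ≤ l1 x →
      ENNReal.ofReal (Real.exp (dotZ h x)) * f x ≤
        ENNReal.ofReal (Real.exp ((K + C) * d * R)) *
          ENNReal.ofReal (Real.exp (-(δ/2) * (l1 x : ℝ))) := by
    intro x hx
    set n : ℕ := l1 x with hn
    have hn1pos : 1 ≤ n₁ := by
      rw [hn₁]
      exact Nat.le_mul_of_pos_right _ (Nat.succ_pos _) |>.trans' hR1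
    have hnpos : 0 < n := lt_of_lt_of_le hn1pos hx
    have hnR : (0:ℝ) < n := by exact_mod_cast hnpos
    set z : Fin d → ℤ := fun j => ((R:ℤ) * x j) / (n:ℤ) with hzdef
    set m : ℕ := n / R with hmdef
    -- componentwise facts
    have hxj : ∀ j, |x j| ≤ (n:ℤ) := by
      intro j
      rw [Int.abs_eq_natAbs]
      exact_mod_cast natAbs_le_l1 x j
    have hzj : ∀ j, |z j| ≤ (R:ℤ) := by
      intro j
      rw [abs_le]
      constructor
      · have h1 : (-(R:ℤ)) * (n:ℤ) ≤ (R:ℤ) * x j := by nlinarith [hxj j, abs_le.mp (hxj j)]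
        have h2 := Int.ediv_le_ediv (by exact_mod_cast hnpos : (0:ℤ) < (n:ℤ)) h1
        rwa [Int.mul_ediv_cancel _ (by exact_mod_cast hnpos.ne' : (n:ℤ) ≠ 0)] at h2
      · have h1 : (R:ℤ) * x j ≤ (R:ℤ) * (n:ℤ) := by nlinarith [abs_le.mp (hxj j)]
        have h2 := Int.ediv_le_ediv (by exact_mod_cast hnpos : (0:ℤ) < (n:ℤ)) h1
        rwa [Int.mul_ediv_cancel _ (by exact_mod_cast hnpos.ne' : (n:ℤ) ≠ 0)] at h2
    have hdm : R * m + n % R = n := by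
      rw [hmdef]
      exact Nat.div_add_mod n R
    have hmodR : n % R < R := Nat.mod_lt _ (by omega)
    have hcomp : ∀ j, |((m • z - x) j)| * (R:ℤ) ≤ (R:ℤ) * R + n := by
      intro j
      have hediv : (n:ℤ) * (((R:ℤ) * x j) / (n:ℤ)) + ((R:ℤ) * x j) % (n:ℤ) = (R:ℤ) * x j :=
        Int.mul_ediv_add_emod _ _
      have hrnn : 0 ≤ ((R:ℤ) * x j) % (n:ℤ) :=
        Int.emod_nonneg _ (by exact_mod_cast hnpos.ne' : (n:ℤ) ≠ 0)
      have hrlt : ((R:ℤ) * x j) % (n:ℤ) < (n:ℤ) :=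
        Int.emod_lt_of_pos _ (by exact_mod_cast hnpos : (0:ℤ) < (n:ℤ))
      have hRm : ((R:ℤ) * m - n) = -((n % R : ℕ) : ℤ) := by
        have := hdm
        push_cast
        omega
      have hsmul : (m • z - x) j = (m:ℤ) * z j - x j := by
        rw [Pi.sub_apply, Pi.smul_apply, nsmul_eq_mul]
      have hkey : (R:ℤ) * ((m:ℤ) * z j - x j)
          = ((R:ℤ) * m - n) * z j - ((R:ℤ) * x j) % (n:ℤ) := by
        have hzeq : (n:ℤ) * z j = (R:ℤ) * x j - ((R:ℤ) * x j) % (n:ℤ) := by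
          simp only [hzdef]
          linarith [hediv]
        linear_combination hzeq
      have habs1 : |(R:ℤ) * m - n| ≤ (R:ℤ) := by
        rw [hRm, abs_neg, abs_of_nonneg (by positivity)]
        exact_mod_cast le_of_lt hmodR
      calc |((m • z - x) j)| * (R:ℤ) = |(R:ℤ) * ((m:ℤ) * z j - x j)| := by
            rw [hsmul, abs_mul, abs_of_nonneg (by positivity : (0:ℤ) ≤ (R:ℤ))]
            ring
        _ = |((R:ℤ) * m - n) * z j - ((R:ℤ) * x j) % (n:ℤ)| := by rw [hkey]
        _ ≤ |((R:ℤ) * m - n) * z j| + |((R:ℤ) * x j) % (n:ℤ)| := abs_sub _ _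
        _ ≤ (R:ℤ) * R + n := by
            rw [abs_mul]
            have h1 : |(R:ℤ) * m - n| * |z j| ≤ (R:ℤ) * R :=
              mul_le_mul habs1 (hzj j) (abs_nonneg _) (by positivity)
            have h2 : |((R:ℤ) * x j) % (n:ℤ)| ≤ (n:ℤ) := by
              rw [abs_of_nonneg hrnn]
              exact hrlt.le
            linarith
    -- L bound
    set L : ℝ := (l1 (m • z - x) : ℝ) with hLdef
    have hLnn : 0 ≤ L := Nat.cast_nonneg _
    have hLR : L * R ≤ (d:ℝ) * R * R + d * n := by
      have hsum : (l1 (m • z - x) : ℤ) * (R:ℤ) ≤ (d:ℤ) * R * R + d * n := by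
        have : (l1 (m • z - x) : ℤ) = ∑ j, |(m • z - x) j| := by
          rw [l1, Nat.cast_sum]
          refine Finset.sum_congr rfl fun j _ => ?_
          exact (Int.abs_eq_natAbs _).symm
        rw [this, Finset.sum_mul]
        calc ∑ j, |(m • z - x) j| * (R:ℤ) ≤ ∑ _j : Fin d, ((R:ℤ) * R + n) :=
              Finset.sum_le_sum fun j _ => hcomp j
          _ = (d:ℤ) * ((R:ℤ) * R + n) := by
              rw [Finset.sum_const, Finset.card_univ, Fintype.card_fin, nsmul_eq_mul]
          _ = (d:ℤ) * R * R + d * n := by ring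
      rw [hLdef]
      exact_mod_cast hsum
    have hmn : m ≤ n := Nat.div_le_self n R
    have hmR : (m:ℝ) ≤ (n:ℝ) := by exact_mod_cast hmn
    -- m is large
    have hmlarge : N₀ + 1 ≤ m := by
      rw [hmdef]
      rw [Nat.le_div_iff_mul_le (by omega : 0 < R)]
      calc (N₀ + 1) * R = R * (N₀ + 1) := by ring
        _ ≤ n := hx
    have hzmem : z ∈ Zfin := by
      rw [hZfin, Fintype.mem_piFinset]
      intro j
      rw [Finset.mem_Icc]
      exact abs_le.mp (hzj j)
    have hmNz : Nz z ≤ m := by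
      have h1 : max (Nz z) 1 ≤ N₀ := Finset.le_sup (f := fun z => max (Nz z) 1) hzmem
      omega
    have hm1 : 1 ≤ m := by
      have h1 : max (Nz z) 1 ≤ N₀ := Finset.le_sup (f := fun z => max (Nz z) 1) hzmem
      omega
    -- norm estimates
    set bx : ℝ := b (toR x) with hbx
    set bz : ℝ := b (toR z) with hbz
    have hbxup : bx ≤ (m:ℝ) * bz + C * L := by
      have hsplit : toR x = toR (m • z) + (toR x - toR (m • z)) := by ring
      have h1 : bx ≤ b (toR (m • z)) + b (toR x - toR (m • z)) := by
        have := hbadd (toR (m • z)) (toR x - toR (m • z))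
        rwa [show toR (m • z) + (toR x - toR (m • z)) = toR x by ring] at this
      have h2 : toR (m • z) = (m:ℝ) • toR z := by
        funext j
        show (((m • z) j : ℤ) : ℝ) = (m:ℝ) * ((z j : ℤ) : ℝ)
        rw [Pi.smul_apply, nsmul_eq_mul]
        push_cast
        ring
      have h3 : b (toR (m • z)) = (m:ℝ) * bz := by
        rw [h2, hbhom, abs_of_nonneg (Nat.cast_nonneg m)]
      have h4 : b (toR x - toR (m • z)) ≤ C * L := by
        rw [toR_sub]
        calc b (toR (x - m • z)) ≤ C * (l1 (x - m • z) : ℝ) := hup _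
          _ = C * L := by rw [hLdef, l1_sub_comm]
      linarith
    have hbxlow : c₀ * (n:ℝ) ≤ bx := hlow x
    have hbznn : 0 ≤ bz := hbnn _
    have hbxnn : 0 ≤ bx := hbnn _
    -- assemble ENNReal chain
    have hstep1 : f x ≤ ENNReal.ofReal (Real.exp (K * L)) * f (m • z) := by
      have := hlip x (m • z - x)
      rwa [show x + (m • z - x) = m • z by ring] at this
    have hstep2 : f (m • z) ≤ ENNReal.ofReal (Real.exp (-(m:ℝ) * (bz - δ/4))) :=
      hNz z m hmNz hm1
    calc ENNReal.ofReal (Real.exp (dotZ h x)) * f x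
        ≤ ENNReal.ofReal (Real.exp (θ * bx)) *
            (ENNReal.ofReal (Real.exp (K * L)) * ENNReal.ofReal (Real.exp (-(m:ℝ) * (bz - δ/4)))) := by
          refine mul_le_mul ?_ (hstep1.trans (mul_le_mul_right hstep2 _)) zero_le zero_le
          exact ENNReal.ofReal_le_ofReal (Real.exp_le_exp.mpr (hpolar x))
      _ = ENNReal.ofReal (Real.exp (θ * bx + (K * L + -(m:ℝ) * (bz - δ/4)))) := by
          rw [← ENNReal.ofReal_mul (Real.exp_nonneg _), ← Real.exp_add,
            ← ENNReal.ofReal_mul (Real.exp_nonneg _), ← Real.exp_add]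
      _ ≤ ENNReal.ofReal (Real.exp ((K + C) * d * R)) *
            ENNReal.ofReal (Real.exp (-(δ/2) * (n:ℝ))) := by
          rw [← ENNReal.ofReal_mul (Real.exp_nonneg _), ← Real.exp_add]
          apply ENNReal.ofReal_le_ofReal
          apply Real.exp_le_exp.mpr
          -- the real inequality
          have t1 : bx - C * L ≤ (m:ℝ) * bz := by linarith
          have t2 : (m:ℝ) * (δ/4) ≤ (δ/4) * n := by nlinarith
          have t3 : (K + C) * L ≤ (K + C) * d * R + (δ/4) * n := by
            have h4a : (K + C) * (L * R) ≤ (K + C) * ((d:ℝ) * R * R + d * n) :=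
              mul_le_mul_of_nonneg_left hLR (by linarith)
            have h4b : (K + C) * d * n ≤ (δ/4) * R * n := by
              nlinarith [hRb]
            nlinarith [hRpos]
          have t4 : δ * n ≤ bx - θ * bx := by
            have h5 : (1 - θ) * (bx - c₀ * n) ≥ 0 := by nlinarith
            have h6 : δ * n = (1 - θ) * (c₀ * n) := by rw [hδdef]; ring
            nlinarith
          nlinarith [t1, t2, t3, t4]
  -- the small-x bound
  have hsmall : ∀ x : Fin d → ℤ, l1 x < n₁ →
      ENNReal.ofReal (Real.exp (dotZ h x)) * f x ≤
        ENNReal.ofReal (Real.exp ((H + δ/2) * n₁)) * C₀ *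
          ENNReal.ofReal (Real.exp (-(δ/2) * (l1 x : ℝ))) := by
    intro x hx
    have hdz : dotZ h x ≤ H * (l1 x : ℝ) := by
      rw [dotZ, hH]
      calc ∑ j, h j * (x j : ℝ) ≤ ∑ j, |h j| * (l1 x : ℝ) := by
            refine Finset.sum_le_sum fun j _ => ?_
            have h1 : h j * (x j : ℝ) ≤ |h j * (x j : ℝ)| := le_abs_self _
            have h2 : |h j * (x j : ℝ)| = |h j| * |(x j : ℝ)| := abs_mul _ _
            have h3 : |(x j : ℝ)| ≤ (l1 x : ℝ) := by
              calc |(x j : ℝ)| = (((x j).natAbs : ℕ) : ℝ) := by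
                    rw [Nat.cast_natAbs, Int.cast_abs]
                _ ≤ (l1 x : ℝ) := by exact_mod_cast natAbs_le_l1 x j
            calc h j * (x j : ℝ) ≤ |h j| * |(x j : ℝ)| := by rw [← h2]; exact h1
              _ ≤ |h j| * (l1 x : ℝ) := mul_le_mul_of_nonneg_left h3 (abs_nonneg _)
        _ = (∑ j, |h j|) * (l1 x : ℝ) := by rw [← Finset.sum_mul]
    have hexp : Real.exp (dotZ h x) ≤
        Real.exp ((H + δ/2) * n₁) * Real.exp (-(δ/2) * (l1 x : ℝ)) := by
      rw [← Real.exp_add]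
      apply Real.exp_le_exp.mpr
      have hln : (l1 x : ℝ) ≤ (n₁ : ℝ) := by exact_mod_cast hx.le
      have hl1nn : (0:ℝ) ≤ (l1 x : ℝ) := Nat.cast_nonneg _
      nlinarith [hHnn, hδ]
    calc ENNReal.ofReal (Real.exp (dotZ h x)) * f x
        ≤ ENNReal.ofReal (Real.exp ((H + δ/2) * n₁) * Real.exp (-(δ/2) * (l1 x : ℝ))) * C₀ :=
          mul_le_mul (ENNReal.ofReal_le_ofReal hexp) (hf x) zero_le zero_le
      _ = ENNReal.ofReal (Real.exp ((H + δ/2) * n₁)) * C₀ *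
            ENNReal.ofReal (Real.exp (-(δ/2) * (l1 x : ℝ))) := by
          rw [ENNReal.ofReal_mul (Real.exp_nonneg _)]
          ring
  -- combine
  set C₁ : ℝ≥0∞ := ENNReal.ofReal (Real.exp ((K + C) * d * R)) +
      ENNReal.ofReal (Real.exp ((H + δ/2) * n₁)) * C₀ with hC₁
  have hC₁fin : C₁ ≠ ⊤ := by
    rw [hC₁]
    exact (ENNReal.add_lt_top.mpr ⟨ENNReal.ofReal_lt_top,
      ENNReal.mul_lt_top ENNReal.ofReal_lt_top (lt_top_iff_ne_top.mpr hC₀)⟩).ne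
  have hbound : ∀ x : Fin d → ℤ,
      ENNReal.ofReal (Real.exp (dotZ h x)) * f x ≤
        C₁ * ENNReal.ofReal (Real.exp (-(δ/2) * (l1 x : ℝ))) := by
    intro x
    rcases lt_or_ge (l1 x) n₁ with hx | hx
    · refine (hsmall x hx).trans ?_
      rw [hC₁]
      exact mul_le_mul_left (le_add_self) _
    · refine (hbig x hx).trans ?_
      rw [hC₁]
      exact mul_le_mul_left (le_add_right le_rfl) _
  calc ∑' x : Fin d → ℤ, ENNReal.ofReal (Real.exp (dotZ h x)) * f x
      ≤ ∑' x : Fin d → ℤ, C₁ * ENNReal.ofReal (Real.exp (-(δ/2) * (l1 x : ℝ))) :=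
        ENNReal.tsum_le_tsum hbound
    _ = C₁ * ∑' x : Fin d → ℤ, ENNReal.ofReal (Real.exp (-(δ/2) * (l1 x : ℝ))) :=
        ENNReal.tsum_mul_left
    _ < ⊤ := ENNReal.mul_lt_top (lt_top_iff_ne_top.mpr hC₁fin) (tsum_exp_l1 (by linarith))

/-! ### polar norm facts -/

lemma enorm'_pos {u : Fin d → ℝ} (hu : u ≠ 0) : 0 < enorm' u := by
  have hsum : 0 ≤ ∑ j, u j ^ 2 := Finset.sum_nonneg fun j _ => sq_nonneg _
  rcases hsum.eq_or_lt' with h0 | h0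
  · exfalso
    apply hu
    funext j
    have := (Finset.sum_eq_zero_iff_of_nonneg (fun j _ => sq_nonneg (u j))).mp h0 j
      (Finset.mem_univ j)
    exact pow_eq_zero_iff (by norm_num) |>.mp this
  · exact Real.sqrt_pos.mpr h0

lemma dotR_le_enorm' (h u : Fin d → ℝ) : dotR h u ≤ enorm' h * enorm' u := by
  have h1 : dotR h u ≤ ∑ j, |h j| * |u j| := by
    refine Finset.sum_le_sum fun j _ => ?_
    calc h j * u j ≤ |h j * u j| := le_abs_self _
      _ = |h j| * |u j| := abs_mul _ _
  have h2 := Finset.sum_mul_sq_le_sq_mul_sq Finset.univ (fun j => |h j|) (fun j => |u j|)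
  have h3 : (∑ j, |h j| * |u j|) ^ 2 ≤ (∑ j, h j ^ 2) * (∑ j, u j ^ 2) := by
    calc (∑ j, |h j| * |u j|) ^ 2 ≤ (∑ j, |h j| ^ 2) * (∑ j, |u j| ^ 2) := h2
      _ = (∑ j, h j ^ 2) * (∑ j, u j ^ 2) := by
          rw [Finset.sum_congr rfl fun j _ => sq_abs (h j),
            Finset.sum_congr rfl fun j _ => sq_abs (u j)]
  have h4 : ∑ j, |h j| * |u j| ≤ Real.sqrt ((∑ j, h j ^ 2) * (∑ j, u j ^ 2)) := by
    rw [Real.le_sqrt (Finset.sum_nonneg fun j _ => mul_nonneg (abs_nonneg _) (abs_nonneg _))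
      (by positivity)]
    exact h3
  calc dotR h u ≤ ∑ j, |h j| * |u j| := h1
    _ ≤ Real.sqrt ((∑ j, h j ^ 2) * (∑ j, u j ^ 2)) := h4
    _ = enorm' h * enorm' u := Real.sqrt_mul (Finset.sum_nonneg fun j _ => sq_nonneg _) _

lemma bpos_of_ne {b : (Fin d → ℝ) → ℝ} (hb : IsEquivNorm b) {u : Fin d → ℝ} (hu : u ≠ 0) :
    0 < b u := by
  obtain ⟨-, -, C, hCpos, hCbd⟩ := hb
  have h1 : 0 < C⁻¹ * enorm' u := mul_pos (inv_pos.mpr hCpos) (enorm'_pos hu)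
  exact lt_of_lt_of_le h1 (hCbd u).1

lemma polar_bound {b : (Fin d → ℝ) → ℝ} (hb : IsEquivNorm b) (h : Fin d → ℝ)
    (x : Fin d → ℤ) : dotZ h x ≤ (max (polar b h) 0) * b (toR x) := by
  obtain ⟨hbadd, hbhom, C, hCpos, hCbd⟩ := hb
  by_cases hx : x = (0 : Fin d → ℤ)
  · subst hx
    have h0 : dotZ h (0 : Fin d → ℤ) = 0 := by simp [dotZ]
    have hb0 : b (toR (0 : Fin d → ℤ)) = 0 := by
      have htr : toR (0 : Fin d → ℤ) = ((0:ℝ) • (0 : Fin d → ℝ)) := by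
        funext j
        simp [toR]
      rw [htr, hbhom]
      simp
    rw [h0, hb0, mul_zero]
  · have hu : toR x ≠ 0 := by
      intro hcon
      apply hx
      funext j
      have := congrFun hcon j
      simpa [toR, Int.cast_eq_zero] using this
    have hbpos : 0 < b (toR x) := bpos_of_ne ⟨hbadd, hbhom, C, hCpos, hCbd⟩ hu
    have hBdd : BddAbove (Set.range fun u : {u : Fin d → ℝ // u ≠ 0} => dotR h u.1 / b u.1) := by
      refine ⟨C * enorm' h, ?_⟩
      rintro _ ⟨u, rfl⟩
      have hbu : 0 < b u.1 := bpos_of_ne ⟨hbadd, hbhom, C, hCpos, hCbd⟩ u.2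
      rw [div_le_iff₀ hbu]
      calc dotR h u.1 ≤ enorm' h * enorm' u.1 := dotR_le_enorm' _ _
        _ ≤ enorm' h * (C * b u.1) := by
            refine mul_le_mul_of_nonneg_left ?_ (enorm'_nonneg h)
            calc enorm' u.1 = C * (C⁻¹ * enorm' u.1) := by field_simp
              _ ≤ C * b u.1 := mul_le_mul_of_nonneg_left (hCbd u.1).1 hCpos.le
        _ = C * enorm' h * b u.1 := by ring
    have hle : dotR h (toR x) / b (toR x) ≤ polar b h :=
      le_ciSup hBdd (⟨toR x, hu⟩ : {u : Fin d → ℝ // u ≠ 0})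
    have h2 : dotR h (toR x) ≤ polar b h * b (toR x) := by
      rw [← div_le_iff₀ hbpos]
      exact hle
    calc dotZ h x = dotR h (toR x) := rfl
      _ ≤ polar b h * b (toR x) := h2
      _ ≤ max (polar b h) 0 * b (toR x) :=
          mul_le_mul_of_nonneg_right (le_max_left _ _) hbpos.le

lemma C0_ne_top {lam : ℝ} (hlam : 0 < lam) :
    (1 - ENNReal.ofReal (Real.exp (-lam)))⁻¹ ≠ ⊤ := by
  have hr : ENNReal.ofReal (Real.exp (-lam)) < 1 :=
    ENNReal.ofReal_lt_one.mpr (Real.exp_lt_one_iff.mpr (by linarith))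
  have hne : (1 : ℝ≥0∞) - ENNReal.ofReal (Real.exp (-lam)) ≠ 0 := fun hcon =>
    absurd (tsub_eq_zero_iff_le.mp hcon) (not_le.mpr hr)
  exact ENNReal.inv_ne_top.mpr hne

end SubAux

section Transfer

lemma Apart_le_C0 {d : ℕ} (Pr : Measure Ω) [IsProbabilityMeasure Pr]
    (env : Environment d Pr) {β lam : ℝ} (hβ : 0 ≤ β) (x : Fin d → ℤ) :
    Apart Pr env β lam x ≤ (1 - ENNReal.ofReal (Real.exp (-lam)))⁻¹ := by
  unfold Apart
  calc ∫⁻ ω, Qpart β lam (fun z => env.V z ω) x ∂Pr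
      ≤ ∫⁻ _ω, (1 - ENNReal.ofReal (Real.exp (-lam)))⁻¹ ∂Pr :=
        lintegral_mono fun ω => SubAux.Qpart_le_C0 hβ (fun z => env.nonneg z ω) x
    _ = _ := by rw [lintegral_const, measure_univ, mul_one]

lemma Apart_lip {d : ℕ} (Pr : Measure Ω) [IsProbabilityMeasure Pr]
    (env : Environment d Pr) {β lam M : ℝ} (hβ : 0 ≤ β)
    (hvM : ∀ z ω, env.V z ω ≤ M) (x w : Fin d → ℤ) :
    Apart Pr env β lam x ≤
      ENNReal.ofReal (Real.exp ((lam + β * M + Real.log (2*(d:ℝ))) * (SubAux.l1 w : ℝ))) *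
        Apart Pr env β lam (x + w) := by
  unfold Apart
  calc ∫⁻ ω, Qpart β lam (fun z => env.V z ω) x ∂Pr
      ≤ ∫⁻ ω, ENNReal.ofReal
            (Real.exp ((lam + β * M + Real.log (2*(d:ℝ))) * (SubAux.l1 w : ℝ))) *
          Qpart β lam (fun z => env.V z ω) (x + w) ∂Pr :=
        lintegral_mono fun ω =>
          SubAux.Qpart_lip hβ (fun z => hvM z ω) (SubAux.l1 w) x w rfl
    _ = _ := lintegral_const_mul' _ _ ENNReal.ofReal_ne_top

end Transfer

/-- For `λ > 0`, `β ≥ 0`: if `𝔞*_λ(h) < 1` then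
`Σ_x e^{h·x} A_λ(x) < ∞`; analogously, if `𝔮*_λ(h) < 1` then `ℙ`-a.s.
`Σ_x e^{h·x} Q_λ(x) < ∞`. -/
theorem subcritical_summability
    {d : ℕ} {Ω : Type*} [MeasurableSpace Ω] (Pr : Measure Ω) [IsProbabilityMeasure Pr]
    (env : Environment d Pr) (β lam : ℝ) (hβ : 0 ≤ β) (hlam : 0 < lam)
    (a q : (Fin d → ℝ) → ℝ)
    (haL : IsAnnealedLyapunov Pr env β lam a) (haN : IsEquivNorm a)
    (hqL : IsQuenchedLyapunov Pr env β lam q) (hqN : IsEquivNorm q)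
    (h : Fin d → ℝ) :
    (polar a h < 1 →
      (∑' x : Fin d → ℤ, ENNReal.ofReal (Real.exp (dotZ h x)) * Apart Pr env β lam x) < ⊤) ∧
    (polar q h < 1 →
      ∀ᵐ ω ∂Pr,
        (∑' x : Fin d → ℤ,
          ENNReal.ofReal (Real.exp (dotZ h x)) * Qpart β lam (fun z => env.V z ω) x) < ⊤) := by
  obtain ⟨M₀, hM₀⟩ := env.bounded
  set M : ℝ := max M₀ 0 with hMdef
  have hvM : ∀ z ω, env.V z ω ≤ M := fun z ω => (hM₀ z ω).trans (le_max_left _ _)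
  have hMnn : (0:ℝ) ≤ M := le_max_right _ _
  constructor
  · intro hpa
    rcases Nat.eq_zero_or_pos d with hd0 | hd
    · subst hd0
      rw [tsum_eq_single (0 : Fin 0 → ℤ) (fun b hb => absurd (Subsingleton.elim b 0) hb)]
      exact ENNReal.mul_lt_top ENNReal.ofReal_lt_top
        (lt_of_le_of_lt (Apart_le_C0 Pr env hβ 0)
          (lt_top_iff_ne_top.mpr (SubAux.C0_ne_top hlam)))
    · have hK : 0 ≤ lam + β * M + Real.log (2*(d:ℝ)) := by
        have h1 : (1:ℝ) ≤ 2*(d:ℝ) := by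
          have : (1:ℝ) ≤ (d:ℝ) := by exact_mod_cast hd
          linarith
        have h2 := Real.log_nonneg h1
        have h3 : 0 ≤ β * M := mul_nonneg hβ hMnn
        linarith
      exact SubAux.master hd (fun x => Apart Pr env β lam x) a h (max (polar a h) 0)
        (le_max_right _ _) (max_lt hpa one_pos)
        _ (SubAux.C0_ne_top hlam) (fun x => Apart_le_C0 Pr env hβ x)
        (lam + β * M + Real.log (2*(d:ℝ))) hK
        (fun x w => Apart_lip Pr env hβ hvM x w) haN haL
        (fun x => SubAux.polar_bound haN h x)
  · intro hpq
    filter_upwards [hqL] with ω hω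
    rcases Nat.eq_zero_or_pos d with hd0 | hd
    · subst hd0
      rw [tsum_eq_single (0 : Fin 0 → ℤ) (fun b hb => absurd (Subsingleton.elim b 0) hb)]
      exact ENNReal.mul_lt_top ENNReal.ofReal_lt_top
        (lt_of_le_of_lt (SubAux.Qpart_le_C0 hβ (fun z => env.nonneg z ω) 0)
          (lt_top_iff_ne_top.mpr (SubAux.C0_ne_top hlam)))
    · have hK : 0 ≤ lam + β * M + Real.log (2*(d:ℝ)) := by
        have h1 : (1:ℝ) ≤ 2*(d:ℝ) := by
          have : (1:ℝ) ≤ (d:ℝ) := by exact_mod_cast hd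
          linarith
        have h2 := Real.log_nonneg h1
        have h3 : 0 ≤ β * M := mul_nonneg hβ hMnn
        linarith
      exact SubAux.master hd (fun x => Qpart β lam (fun z => env.V z ω) x) q h
        (max (polar q h) 0)
        (le_max_right _ _) (max_lt hpq one_pos)
        _ (SubAux.C0_ne_top hlam)
        (fun x => SubAux.Qpart_le_C0 hβ (fun z => env.nonneg z ω) x)
        (lam + β * M + Real.log (2*(d:ℝ))) hK
        (fun x w => SubAux.Qpart_lip hβ (fun z => hvM z ω) (SubAux.l1 w) x w rfl)
        hqN hω (fun x => SubAux.polar_bound hqN h x)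


end
end

section
/- Characterization of the zero set of the quenched rate function (Lemma 2): Let β ≥ 0, μ > 0 and h ∈ ℝ^d with 𝔮*_μ(h) = 1. Then for v ∈ ℝ^d one has J_q^h(v) = 0 if and only if both 𝔮_μ(v) = h·v and (d⁻/dλ)|_{λ=μ} 𝔮_λ(v) ≥ 1 ≥ (d⁺/dλ)|_{λ=μ} 𝔮_λ(v), where d⁻/dλ and d⁺/dλ denote the left and right derivatives of the concave function λ ↦ 𝔮_λ(v). In particular, the set M_h = {v : J_q^h(v) = 0} is a singleton if and only if the unit ball of 𝔮*_μ has a unique supporting hyperplane direction at h and λ ↦ 𝔮_λ(v) is differentiable at μ. -/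
open MeasureTheory ProbabilityTheory Real Filter Topology
open scoped ENNReal NNReal BigOperators Classical

noncomputable section

variable {Ω : Type*} [MeasurableSpace Ω]

section Helpers

/-- Secant slopes of a concave function are antitone. -/
lemma concave_secant_anti {f : ℝ → ℝ} (hf : ConcaveOn ℝ (Set.Ici 0) f)
    {a x y : ℝ} (ha : 0 ≤ a) (hx : 0 ≤ x) (hy : 0 ≤ y)
    (hxa : x ≠ a) (hya : y ≠ a) (hxy : x ≤ y) :
    (f y - f a) / (y - a) ≤ (f x - f a) / (x - a) := by
  have key := hf.neg.secant_mono ha hx hy hxa hya hxy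
  simp only [Pi.neg_apply] at key
  have e1 : (-f x - -f a) / (x - a) = -((f x - f a) / (x - a)) := by ring
  have e2 : (-f y - -f a) / (y - a) = -((f y - f a) / (y - a)) := by ring
  rw [e1, e2] at key
  linarith

/-- One-sided derivatives of a concave function at an interior point `μ > 0`. -/
lemma concave_onesided {f : ℝ → ℝ} (hf : ConcaveOn ℝ (Set.Ici 0) f) {μ : ℝ} (hμ : 0 < μ) :
    ∃ Dm Dp : ℝ,
      HasDerivWithinAt f Dm (Set.Iio μ) μ ∧ HasDerivWithinAt f Dp (Set.Ioi μ) μ ∧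
      (∀ x, μ < x → (f x - f μ) / (x - μ) ≤ Dp) ∧
      (∀ B, (∀ x, μ < x → (f x - f μ) / (x - μ) ≤ B) → Dp ≤ B) ∧
      (∀ x, 0 ≤ x → x < μ → Dm ≤ (f x - f μ) / (x - μ)) ∧
      (∀ B, (∀ x, 0 < x → x < μ → B ≤ (f x - f μ) / (x - μ)) → B ≤ Dm) ∧
      Dp ≤ Dm := by
  set g : ℝ → ℝ := slope f μ with hg
  have hgdef : ∀ x, g x = (f x - f μ) / (x - μ) := fun x => slope_def_field f μ x
  have hanti : ∀ x z : ℝ, 0 ≤ x → 0 ≤ z → x ≠ μ → z ≠ μ → x ≤ z → g z ≤ g x := by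
    intro x z hx hz hxm hzm hxz
    rw [hgdef, hgdef]
    exact concave_secant_anti hf hμ.le hx hz hxm hzm hxz
  -- right side
  have hne_right : ((g '' Set.Ioi μ)).Nonempty := ⟨g (μ + 1), ⟨μ + 1, by simp [hμ], rfl⟩⟩
  have hbddA : BddAbove (g '' Set.Ioi μ) := by
    refine ⟨g (μ / 2), ?_⟩
    rintro _ ⟨z, hz, rfl⟩
    exact hanti (μ/2) z (by linarith) (by linarith [lt_trans hμ hz] ) (by intro h; linarith)
      (by intro h; exact absurd h (ne_of_gt hz)) (by linarith [(Set.mem_Ioi.1 hz).le])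
  set Dp := sSup (g '' Set.Ioi μ) with hDp
  have hAntiIoi : AntitoneOn g (Set.Ioi μ) := by
    intro x hx z hz hxz
    exact hanti x z (le_of_lt (lt_trans hμ hx)) (le_of_lt (lt_trans hμ hz))
      (ne_of_gt hx) (ne_of_gt hz) hxz
  have htp : Tendsto g (𝓝[>] μ) (𝓝 Dp) := hAntiIoi.tendsto_nhdsGT hbddA
  have hDpDeriv : HasDerivWithinAt f Dp (Set.Ioi μ) μ := by
    rw [hasDerivWithinAt_iff_tendsto_slope]
    have : Set.Ioi μ \ {μ} = Set.Ioi μ := Set.diff_singleton_eq_self (by simp)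
    rw [this]; exact htp
  -- left side
  have hne00 : (Set.Ioo (0:ℝ) μ).Nonempty := ⟨μ/2, by constructor <;> linarith⟩
  have hne_left : ((g '' Set.Ioo 0 μ)).Nonempty := hne00.image g
  have hbddB : BddBelow (g '' Set.Ioo 0 μ) := by
    refine ⟨g (μ + 1), ?_⟩
    rintro _ ⟨z, hz, rfl⟩
    exact hanti z (μ+1) hz.1.le (by linarith) (ne_of_lt hz.2) (by intro h; linarith) (by linarith [hz.2.le])
  set Dm := sInf (g '' Set.Ioo 0 μ) with hDm
  have hAntiIoo : AntitoneOn g (Set.Ioo 0 μ) := by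
    intro x hx z hz hxz
    exact hanti x z hx.1.le hz.1.le (ne_of_lt hx.2) (ne_of_lt hz.2) hxz
  have htm : Tendsto g (𝓝[<] μ) (𝓝 Dm) := by
    have := hAntiIoo.tendsto_nhdsWithin_Ioo_left hne00 hbddB
    exact this
  have hDmDeriv : HasDerivWithinAt f Dm (Set.Iio μ) μ := by
    rw [hasDerivWithinAt_iff_tendsto_slope]
    have : Set.Iio μ \ {μ} = Set.Iio μ := Set.diff_singleton_eq_self (by simp)
    rw [this]; exact htm
  refine ⟨Dm, Dp, hDmDeriv, hDpDeriv, ?_, ?_, ?_, ?_, ?_⟩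
  · intro x hx
    rw [← hgdef]
    exact le_csSup hbddA ⟨x, hx, rfl⟩
  · intro B hB
    refine csSup_le hne_right ?_
    rintro _ ⟨z, hz, rfl⟩
    rw [hgdef]; exact hB z hz
  · intro x hx hxm
    rw [← hgdef]
    rcases eq_or_lt_of_le hx with h0 | h0
    · -- x = 0 : Dm ≤ g (μ/2) ≤ g 0
      have h1 : Dm ≤ g (μ/2) := csInf_le hbddB ⟨μ/2, ⟨by linarith, by linarith⟩, rfl⟩
      have h2 : g (μ/2) ≤ g x := hanti x (μ/2) hx (by linarith) (ne_of_lt hxm) (by intro h; linarith) (by linarith)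
      linarith
    · exact csInf_le hbddB ⟨x, ⟨h0, hxm⟩, rfl⟩
  · intro B hB
    refine le_csInf hne_left ?_
    rintro _ ⟨z, hz, rfl⟩
    rw [hgdef]; exact hB z hz.1 hz.2
  · refine csSup_le hne_right ?_
    rintro _ ⟨z, hz, rfl⟩
    refine le_csInf hne_left ?_
    rintro _ ⟨w, hw, rfl⟩
    exact hanti w z hw.1.le (le_of_lt (lt_trans hμ hz)) (ne_of_lt hw.2) (ne_of_gt hz)
      (by linarith [hw.2.le, (Set.mem_Ioi.1 hz).le])

end Helpers

section PolymerHelpers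

lemma polymer_l1 {d : ℕ} (γ : Polymer d) : ∀ i, i ≤ γ.len → (∑ j, |γ.path i j|) ≤ (i : ℤ) := by
  intro i
  induction i with
  | zero => intro _; simp [γ.start]
  | succ n ih =>
    intro hi
    have h1 := ih (Nat.le_of_succ_le hi)
    have h2 := γ.step n (Nat.lt_of_succ_le hi)
    have h3 : ∀ j : Fin d, |γ.path (n+1) j| ≤ |γ.path n j| + |γ.path (n+1) j - γ.path n j| := by
      intro j
      have := abs_sub_abs_le_abs_sub (γ.path (n+1) j) (γ.path n j)
      linarith
    calc (∑ j, |γ.path (n+1) j|)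
        ≤ ∑ j, (|γ.path n j| + |γ.path (n+1) j - γ.path n j|) :=
          Finset.sum_le_sum (fun j _ => h3 j)
      _ = (∑ j, |γ.path n j|) + ∑ j, |γ.path (n+1) j - γ.path n j| := Finset.sum_add_distrib
      _ ≤ (n : ℤ) + 1 := by rw [h2]; linarith
      _ = ((n+1 : ℕ) : ℤ) := by push_cast; ring

lemma qweight_le {d : ℕ} {β mu lam c : ℝ} (hml : mu ≤ lam) {v : (Fin d → ℤ) → ℝ}
    {γ : Polymer d} (hc : c ≤ (γ.len : ℝ)) :
    qweight β lam 0 v γ ≤ ENNReal.ofReal (Real.exp (-(lam - mu) * c)) * qweight β mu 0 v γ := by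
  unfold qweight
  rw [← ENNReal.ofReal_mul (le_of_lt (Real.exp_pos _))]
  apply ENNReal.ofReal_le_ofReal
  rw [← mul_assoc, ← Real.exp_add]
  apply mul_le_mul_of_nonneg_right _ (pow_nonneg (by positivity) _)
  apply Real.exp_le_exp.2
  nlinarith [mul_le_mul_of_nonneg_left hc (sub_nonneg.2 hml)]

lemma Qpart_le {d : ℕ} {β mu lam : ℝ} (hml : mu ≤ lam) (v : (Fin d → ℤ) → ℝ) (x : Fin d → ℤ) :
    Qpart β lam v x ≤
      ENNReal.ofReal (Real.exp (-(lam - mu) * (∑ j, |(x j : ℝ)|))) * Qpart β mu v x := by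
  unfold Qpart
  rw [← ENNReal.tsum_mul_left]
  refine ENNReal.tsum_le_tsum fun γ => ?_
  refine qweight_le hml ?_
  have h0 := polymer_l1 γ.1 γ.1.len le_rfl
  have h1 : (∑ j, |(x j : ℝ)|) = ((∑ j, |γ.1.X j| : ℤ) : ℝ) := by
    rw [γ.2]; push_cast; rfl
  rw [h1]
  exact_mod_cast h0

end PolymerHelpers

/-- Characterization of the zero set of the quenched rate function
(Lemma 2): for `μ > 0` and `h` with `𝔮*_μ(h) = 1`, one has `J_q^h(v) = 0` iff
`𝔮_μ(v) = h·v` and the one-sided derivatives of the concave map `λ ↦ 𝔮_λ(v)` at `μ`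
satisfy `d⁻ ≥ 1 ≥ d⁺`.  In particular `M_h = {v : J_q^h(v) = 0}` is a singleton iff the
unit ball of `𝔮*_μ` has a unique supporting hyperplane direction at `h` and `λ ↦ 𝔮_λ(v)`
is differentiable at `μ` on `M_h`. -/
theorem quenched_rate_function_zero_set
    {d : ℕ} {Ω : Type*} [MeasurableSpace Ω] (Pr : Measure Ω) [IsProbabilityMeasure Pr]
    (env : Environment d Pr) (β : ℝ) (hβ : 0 ≤ β) (μ : ℝ) (hμ : 0 < μ) (h : Fin d → ℝ)
    (q : ℝ → (Fin d → ℝ) → ℝ)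
    (hqL : ∀ lam : ℝ, 0 ≤ lam → IsQuenchedLyapunov Pr env β lam (q lam))
    (hqN : ∀ lam : ℝ, 0 < lam → IsEquivNorm (q lam))
    (hconc : ∀ v, ConcaveOn ℝ (Set.Ici (0 : ℝ)) (fun lam => q lam v))
    (hmono : ∀ v, MonotoneOn (fun lam => q lam v) (Set.Ici (0 : ℝ)))
    (hpolar : polar (q μ) h = 1)
    (hΛq : ∀ᵐ ω ∂Pr,
      Tendsto (fun n : ℕ =>
          (1 / (n : ℝ)) * Real.log (QpartLen β h (fun z => env.V z ω) n).toReal)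
        atTop (𝓝 μ))
    (J : (Fin d → ℝ) → EReal)
    (hJ : J = fun v =>
      (⨆ lam : {l : ℝ // 0 ≤ l}, ((q lam.1 v - lam.1 : ℝ) : EReal)) +
        ((μ - dotR h v : ℝ) : EReal)) :
    (∀ v : Fin d → ℝ,
      (J v = 0 ↔
        q μ v = dotR h v ∧
        ∃ Dm Dp : ℝ,
          HasDerivWithinAt (fun lam => q lam v) Dm (Set.Iio μ) μ ∧
          HasDerivWithinAt (fun lam => q lam v) Dp (Set.Ioi μ) μ ∧
          Dp ≤ 1 ∧ 1 ≤ Dm)) ∧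
    ((∃! v : Fin d → ℝ, J v = 0) ↔
      ((∃! u : Fin d → ℝ, q μ u = 1 ∧ dotR h u = 1) ∧
        ∀ v : Fin d → ℝ, J v = 0 → DifferentiableAt ℝ (fun lam => q lam v) μ)) := by
  -- basic norm facts
  have hhom : ∀ lam : ℝ, 0 < lam → ∀ (c : ℝ) (u : Fin d → ℝ), q lam (c • u) = |c| * q lam u :=
    fun lam hl => (hqN lam hl).2.1
  have hq0 : ∀ lam : ℝ, 0 < lam → q lam (0 : Fin d → ℝ) = 0 := by
    intro lam hl
    have h0 := hhom lam hl 0 0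
    simpa using h0
  have henorm_pos : ∀ u : Fin d → ℝ, u ≠ 0 → 0 < enorm' u := by
    intro u hu
    obtain ⟨j, hj⟩ : ∃ j, u j ≠ 0 := by
      by_contra hcon; push_neg at hcon; exact hu (funext hcon)
    have h1 : 0 < (u j) ^ 2 := lt_of_le_of_ne (sq_nonneg _) (Ne.symm (pow_ne_zero 2 hj))
    have h2 : (u j) ^ 2 ≤ ∑ i, (u i) ^ 2 :=
      Finset.single_le_sum (fun i _ => sq_nonneg (u i)) (Finset.mem_univ j)
    exact Real.sqrt_pos.2 (lt_of_lt_of_le h1 h2)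
  have hqpos : ∀ lam : ℝ, 0 < lam → ∀ u : Fin d → ℝ, u ≠ 0 → 0 < q lam u := by
    intro lam hl u hu
    obtain ⟨C, hC, hCb⟩ := (hqN lam hl).2.2
    have := (hCb u).1
    have h2 : 0 < C⁻¹ * enorm' u := mul_pos (inv_pos.2 hC) (henorm_pos u hu)
    linarith
  have habsle : ∀ (u : Fin d → ℝ) (j : Fin d), |u j| ≤ enorm' u := by
    intro u j
    have h1 : (u j) ^ 2 ≤ ∑ i, (u i) ^ 2 :=
      Finset.single_le_sum (fun i _ => sq_nonneg (u i)) (Finset.mem_univ j)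
    calc |u j| = Real.sqrt ((u j) ^ 2) := (Real.sqrt_sq_eq_abs _).symm
      _ ≤ enorm' u := Real.sqrt_le_sqrt h1
  have hdom : ∀ u : Fin d → ℝ, dotR h u ≤ q μ u := by
    obtain ⟨C, hC, hCb⟩ := (hqN μ hμ).2.2
    have hK : (0:ℝ) ≤ ∑ j, |h j| := Finset.sum_nonneg fun j _ => abs_nonneg _
    have hdotle : ∀ u : Fin d → ℝ, dotR h u ≤ (∑ j, |h j|) * enorm' u := by
      intro u
      calc dotR h u ≤ ∑ j, |h j * u j| := Finset.sum_le_sum fun j _ => le_abs_self _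
        _ = ∑ j, |h j| * |u j| := by simp [abs_mul]
        _ ≤ ∑ j, |h j| * enorm' u :=
            Finset.sum_le_sum fun j _ => mul_le_mul_of_nonneg_left (habsle u j) (abs_nonneg _)
        _ = (∑ j, |h j|) * enorm' u := by rw [Finset.sum_mul]
    have hbdd : BddAbove (Set.range fun (u : {u : Fin d → ℝ // u ≠ 0}) => dotR h u.1 / q μ u.1) := by
      refine ⟨(∑ j, |h j|) * C, ?_⟩
      rintro _ ⟨u, rfl⟩
      have hq : 0 < q μ u.1 := hqpos μ hμ u.1 u.2
      rw [div_le_iff₀ hq]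
      have h1 : enorm' u.1 ≤ C * q μ u.1 := by
        have := (hCb u.1).1
        have h2 : C * (C⁻¹ * enorm' u.1) ≤ C * q μ u.1 := mul_le_mul_of_nonneg_left this hC.le
        rwa [← mul_assoc, mul_inv_cancel₀ (ne_of_gt hC), one_mul] at h2
      calc dotR h u.1 ≤ (∑ j, |h j|) * enorm' u.1 := hdotle u.1
        _ ≤ (∑ j, |h j|) * (C * q μ u.1) := mul_le_mul_of_nonneg_left h1 hK
        _ = (∑ j, |h j|) * C * q μ u.1 := by ring
    intro u
    by_cases hu : u = 0
    · subst hu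
      rw [hq0 μ hμ]
      simp [dotR]
    · have h1 : dotR h u / q μ u ≤ 1 := by
        rw [← hpolar]
        exact le_ciSup hbdd ⟨u, hu⟩
      have h2 : 0 < q μ u := hqpos μ hμ u hu
      rw [div_le_one h2] at h1
      exact h1
  -- EReal characterization of J v = 0
  have hchar : ∀ v : Fin d → ℝ,
      J v = 0 ↔ (q μ v = dotR h v ∧ ∀ lam : ℝ, 0 ≤ lam → q lam v - lam ≤ q μ v - μ) := by
    intro v
    rw [hJ]
    simp only
    constructor
    · intro h0
      set S := ⨆ lam : {l : ℝ // 0 ≤ l}, ((q lam.1 v - lam.1 : ℝ) : EReal) with hS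
      have hmem : ((q μ v - μ : ℝ) : EReal) ≤ S :=
        le_iSup (fun lam : {l : ℝ // 0 ≤ l} => ((q lam.1 v - lam.1 : ℝ) : EReal)) ⟨μ, hμ.le⟩
      have hStop : S ≠ ⊤ := by
        intro htop
        rw [htop, EReal.top_add_coe] at h0
        exact absurd h0 (by simp)
      have hSbot : S ≠ ⊥ := by
        intro hbot
        rw [hbot, le_bot_iff] at hmem
        exact EReal.coe_ne_bot _ hmem
      lift S to ℝ using ⟨hStop, hSbot⟩ with s hs
      rw [← EReal.coe_add] at h0
      have h0' : s + (μ - dotR h v) = 0 := by exact_mod_cast h0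
      have hub : ∀ lam : ℝ, 0 ≤ lam → q lam v - lam ≤ s := by
        intro lam hlam
        have h1 : ((q lam v - lam : ℝ) : EReal) ≤ (s : EReal) := by
          rw [hs]
          exact le_iSup (fun lam : {l : ℝ // 0 ≤ l} => ((q lam.1 v - lam.1 : ℝ) : EReal)) ⟨lam, hlam⟩
        exact_mod_cast h1
      have hmem' : q μ v - μ ≤ s := hub μ hμ.le
      have hvle := hdom v
      have hqv : q μ v = dotR h v := le_antisymm (by linarith) hvle
      refine ⟨hqv, fun lam hlam => ?_⟩
      have := hub lam hlam
      linarith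
    · rintro ⟨hqv, hdm⟩
      have hSeq : (⨆ lam : {l : ℝ // 0 ≤ l}, ((q lam.1 v - lam.1 : ℝ) : EReal))
          = ((q μ v - μ : ℝ) : EReal) := by
        apply le_antisymm
        · refine iSup_le ?_
          rintro ⟨lam, hlam⟩
          exact EReal.coe_le_coe_iff.2 (hdm lam hlam)
        · exact le_iSup (fun lam : {l : ℝ // 0 ≤ l} => ((q lam.1 v - lam.1 : ℝ) : EReal)) ⟨μ, hμ.le⟩
      rw [hSeq, ← EReal.coe_add]
      have : (q μ v - μ) + (μ - dotR h v) = 0 := by rw [hqv]; ring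
      rw [this]
      exact EReal.coe_zero
  -- Part 1
  have hpart1 : ∀ v : Fin d → ℝ,
      J v = 0 ↔
        q μ v = dotR h v ∧
        ∃ Dm Dp : ℝ,
          HasDerivWithinAt (fun lam => q lam v) Dm (Set.Iio μ) μ ∧
          HasDerivWithinAt (fun lam => q lam v) Dp (Set.Ioi μ) μ ∧
          Dp ≤ 1 ∧ 1 ≤ Dm := by
    intro v
    rw [hchar v]
    obtain ⟨Dm, Dp, hDm, hDp, hslopeP, hPle, hMle, hleM, hPM⟩ := concave_onesided (hconc v) hμ
    constructor
    · rintro ⟨hqv, hdm⟩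
      refine ⟨hqv, Dm, Dp, hDm, hDp, ?_, ?_⟩
      · refine hPle 1 ?_
        intro x hx
        have h1 := hdm x (by linarith)
        rw [div_le_one (by linarith : (0:ℝ) < x - μ)]
        linarith
      · refine hleM 1 ?_
        intro x hx0 hxm
        have h1 := hdm x hx0.le
        have h2 : q x v - q μ v ≤ x - μ := by linarith
        have h3 : (q x v - q μ v) / (x - μ) = (q μ v - q x v) / (μ - x) := by
          rw [div_eq_div_iff (by linarith) (by linarith)]
          ring
        rw [h3, le_div_iff₀ (by linarith : (0:ℝ) < μ - x)]
        linarith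
    · rintro ⟨hqv, Dm', Dp', hDm', hDp', hP1, h1M⟩
      have eM : Dm' = Dm := by
        rw [← hDm'.derivWithin (uniqueDiffWithinAt_Iio μ),
          ← hDm.derivWithin (uniqueDiffWithinAt_Iio μ)]
      have eP : Dp' = Dp := by
        rw [← hDp'.derivWithin (uniqueDiffWithinAt_Ioi μ),
          ← hDp.derivWithin (uniqueDiffWithinAt_Ioi μ)]
      rw [eM] at h1M; rw [eP] at hP1
      refine ⟨hqv, fun lam hlam => ?_⟩
      rcases lt_trichotomy lam μ with hl | hl | hl
      · have h1 : (1:ℝ) ≤ (q lam v - q μ v) / (lam - μ) := le_trans (by linarith) (hMle lam hlam hl)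
        have h3 : (q lam v - q μ v) / (lam - μ) = (q μ v - q lam v) / (μ - lam) := by
          rw [div_eq_div_iff (by linarith) (by linarith)]
          ring
        rw [h3, le_div_iff₀ (by linarith : (0:ℝ) < μ - lam)] at h1
        linarith
      · subst hl; linarith
      · have h1 : (q lam v - q μ v) / (lam - μ) ≤ 1 := le_trans (hslopeP lam hl) hP1
        rw [div_le_one (by linarith : (0:ℝ) < lam - μ)] at h1
        linarith
  -- quantitative gap on lattice points
  have hμ1 : (0:ℝ) < μ + 1 := by linarith
  have hgap_lattice : ∀ x : Fin d → ℤ, x ≠ 0 →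
      q μ (toR x) + (∑ j, |(x j : ℝ)|) ≤ q (μ + 1) (toR x) := by
    intro x hx
    have hne : (MeasureTheory.ae Pr).NeBot := MeasureTheory.ae_neBot.2 (IsProbabilityMeasure.ne_zero Pr)
    obtain ⟨ω, hω1, hω2⟩ := ((hqL μ hμ.le).and (hqL (μ+1) hμ1.le)).exists
    set v : (Fin d → ℤ) → ℝ := fun z => env.V z ω with hv
    have hA := hω1 x
    have hB := hω2 x
    have hxR : toR x ≠ 0 := by
      intro h0
      apply hx; funext j
      have h1 := congrFun h0 j
      simp only [toR, Pi.zero_apply] at h1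
      exact_mod_cast h1
    have hLμ : 0 < q μ (toR x) := hqpos μ hμ _ hxR
    have hLlam : 0 < q (μ+1) (toR x) := hqpos (μ+1) hμ1 _ hxR
    have hev : ∀ (lam : ℝ) (L : ℝ), 0 < L →
        Tendsto (fun N : ℕ => -(1 / (N:ℝ)) * Real.log (Qpart β lam v (N • x)).toReal)
          atTop (𝓝 L) →
        ∀ᶠ N : ℕ in atTop, (Qpart β lam v (N • x)) ≠ 0 ∧ (Qpart β lam v (N • x)) ≠ ⊤ := by
      intro lam L hL hT
      by_contra hcon
      rw [Filter.not_eventually] at hcon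
      have hfreq : ∃ᶠ N : ℕ in atTop,
          (fun N : ℕ => -(1 / (N:ℝ)) * Real.log (Qpart β lam v (N • x)).toReal) N
            ∈ ({0} : Set ℝ) := by
        refine hcon.mono ?_
        intro N hN
        have hz : (Qpart β lam v (N • x)).toReal = 0 := by
          rcases not_and_or.mp hN with h1 | h1
          · rw [not_ne_iff] at h1; rw [h1]; simp
          · rw [not_ne_iff] at h1; rw [h1]; simp
        show -(1 / (N:ℝ)) * Real.log (Qpart β lam v (N • x)).toReal ∈ ({0} : Set ℝ)
        rw [Set.mem_singleton_iff, hz, Real.log_zero, mul_zero]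
      have hcl := mem_closure_of_frequently_of_tendsto hfreq hT
      rw [closure_singleton, Set.mem_singleton_iff] at hcl
      exact absurd hcl (ne_of_gt hL)
    have hev1 := hev μ (q μ (toR x)) hLμ hA
    have hev2 := hev (μ+1) (q (μ+1) (toR x)) hLlam hB
    set c : ℝ := ∑ j, |(x j : ℝ)| with hc
    have hineq : ∀ᶠ N : ℕ in atTop,
        (fun N : ℕ => -(1/(N:ℝ)) * Real.log (Qpart β μ v (N • x)).toReal) N + c
          ≤ (fun N : ℕ => -(1/(N:ℝ)) * Real.log (Qpart β (μ+1) v (N • x)).toReal) N := by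
      filter_upwards [hev1, hev2, eventually_ge_atTop 1] with N h1 h2 hN1
      have hNpos : (0:ℝ) < N := by exact_mod_cast hN1
      have hcN : (∑ j, |(((N • x) : Fin d → ℤ) j : ℝ)|) = (N:ℝ) * c := by
        rw [hc, Finset.mul_sum]
        refine Finset.sum_congr rfl fun j _ => ?_
        have hNj : ((N • x) : Fin d → ℤ) j = (N : ℤ) * x j := by
          show (N • x j : ℤ) = (N : ℤ) * x j
          rw [nsmul_eq_mul]
        rw [hNj]
        push_cast
        rw [abs_mul, abs_of_nonneg (by positivity : (0:ℝ) ≤ (N:ℝ))]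
      have hkey := Qpart_le (β := β) (mu := μ) (lam := μ + 1) (by linarith) v (N • x)
      rw [show μ + 1 - μ = (1:ℝ) by ring] at hkey
      have hfin : ENNReal.ofReal (Real.exp (-(1:ℝ) * (∑ j, |(((N • x) : Fin d → ℤ) j : ℝ)|)))
          * Qpart β μ v (N • x) ≠ ⊤ := ENNReal.mul_ne_top ENNReal.ofReal_ne_top h1.2
      have ht1 := ENNReal.toReal_mono hfin hkey
      rw [ENNReal.toReal_mul, ENNReal.toReal_ofReal (Real.exp_nonneg _)] at ht1
      have hpos2 : 0 < (Qpart β (μ+1) v (N • x)).toReal := ENNReal.toReal_pos h2.1 h2.2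
      have hpos1 : 0 < (Qpart β μ v (N • x)).toReal := ENNReal.toReal_pos h1.1 h1.2
      have hlog := Real.log_le_log hpos2 ht1
      rw [Real.log_mul (ne_of_gt (Real.exp_pos _)) (ne_of_gt hpos1), Real.log_exp, hcN] at hlog
      have h5 := mul_le_mul_of_nonneg_left hlog (by positivity : (0:ℝ) ≤ 1/(N:ℝ))
      have h6 : (1/(N:ℝ)) * (-(1:ℝ) * ((N:ℝ) * c) + Real.log (Qpart β μ v (N • x)).toReal)
          = -c + (1/(N:ℝ)) * Real.log (Qpart β μ v (N • x)).toReal := by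
        field_simp
      rw [h6] at h5
      nlinarith [h5]
    have := le_of_tendsto_of_tendsto (hA.add_const c) hB hineq
    exact this
  -- gap inequality for arbitrary real vectors
  have hgap : ∀ u : Fin d → ℝ, q μ u + (∑ j, |u j|) ≤ q (μ + 1) u := by
    intro u
    by_cases hu : u = 0
    · subst hu
      rw [hq0 μ hμ, hq0 (μ+1) hμ1]
      simp
    · obtain ⟨j₀, hj₀⟩ : ∃ j, u j ≠ 0 := by
        by_contra hcon; push_neg at hcon; exact hu (funext hcon)
      set xN : ℕ → (Fin d → ℤ) := fun N => fun j => ⌊(N:ℝ) * u j⌋ with hxN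
      set uN : ℕ → (Fin d → ℝ) := fun N => ((N:ℝ))⁻¹ • toR (xN N) with huN
      have hco : ∀ N : ℕ, 1 ≤ N → ∀ j, |uN N j - u j| ≤ 1/(N:ℝ) := by
        intro N hN j
        have hNpos : (0:ℝ) < N := by exact_mod_cast hN
        have h1 : ((⌊(N:ℝ) * u j⌋ : ℤ) : ℝ) ≤ (N:ℝ) * u j := Int.floor_le _
        have h2 : (N:ℝ) * u j - 1 < ((⌊(N:ℝ) * u j⌋ : ℤ) : ℝ) := Int.sub_one_lt_floor _
        have h3 : |((⌊(N:ℝ) * u j⌋ : ℤ) : ℝ) - (N:ℝ) * u j| ≤ 1 :=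
          abs_le.2 ⟨by linarith, by linarith⟩
        have h4 : uN N j - u j = (((⌊(N:ℝ) * u j⌋ : ℤ) : ℝ) - (N:ℝ) * u j) / N := by
          show ((N:ℝ))⁻¹ * ((⌊(N:ℝ) * u j⌋ : ℤ) : ℝ) - u j = _
          field_simp
        rw [h4, abs_div, abs_of_pos hNpos]
        gcongr
      have hqlim : ∀ lam : ℝ, 0 < lam →
          Tendsto (fun N : ℕ => q lam (uN N)) atTop (𝓝 (q lam u)) := by
        intro lam hl
        obtain ⟨C, hC, hCb⟩ := (hqN lam hl).2.2
        have hsub := (hqN lam hl).1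
        have hdiffq : ∀ a b : Fin d → ℝ, q lam a - q lam b ≤ q lam (a - b) := by
          intro a b
          have h5 := hsub (a - b) b
          rw [sub_add_cancel] at h5
          linarith
      -- symmetric bound
        have hbound : ∀ᶠ N : ℕ in atTop,
            |q lam (uN N) - q lam u| ≤ C * Real.sqrt d * (1/(N:ℝ)) := by
          filter_upwards [eventually_ge_atTop 1] with N hN
          have hNpos : (0:ℝ) < N := by exact_mod_cast hN
          have henb : enorm' (uN N - u) ≤ Real.sqrt d * (1/(N:ℝ)) := by
            have hsq : (∑ j, ((uN N - u) j)^2) ≤ (d:ℝ) * (1/(N:ℝ))^2 := by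
              calc (∑ j, ((uN N - u) j)^2) ≤ ∑ _j : Fin d, (1/(N:ℝ))^2 := by
                    refine Finset.sum_le_sum fun j _ => ?_
                    have h6 : |(uN N - u) j| ≤ 1/(N:ℝ) := by
                      rw [Pi.sub_apply]; exact hco N hN j
                    have h7 := sq_abs ((uN N - u) j)
                    nlinarith [abs_nonneg ((uN N - u) j)]
                _ = (d:ℝ) * (1/(N:ℝ))^2 := by
                    rw [Finset.sum_const, Finset.card_univ, Fintype.card_fin, nsmul_eq_mul]
            calc enorm' (uN N - u) ≤ Real.sqrt ((d:ℝ) * (1/(N:ℝ))^2) := Real.sqrt_le_sqrt hsq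
              _ = Real.sqrt d * (1/(N:ℝ)) := by
                  rw [Real.sqrt_mul (by positivity), Real.sqrt_sq (by positivity)]
          have hq1 : q lam (uN N - u) ≤ C * Real.sqrt d * (1/(N:ℝ)) := by
            have h8 := (hCb (uN N - u)).2
            have h9 := mul_le_mul_of_nonneg_left henb hC.le
            calc q lam (uN N - u) ≤ C * enorm' (uN N - u) := h8
              _ ≤ C * (Real.sqrt d * (1/(N:ℝ))) := h9
              _ = C * Real.sqrt d * (1/(N:ℝ)) := (mul_assoc _ _ _).symm
          have hq2 : q lam (u - uN N) ≤ C * Real.sqrt d * (1/(N:ℝ)) := by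
            have he : u - uN N = (-(1:ℝ)) • (uN N - u) := by
              funext j; simp only [Pi.sub_apply, Pi.smul_apply, smul_eq_mul]; ring
            rw [he, hhom lam hl]
            simpa using hq1
          have d1 := hdiffq (uN N) u
          have d2 := hdiffq u (uN N)
          exact abs_le.2 ⟨by linarith, by linarith⟩
        have h0 : Tendsto (fun N : ℕ => q lam (uN N) - q lam u) atTop (𝓝 0) := by
          refine squeeze_zero_norm' (hbound.mono fun N hN => by simpa using hN) ?_
          have := (tendsto_one_div_atTop_nhds_zero_nat).const_mul (C * Real.sqrt d)
          simpa using this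
        have := h0.add_const (q lam u)
        simpa using this
      have hl1lim : Tendsto (fun N : ℕ => ∑ j, |uN N j|) atTop (𝓝 (∑ j, |u j|)) := by
        have hbound : ∀ᶠ N : ℕ in atTop,
            abs ((∑ j, |uN N j|) - ∑ j, |u j|) ≤ (d:ℝ) * (1/(N:ℝ)) := by
          filter_upwards [eventually_ge_atTop 1] with N hN
          have h1 : (∑ j, |uN N j|) - ∑ j, |u j| = ∑ j, (|uN N j| - |u j|) :=
            (Finset.sum_sub_distrib _ _).symm
          rw [h1]
          calc abs (∑ j, (|uN N j| - |u j|)) ≤ ∑ j, abs (|uN N j| - |u j|) :=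
                Finset.abs_sum_le_sum_abs _ _
            _ ≤ ∑ _j : Fin d, 1/(N:ℝ) := by
                refine Finset.sum_le_sum fun j _ => ?_
                exact le_trans (abs_abs_sub_abs_le_abs_sub _ _) (hco N hN j)
            _ = (d:ℝ) * (1/(N:ℝ)) := by
                rw [Finset.sum_const, Finset.card_univ, Fintype.card_fin, nsmul_eq_mul]
        have h0 : Tendsto (fun N : ℕ => (∑ j, |uN N j|) - ∑ j, |u j|) atTop (𝓝 0) := by
          refine squeeze_zero_norm' (hbound.mono fun N hN => by simpa using hN) ?_
          have := (tendsto_one_div_atTop_nhds_zero_nat).const_mul (d:ℝ)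
          simpa using this
        have := h0.add_const (∑ j, |u j|)
        simpa using this
      have hxne : ∀ᶠ N : ℕ in atTop, xN N ≠ 0 := by
        obtain ⟨N₀, hN₀⟩ := exists_nat_gt (1/|u j₀|)
        filter_upwards [eventually_ge_atTop N₀] with N hN
        intro h0
        have h1 : (⌊(N:ℝ) * u j₀⌋ : ℤ) = 0 := congrFun h0 j₀
        rw [Int.floor_eq_zero_iff] at h1
        have habs : (0:ℝ) < |u j₀| := abs_pos.2 hj₀
        have hN' : 1/|u j₀| < (N:ℝ) := lt_of_lt_of_le hN₀ (by exact_mod_cast hN)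
        have h2 : 1 < (N:ℝ) * |u j₀| := by
          rw [div_lt_iff₀ habs] at hN'
          linarith
        rcases h1 with ⟨h1a, h1b⟩
        rcases abs_cases (u j₀) with ⟨he, _⟩ | ⟨he, _⟩
        · rw [he] at h2
          linarith [h1b]
        · have h3 : (N:ℝ) * |u j₀| = -((N:ℝ) * u j₀) := by rw [he]; ring
          rw [h3] at h2
          have hNpos : (0:ℝ) ≤ N := by positivity
          linarith [h1a]
      have hev : ∀ᶠ N : ℕ in atTop,
          q μ (uN N) + (∑ j, |uN N j|) ≤ q (μ+1) (uN N) := by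
        filter_upwards [hxne, eventually_ge_atTop 1] with N hxne0 hN
        have hNpos : (0:ℝ) < N := by exact_mod_cast hN
        have hkey := hgap_lattice (xN N) hxne0
        have e1 : q μ (uN N) = (N:ℝ)⁻¹ * q μ (toR (xN N)) := by
          rw [huN]
          rw [hhom μ hμ, abs_of_pos (inv_pos.2 hNpos)]
        have e2 : q (μ+1) (uN N) = (N:ℝ)⁻¹ * q (μ+1) (toR (xN N)) := by
          rw [huN]
          rw [hhom (μ+1) hμ1, abs_of_pos (inv_pos.2 hNpos)]
        have e3 : (∑ j, |uN N j|) = (N:ℝ)⁻¹ * (∑ j, |((xN N j : ℤ) : ℝ)|) := by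
          rw [Finset.mul_sum]
          refine Finset.sum_congr rfl fun j _ => ?_
          show |((N:ℝ))⁻¹ * ((xN N j : ℤ) : ℝ)| = _
          rw [abs_mul, abs_of_pos (inv_pos.2 hNpos)]
        rw [e1, e2, e3, ← mul_add]
        exact mul_le_mul_of_nonneg_left hkey (by positivity)
      exact le_of_tendsto_of_tendsto ((hqlim μ hμ).add hl1lim) (hqlim (μ+1) hμ1) hev
  -- scaling lemmas
  have hqsmul : ∀ (t : ℝ), 0 < t → ∀ lam : ℝ, 0 < lam → ∀ u : Fin d → ℝ,
      q lam (t • u) = t * q lam u := by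
    intro t ht lam hl u
    rw [hhom lam hl, abs_of_pos ht]
  have hdotsmul : ∀ (t : ℝ) (u : Fin d → ℝ), dotR h (t • u) = t * dotR h u := by
    intro t u
    show (∑ j, h j * (t • u) j) = t * ∑ j, h j * u j
    rw [Finset.mul_sum]
    refine Finset.sum_congr rfl fun j _ => ?_
    simp only [Pi.smul_apply, smul_eq_mul]
    ring
  have hscale : ∀ (t : ℝ), 0 < t → ∀ (u : Fin d → ℝ) (D : ℝ) (s : Set ℝ),
      HasDerivWithinAt (fun lam => q lam u) D s μ →
      HasDerivWithinAt (fun lam => q lam (t • u)) (t * D) s μ := by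
    intro t ht u D s hD
    have h1 : HasDerivWithinAt (fun lam => t * q lam u) (t * D) s μ := hD.const_mul t
    refine h1.congr_of_eventuallyEq ?_ ?_
    · filter_upwards [mem_nhdsWithin_of_mem_nhds (Ioi_mem_nhds hμ)] with lam hlam
      exact hqsmul t ht lam hlam u
    · exact hqsmul t ht μ hμ u
  have huniqIio : ∀ (f : ℝ → ℝ) (a b : ℝ), HasDerivWithinAt f a (Set.Iio μ) μ →
      HasDerivWithinAt f b (Set.Iio μ) μ → a = b := by
    intro f a b ha hb
    rw [← ha.derivWithin (uniqueDiffWithinAt_Iio μ), ← hb.derivWithin (uniqueDiffWithinAt_Iio μ)]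
  have huniqIoi : ∀ (f : ℝ → ℝ) (a b : ℝ), HasDerivWithinAt f a (Set.Ioi μ) μ →
      HasDerivWithinAt f b (Set.Ioi μ) μ → a = b := by
    intro f a b ha hb
    rw [← ha.derivWithin (uniqueDiffWithinAt_Ioi μ), ← hb.derivWithin (uniqueDiffWithinAt_Ioi μ)]
  have hMne0 : ∀ v : Fin d → ℝ, J v = 0 → v ≠ 0 := by
    intro v hv h0
    subst h0
    obtain ⟨-, Dm', Dp', hDm', -, -, h1M⟩ := (hpart1 0).1 hv
    have hconst : HasDerivWithinAt (fun _ : ℝ => (0:ℝ)) Dm' (Set.Iio μ) μ := by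
      refine hDm'.congr_of_eventuallyEq ?_ ?_
      · filter_upwards [mem_nhdsWithin_of_mem_nhds (Ioi_mem_nhds hμ)] with lam hlam
        exact (hq0 lam hlam).symm
      · exact (hq0 μ hμ).symm
    have h1 : Dm' = 0 :=
      huniqIio _ _ _ hconst (hasDerivWithinAt_const μ (Set.Iio μ) (0:ℝ))
    linarith
  have hface : ∀ v : Fin d → ℝ, J v = 0 →
      q μ ((q μ v)⁻¹ • v) = 1 ∧ dotR h ((q μ v)⁻¹ • v) = 1 := by
    intro v hv
    have hv0 : v ≠ 0 := hMne0 v hv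
    have hp : 0 < q μ v := hqpos μ hμ v hv0
    obtain ⟨hqv, -⟩ := (hpart1 v).1 hv
    constructor
    · rw [hqsmul _ (inv_pos.2 hp) μ hμ, inv_mul_cancel₀ (ne_of_gt hp)]
    · rw [hdotsmul, ← hqv, inv_mul_cancel₀ (ne_of_gt hp)]
  have hcan : ∀ u : Fin d → ℝ, u ≠ 0 → ∃ Dm Dp : ℝ,
      HasDerivWithinAt (fun lam => q lam u) Dm (Set.Iio μ) μ ∧
      HasDerivWithinAt (fun lam => q lam u) Dp (Set.Ioi μ) μ ∧
      0 < Dp ∧ Dp ≤ Dm := by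
    intro u hu
    obtain ⟨Dm, Dp, hDm, hDp, hsP, -, -, -, hPM⟩ := concave_onesided (hconc u) hμ
    refine ⟨Dm, Dp, hDm, hDp, ?_, hPM⟩
    have hl1 : 0 < ∑ j, |u j| := by
      obtain ⟨j, hj⟩ : ∃ j, u j ≠ 0 := by
        by_contra hcon; push_neg at hcon; exact hu (funext hcon)
      have h1 := Finset.single_le_sum (f := fun j => |u j|)
        (fun i _ => abs_nonneg _) (Finset.mem_univ j)
      have h2 := abs_pos.2 hj
      linarith
    have hsl := hsP (μ+1) (by linarith)
    have he : (q (μ+1) u - q μ u) / (μ + 1 - μ) = q (μ+1) u - q μ u := by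
      rw [show μ+1-μ = (1:ℝ) by ring, div_one]
    rw [he] at hsl
    have := hgap u
    linarith
  have hmem : ∀ u : Fin d → ℝ, q μ u = 1 → dotR h u = 1 →
      ∃ t : ℝ, 0 < t ∧ J (t • u) = 0 := by
    intro u hq1 hd1
    have hu0 : u ≠ 0 := by
      intro h0; rw [h0, hq0 μ hμ] at hq1; norm_num at hq1
    obtain ⟨Dm, Dp, hDm, hDp, hDppos, hPM⟩ := hcan u hu0
    have hDmpos : 0 < Dm := lt_of_lt_of_le hDppos hPM
    refine ⟨Dm⁻¹, inv_pos.2 hDmpos, ?_⟩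
    refine (hpart1 _).2 ⟨?_, Dm⁻¹ * Dm, Dm⁻¹ * Dp,
      hscale _ (inv_pos.2 hDmpos) u Dm _ hDm, hscale _ (inv_pos.2 hDmpos) u Dp _ hDp, ?_, ?_⟩
    · rw [hqsmul _ (inv_pos.2 hDmpos) μ hμ, hdotsmul, hq1, hd1]
    · calc Dm⁻¹ * Dp ≤ Dm⁻¹ * Dm :=
          mul_le_mul_of_nonneg_left hPM (inv_pos.2 hDmpos).le
        _ = 1 := inv_mul_cancel₀ (ne_of_gt hDmpos)
    · rw [inv_mul_cancel₀ (ne_of_gt hDmpos)]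
  have hglue : ∀ (f : ℝ → ℝ) (D : ℝ), HasDerivWithinAt f D (Set.Iio μ) μ →
      HasDerivWithinAt f D (Set.Ioi μ) μ → HasDerivAt f D μ := by
    intro f D h1 h2
    rw [hasDerivAt_iff_tendsto_slope]
    rw [hasDerivWithinAt_iff_tendsto_slope] at h1 h2
    rw [show Set.Iio μ \ {μ} = Set.Iio μ from Set.diff_singleton_eq_self (by simp)] at h1
    rw [show Set.Ioi μ \ {μ} = Set.Ioi μ from Set.diff_singleton_eq_self (by simp)] at h2
    rw [← nhdsLT_sup_nhdsGT μ, Filter.tendsto_sup]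
    exact ⟨h1, h2⟩
  have hD1 : ∀ v : Fin d → ℝ, J v = 0 → DifferentiableAt ℝ (fun lam => q lam v) μ →
      HasDerivAt (fun lam => q lam v) 1 μ := by
    intro v hv hdv
    obtain ⟨-, Dm', Dp', hDm', hDp', hP1, h1M⟩ := (hpart1 v).1 hv
    have hd := hdv.hasDerivAt
    have e1 : Dm' = deriv (fun lam => q lam v) μ :=
      huniqIio _ _ _ hDm' hd.hasDerivWithinAt
    have e2 : Dp' = deriv (fun lam => q lam v) μ :=
      huniqIoi _ _ _ hDp' hd.hasDerivWithinAt
    have hone : deriv (fun lam => q lam v) μ = 1 :=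
      le_antisymm (e2 ▸ hP1) (e1 ▸ h1M)
    rw [← hone]
    exact hd
  refine ⟨hpart1, ?_⟩
  constructor
  · rintro ⟨v₀, hv₀, huniq⟩
    constructor
    · have hv00 : v₀ ≠ 0 := hMne0 v₀ hv₀
      have hp0 : 0 < q μ v₀ := hqpos μ hμ v₀ hv00
      obtain ⟨hf1, hf2⟩ := hface v₀ hv₀
      refine ⟨(q μ v₀)⁻¹ • v₀, ⟨hf1, hf2⟩, ?_⟩
      rintro u ⟨hq1, hd1⟩
      obtain ⟨t, ht0, htu⟩ := hmem u hq1 hd1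
      have he1 : t • u = v₀ := huniq _ htu
      have : (q μ v₀)⁻¹ • v₀ = u := by
        rw [← he1, hqsmul t ht0 μ hμ, hq1, mul_one, smul_smul,
          inv_mul_cancel₀ (ne_of_gt ht0), one_smul]
      exact this.symm
    · intro v hv
      obtain ⟨Dm, Dp, hDm, hDp, hDppos, hPM⟩ := hcan v (hMne0 v hv)
      obtain ⟨hqv, Dm', Dp', hDm', hDp', hP1, h1M⟩ := (hpart1 v).1 hv
      have eM : Dm' = Dm := huniqIio _ _ _ hDm' hDm
      have eP : Dp' = Dp := huniqIoi _ _ _ hDp' hDp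
      rw [eM] at h1M; rw [eP] at hP1
      rcases eq_or_lt_of_le hPM with heq | hlt
      · have hDp2 : HasDerivWithinAt (fun lam => q lam v) Dm (Set.Ioi μ) μ := by
          rw [← heq]; exact hDp
        exact (hglue _ Dm hDm hDp2).differentiableAt
      · exfalso
        have hex : ∃ t : ℝ, 0 < t ∧ t ≠ 1 ∧ t * Dp ≤ 1 ∧ 1 ≤ t * Dm := by
          rcases lt_or_eq_of_le h1M with h1M' | h1M'
          · have hDmpos : (0:ℝ) < Dm := by linarith
            have hid : Dm⁻¹ * Dm = 1 := inv_mul_cancel₀ (ne_of_gt hDmpos)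
            have hinvpos : 0 < Dm⁻¹ := inv_pos.2 hDmpos
            have hinv : Dm⁻¹ < 1 := inv_lt_one_of_one_lt₀ h1M'
            set t₀ : ℝ := (Dm⁻¹ + 1)/2 with ht₀
            have ht₀pos : 0 < t₀ := by rw [ht₀]; linarith
            have ht₀lt : t₀ < 1 := by rw [ht₀]; linarith
            have hb1 : t₀ * Dp ≤ 1 := by
              have h9 := mul_le_mul_of_nonneg_left hP1 ht₀pos.le
              rw [mul_one] at h9
              linarith
            have hb2 : 1 ≤ t₀ * Dm := by
              have h9 : 0 < (t₀ - Dm⁻¹) * Dm := mul_pos (by rw [ht₀]; linarith) hDmpos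
              have h10 : (t₀ - Dm⁻¹) * Dm = t₀ * Dm - 1 := by
                rw [sub_mul, inv_mul_cancel₀ (ne_of_gt hDmpos)]
              linarith
            exact ⟨t₀, ht₀pos, ne_of_lt ht₀lt, hb1, hb2⟩
          · have hDp1 : Dp < 1 := by rw [h1M']; exact hlt
            by_cases hDp0 : Dp ≤ 0
            · refine ⟨2, by norm_num, by norm_num, by linarith, ?_⟩
              rw [← h1M']; norm_num
            · push_neg at hDp0
              have hidp : Dp * Dp⁻¹ = 1 := mul_inv_cancel₀ (ne_of_gt hDp0)
              have hinvpos : 0 < Dp⁻¹ := inv_pos.2 hDp0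
              have hinv : 1 < Dp⁻¹ := one_lt_inv₀ hDp0 |>.mpr hDp1
              set t₀ : ℝ := (1 + Dp⁻¹)/2 with ht₀
              have ht₀gt : 1 < t₀ := by rw [ht₀]; linarith
              have ht₀pos : 0 < t₀ := by linarith
              have hb1 : t₀ * Dp ≤ 1 := by
                have h9 : 0 < (Dp⁻¹ - t₀) * Dp := mul_pos (by rw [ht₀]; linarith) hDp0
                have h10 : (Dp⁻¹ - t₀) * Dp = 1 - t₀ * Dp := by
                  rw [sub_mul, inv_mul_cancel₀ (ne_of_gt hDp0)]
                linarith
              have hb2 : 1 ≤ t₀ * Dm := by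
                have h9 : t₀ * Dm = t₀ := by rw [← h1M', mul_one]
                rw [h9]; linarith
              exact ⟨t₀, ht₀pos, ne_of_gt ht₀gt, hb1, hb2⟩
        obtain ⟨t, ht0, ht1, htp, htm⟩ := hex
        have hJt : J (t • v) = 0 := by
          refine (hpart1 _).2 ⟨?_, t * Dm, t * Dp,
            hscale t ht0 v Dm _ hDm, hscale t ht0 v Dp _ hDp, htp, htm⟩
          rw [hqsmul t ht0 μ hμ, hdotsmul, hqv]
        have heqv : t • v = v := (huniq _ hJt).trans (huniq _ hv).symm
        obtain ⟨j, hj⟩ : ∃ j, v j ≠ 0 := by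
          by_contra hcon; push_neg at hcon; exact (hMne0 v hv) (funext hcon)
        have hcf := congrFun heqv j
        rw [Pi.smul_apply, smul_eq_mul] at hcf
        exact ht1 (mul_right_cancel₀ hj (by rw [hcf, one_mul]))
  · rintro ⟨⟨u₀, ⟨hq1, hd1⟩, hufun⟩, hdiff⟩
    obtain ⟨t, ht0, htJ⟩ := hmem u₀ hq1 hd1
    have key : ∀ a b : Fin d → ℝ, J a = 0 → J b = 0 → a = b := by
      intro a b ha hb
      have ha0 := hMne0 a ha
      have hb0 := hMne0 b hb
      have hpa := hqpos μ hμ a ha0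
      have hpb := hqpos μ hμ b hb0
      have hwa := hface a ha
      have hwb := hface b hb
      have hws : (q μ a)⁻¹ • a = (q μ b)⁻¹ • b := by
        rw [hufun _ ⟨hwa.1, hwa.2⟩, hufun _ ⟨hwb.1, hwb.2⟩]
      have hab : a = (q μ a * (q μ b)⁻¹) • b := by
        have h3 := congrArg (fun w : Fin d → ℝ => (q μ a) • w) hws
        rw [smul_smul, mul_inv_cancel₀ (ne_of_gt hpa), one_smul, smul_smul] at h3
        exact h3
      set s := q μ a * (q μ b)⁻¹ with hs
      have hspos : 0 < s := mul_pos hpa (inv_pos.2 hpb)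
      have hda := hD1 a ha (hdiff a ha)
      have hdb := hD1 b hb (hdiff b hb)
      have hscaled : HasDerivWithinAt (fun lam => q lam a) (s * 1) (Set.Iio μ) μ := by
        rw [hab]
        exact hscale s hspos b 1 _ hdb.hasDerivWithinAt
      have h1 : s * 1 = 1 := huniqIio _ _ _ hscaled hda.hasDerivWithinAt
      rw [mul_one] at h1
      rw [hab, h1, one_smul]
    exact ⟨t • u₀, htJ, fun v hv => key v (t • u₀) hv htJ⟩

end
end

section
/- Transfer of exponential decay under weak disorder (Lemma 10): Let β ≥ 0 and h ∈ ℝ^d, and assume weak disorder at (h, β): ℙ-almost surely lim_{n→∞} (1/n) log Q_n(h) exists and equals Λ_a(h) = lim_{n→∞} (1/n) log A_n(h). Let (E_n)_{n≥1} be sets of polymers of length n such that 𝔸_n^h(E_n) ≤ e^{−cn} for some constant c > 0 and all n large enough. Then there exists c' > 0 such that, ℙ-almost surely, ℚ_n^h(E_n) ≤ e^{−c'n} for all n large enough. -/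
open MeasureTheory ProbabilityTheory Real Filter Topology
open scoped ENNReal NNReal BigOperators Classical

noncomputable section

variable {Ω : Type*} [MeasurableSpace Ω]

namespace PolymerAux

variable {d : ℕ}

lemma Polymer.ext' {γ₁ γ₂ : Polymer d} (h1 : γ₁.len = γ₂.len) (h2 : γ₁.path = γ₂.path) :
    γ₁ = γ₂ := by
  cases γ₁; cases γ₂; simp_all

lemma abs_path_le (γ : Polymer d) (i : ℕ) (j : Fin d) : |γ.path i j| ≤ (i : ℤ) := by
  induction i with
  | zero => simp [γ.start]
  | succ i ih =>
    have hstep : |γ.path (i + 1) j - γ.path i j| ≤ 1 := by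
      rcases lt_or_ge i γ.len with hi | hi
      · calc |γ.path (i + 1) j - γ.path i j|
            ≤ ∑ k, |γ.path (i + 1) k - γ.path i k| :=
              Finset.single_le_sum (f := fun k => |γ.path (i + 1) k - γ.path i k|)
                (fun k _ => abs_nonneg _) (Finset.mem_univ j)
          _ = 1 := γ.step i hi
      · rw [γ.frozen i hi, γ.frozen (i + 1) (le_trans hi (Nat.le_succ i))]; simp
    have h3 : |γ.path (i + 1) j| ≤ |γ.path i j| + |γ.path (i + 1) j - γ.path i j| := by
      have := abs_add_le (γ.path i j) (γ.path (i + 1) j - γ.path i j); simpa using this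
    have := add_le_add ih hstep
    push_cast
    linarith

lemma finite_len (d n : ℕ) : Finite {γ : Polymer d // γ.len = n} := by
  have key : ∀ (γ : Polymer d), γ.len = n → ∀ (i : Fin (n+1)) (j : Fin d),
      γ.path i j ∈ Finset.Icc (-(n : ℤ)) n := by
    intro γ hγ i j
    rw [Finset.mem_Icc]
    have h := abs_path_le γ i j
    have hi : ((i : ℕ) : ℤ) ≤ (n : ℤ) := by exact_mod_cast Nat.le_of_lt_succ i.2
    constructor
    · have := neg_abs_le (γ.path i j); linarith
    · have := le_abs_self (γ.path i j); linarith
  let f : {γ : Polymer d // γ.len = n} → (Fin (n+1) → Fin d → Finset.Icc (-(n : ℤ)) n) :=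
    fun γ i j => ⟨γ.1.path i j, key γ.1 γ.2 i j⟩
  have hf : Function.Injective f := by
    intro γ₁ γ₂ hfe
    apply Subtype.ext
    apply Polymer.ext' (by rw [γ₁.2, γ₂.2])
    have key2 : ∀ m : ℕ, m ≤ n → γ₁.1.path m = γ₂.1.path m := by
      intro m hm
      funext j
      have h2 := congrFun (congrFun hfe ⟨m, Nat.lt_succ_of_le hm⟩) j
      exact Subtype.ext_iff.mp h2
    funext i
    rcases le_or_gt i n with hi | hi
    · rw [key2 i hi]
    · rw [γ₁.1.frozen i (le_of_eq_of_le γ₁.2 hi.le), γ₂.1.frozen i (le_of_eq_of_le γ₂.2 hi.le),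
        γ₁.2, γ₂.2, key2 n le_rfl]
  exact Finite.of_injective f hf

lemma finite_lenE (d n : ℕ) (E : Set (Polymer d)) :
    Finite {γ : Polymer d // γ.len = n ∧ γ ∈ E} := by
  haveI := finite_len d n
  apply Finite.of_injective
    (fun γ : {γ : Polymer d // γ.len = n ∧ γ ∈ E} => (⟨γ.1, γ.2.1⟩ : {γ : Polymer d // γ.len = n}))
  intro a b hab
  have h1 : (⟨a.1, a.2.1⟩ : {γ : Polymer d // γ.len = n}) = ⟨b.1, b.2.1⟩ := hab
  apply Subtype.ext
  exact congrArg (fun γ : {γ : Polymer d // γ.len = n} => γ.1) h1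

lemma measurable_QpartLenE {Ω : Type*} [MeasurableSpace Ω]
    (V : (Fin d → ℤ) → Ω → ℝ) (hV : ∀ x, Measurable (V x)) (β : ℝ) (h : Fin d → ℝ)
    (n : ℕ) (E : Set (Polymer d)) :
    Measurable fun ω => QpartLenE β h (fun z => V z ω) n E := by
  haveI := finite_lenE d n E
  unfold QpartLenE
  apply Measurable.ennreal_tsum
  intro γ
  unfold qweight
  apply Measurable.ennreal_ofReal
  apply Measurable.mul_const
  apply Measurable.exp
  exact measurable_const.sub ((Finset.measurable_sum _ (fun i _ => hV _)).const_mul β)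

lemma abs_dotZ_le (h : Fin d → ℝ) (γ : Polymer d) :
    |dotZ h γ.X| ≤ (∑ j, |h j|) * γ.len := by
  unfold dotZ Polymer.X
  calc |∑ j, h j * (γ.path γ.len j : ℝ)| ≤ ∑ j, |h j * (γ.path γ.len j : ℝ)| :=
        Finset.abs_sum_le_sum_abs _ _
    _ ≤ ∑ j, |h j| * γ.len := by
        apply Finset.sum_le_sum; intro j _
        rw [abs_mul]
        apply mul_le_mul_of_nonneg_left _ (abs_nonneg _)
        have h1 := abs_path_le γ γ.len j
        rw [← Int.cast_abs]
        exact_mod_cast h1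
    _ = (∑ j, |h j|) * γ.len := (Finset.sum_mul _ _ _).symm

lemma qweight_le (β : ℝ) (hβ : 0 ≤ β) (h : Fin d → ℝ) (hd : 0 < d)
    (v : (Fin d → ℤ) → ℝ) (hv : ∀ z, 0 ≤ v z) (n : ℕ) (γ : Polymer d) (hγ : γ.len = n) :
    qweight β 0 h v γ ≤ ENNReal.ofReal (Real.exp ((∑ j, |h j|) * n)) := by
  subst hγ
  unfold qweight
  apply ENNReal.ofReal_le_ofReal
  have hp1 : (1 / (2 * d : ℝ)) ^ γ.len ≤ 1 := by
    apply pow_le_one₀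
    · positivity
    · rw [div_le_one (by positivity)]
      have : (1 : ℝ) ≤ d := by exact_mod_cast hd
      linarith
  calc Real.exp (dotZ h γ.X - 0 * γ.len - β * ∑ i ∈ Finset.Icc 1 γ.len, v (γ.path i)) *
        (1 / (2 * d : ℝ)) ^ γ.len
      ≤ Real.exp (dotZ h γ.X - 0 * γ.len - β * ∑ i ∈ Finset.Icc 1 γ.len, v (γ.path i)) * 1 :=
        mul_le_mul_of_nonneg_left hp1 (Real.exp_nonneg _)
    _ ≤ Real.exp ((∑ j, |h j|) * γ.len) := by
        rw [mul_one]
        apply Real.exp_le_exp.2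
        have h1 : dotZ h γ.X ≤ (∑ j, |h j|) * γ.len :=
          le_trans (le_abs_self _) (abs_dotZ_le h γ)
        have h2 : 0 ≤ β * ∑ i ∈ Finset.Icc 1 γ.len, v (γ.path i) :=
          mul_nonneg hβ (Finset.sum_nonneg (fun i _ => hv _))
        linarith

lemma qweight_ge (β : ℝ) (hβ : 0 ≤ β) (h : Fin d → ℝ)
    (v : (Fin d → ℤ) → ℝ) (M : ℝ) (hM : 0 ≤ M) (hv : ∀ z, v z ≤ M)
    (n : ℕ) (γ : Polymer d) (hγ : γ.len = n) :
    ENNReal.ofReal (Real.exp (-((∑ j, |h j|) * n) - β * M * n) * (1 / (2 * d : ℝ)) ^ n)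
      ≤ qweight β 0 h v γ := by
  subst hγ
  unfold qweight
  apply ENNReal.ofReal_le_ofReal
  apply mul_le_mul_of_nonneg_right _ (by positivity)
  apply Real.exp_le_exp.2
  have h1 : -((∑ j, |h j|) * γ.len) ≤ dotZ h γ.X := by
    have h0 := abs_dotZ_le h γ
    have := neg_abs_le (dotZ h γ.X)
    linarith
  have h2 : β * ∑ i ∈ Finset.Icc 1 γ.len, v (γ.path i) ≤ β * M * γ.len := by
    rw [mul_assoc]
    apply mul_le_mul_of_nonneg_left _ hβ
    calc ∑ i ∈ Finset.Icc 1 γ.len, v (γ.path i) ≤ ∑ i ∈ Finset.Icc 1 γ.len, M :=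
          Finset.sum_le_sum (fun i _ => hv _)
      _ = (Finset.Icc 1 γ.len).card • M := by rw [Finset.sum_const]
      _ = M * γ.len := by rw [Nat.card_Icc]; simp [mul_comm]
  linarith

end PolymerAux
namespace PolymerAux
variable {d : ℕ}

def straight (d : ℕ) (hd : 0 < d) (n : ℕ) : Polymer d where
  len := n
  path := fun i j => if j = ⟨0, hd⟩ then ((min i n : ℕ) : ℤ) else 0
  start := by funext j; simp
  step := by
    intro i hi
    rw [Finset.sum_eq_single (⟨0, hd⟩ : Fin d)]
    · show |(if (⟨0, hd⟩ : Fin d) = ⟨0, hd⟩ then ((min (i+1) n : ℕ) : ℤ) else 0) -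
          (if (⟨0, hd⟩ : Fin d) = ⟨0, hd⟩ then ((min i n : ℕ) : ℤ) else 0)| = 1
      rw [if_pos rfl, if_pos rfl, Nat.min_eq_left (by omega : i + 1 ≤ n),
        Nat.min_eq_left (by omega : i ≤ n)]
      push_cast
      simp
    · intro b _ hb; simp [hb]
    · intro hmem; exact absurd (Finset.mem_univ _) hmem
  frozen := by
    intro i hi
    funext j
    rw [Nat.min_eq_right hi, min_self]

lemma straight_len (hd : 0 < d) (n : ℕ) : (straight d hd n).len = n := rfl

lemma QpartLen_le (β : ℝ) (hβ : 0 ≤ β) (h : Fin d → ℝ) (hd : 0 < d)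
    (v : (Fin d → ℤ) → ℝ) (hv : ∀ z, 0 ≤ v z) (n : ℕ) :
    QpartLen β h v n ≤ (Nat.card {γ : Polymer d // γ.len = n} : ℝ≥0∞) *
      ENNReal.ofReal (Real.exp ((∑ j, |h j|) * n)) := by
  haveI := finite_len d n
  haveI : Fintype {γ : Polymer d // γ.len = n} := Fintype.ofFinite _
  unfold QpartLen
  rw [tsum_fintype]
  calc ∑ γ : {γ : Polymer d // γ.len = n}, qweight β 0 h v γ.1
      ≤ ∑ _γ : {γ : Polymer d // γ.len = n},
          ENNReal.ofReal (Real.exp ((∑ j, |h j|) * n)) :=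
        Finset.sum_le_sum (fun γ _ => qweight_le β hβ h hd v hv n γ.1 γ.2)
    _ = (Fintype.card {γ : Polymer d // γ.len = n} : ℝ≥0∞) *
          ENNReal.ofReal (Real.exp ((∑ j, |h j|) * n)) := by
        rw [Finset.sum_const, nsmul_eq_mul, Finset.card_univ]
    _ = _ := by rw [Nat.card_eq_fintype_card]

lemma QpartLen_ne_top (β : ℝ) (hβ : 0 ≤ β) (h : Fin d → ℝ) (hd : 0 < d)
    (v : (Fin d → ℤ) → ℝ) (hv : ∀ z, 0 ≤ v z) (n : ℕ) :
    QpartLen β h v n ≠ ⊤ :=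
  ne_top_of_le_ne_top
    (ENNReal.mul_ne_top (ENNReal.natCast_ne_top _) ENNReal.ofReal_ne_top)
    (QpartLen_le β hβ h hd v hv n)

lemma QpartLen_ge (β : ℝ) (hβ : 0 ≤ β) (h : Fin d → ℝ) (hd : 0 < d)
    (v : (Fin d → ℤ) → ℝ) (M : ℝ) (hM : 0 ≤ M) (hv : ∀ z, v z ≤ M) (n : ℕ) :
    ENNReal.ofReal (Real.exp (-((∑ j, |h j|) * n) - β * M * n) * (1 / (2 * d : ℝ)) ^ n)
      ≤ QpartLen β h v n := by
  unfold QpartLen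
  refine le_trans ?_ (ENNReal.le_tsum (⟨straight d hd n, straight_len hd n⟩ :
    {γ : Polymer d // γ.len = n}))
  exact qweight_ge β hβ h v M hM hv n _ (straight_len hd n)

lemma QpartLen_pos (β : ℝ) (hβ : 0 ≤ β) (h : Fin d → ℝ) (hd : 0 < d)
    (v : (Fin d → ℤ) → ℝ) (M : ℝ) (hM : 0 ≤ M) (hv : ∀ z, v z ≤ M) (n : ℕ) :
    0 < QpartLen β h v n := by
  refine lt_of_lt_of_le ?_ (QpartLen_ge β hβ h hd v M hM hv n)
  apply ENNReal.ofReal_pos.2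
  have hd' : (0:ℝ) < d := by exact_mod_cast hd
  positivity

end PolymerAux
/-- Transfer of exponential decay under weak disorder (Lemma 10): if
`ℙ`-a.s. `lim (1/n) log Q_n(h) = Λ_a(h) = lim (1/n) log A_n(h)`, and `(E_n)` are events
with `𝔸_n^h(E_n) ≤ e^{−cn}` for some `c > 0` and all large `n`, then there is `c' > 0`
such that `ℙ`-a.s. `ℚ_n^h(E_n) ≤ e^{−c'n}` for all large `n`. -/
theorem weak_disorder_exponential_transfer
    {d : ℕ} {Ω : Type*} [MeasurableSpace Ω] (Pr : Measure Ω) [IsProbabilityMeasure Pr]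
    (env : Environment d Pr) (β : ℝ) (hβ : 0 ≤ β) (h : Fin d → ℝ) (Λ : ℝ)
    (hA : Tendsto (fun n : ℕ => (1 / (n : ℝ)) * Real.log (ApartLen Pr env β h n).toReal)
      atTop (𝓝 Λ))
    (hQ : ∀ᵐ ω ∂Pr,
      Tendsto (fun n : ℕ =>
          (1 / (n : ℝ)) * Real.log (QpartLen β h (fun z => env.V z ω) n).toReal)
        atTop (𝓝 Λ))
    (E : ℕ → Set (Polymer d)) (c : ℝ) (hc : 0 < c)
    (hE : ∀ᶠ n : ℕ in atTop,
      AmeasLen Pr env β h n (E n) ≤ ENNReal.ofReal (Real.exp (-c * n))) :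
    ∃ c' : ℝ, 0 < c' ∧ ∀ᵐ ω ∂Pr, ∀ᶠ n : ℕ in atTop,
      Qmeas β h (fun z => env.V z ω) n (E n) ≤ ENNReal.ofReal (Real.exp (-c' * n)) := by
  rcases Nat.eq_zero_or_pos d with hd0 | hd
  · -- degenerate dimension: no polymers of positive length
    subst hd0
    refine ⟨1, one_pos, ?_⟩
    filter_upwards with ω
    filter_upwards [eventually_ge_atTop 1] with n hn
    haveI : IsEmpty {γ : Polymer 0 // γ.len = n ∧ γ ∈ E n} := by
      constructor
      rintro ⟨γ, hγ, -⟩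
      have hstep := γ.step 0 (by rw [hγ]; omega)
      simpa using hstep
    have hQE : QpartLenE β h (fun z => env.V z ω) n (E n) = 0 := by
      unfold QpartLenE; exact tsum_empty
    unfold Qmeas
    rw [hQE, ENNReal.zero_div]
    exact zero_le
  · obtain ⟨M₀, hM₀⟩ := env.bounded
    set M := max M₀ 0 with hMdef
    have hM : 0 ≤ M := le_max_right _ _
    have hvM : ∀ z ω, env.V z ω ≤ M := fun z ω => le_trans (hM₀ z ω) (le_max_left _ _)
    -- uniform two-sided bounds on the quenched partition function
    have hQtop : ∀ (n : ℕ) (ω : Ω), QpartLen β h (fun z => env.V z ω) n ≠ ⊤ :=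
      fun n ω => PolymerAux.QpartLen_ne_top β hβ h hd _ (fun z => env.nonneg z ω) n
    have hQlb : ∀ (n : ℕ) (ω : Ω),
        ENNReal.ofReal (Real.exp (-((∑ j, |h j|) * n) - β * M * n) * (1 / (2 * d : ℝ)) ^ n)
          ≤ QpartLen β h (fun z => env.V z ω) n :=
      fun n ω => PolymerAux.QpartLen_ge β hβ h hd _ M hM (fun z => hvM z ω) n
    have hQpos : ∀ (n : ℕ) (ω : Ω), 0 < QpartLen β h (fun z => env.V z ω) n :=
      fun n ω => PolymerAux.QpartLen_pos β hβ h hd _ M hM (fun z => hvM z ω) n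
    -- bounds for the annealed partition function
    have hAtop : ∀ n : ℕ, ApartLen Pr env β h n ≠ ⊤ := by
      intro n
      have hub : ApartLen Pr env β h n ≤ (Nat.card {γ : Polymer d // γ.len = n} : ℝ≥0∞) *
          ENNReal.ofReal (Real.exp ((∑ j, |h j|) * n)) := by
        unfold ApartLen
        calc ∫⁻ ω, QpartLen β h (fun z => env.V z ω) n ∂Pr
            ≤ ∫⁻ _ω, ((Nat.card {γ : Polymer d // γ.len = n} : ℝ≥0∞) *
              ENNReal.ofReal (Real.exp ((∑ j, |h j|) * n))) ∂Pr :=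
              lintegral_mono (fun ω =>
                PolymerAux.QpartLen_le β hβ h hd _ (fun z => env.nonneg z ω) n)
          _ = _ := by rw [lintegral_const, measure_univ, mul_one]
      exact ne_top_of_le_ne_top
        (ENNReal.mul_ne_top (ENNReal.natCast_ne_top _) ENNReal.ofReal_ne_top) hub
    have hApos : ∀ n : ℕ, 0 < ApartLen Pr env β h n := by
      intro n
      have hlb : ENNReal.ofReal
          (Real.exp (-((∑ j, |h j|) * n) - β * M * n) * (1 / (2 * d : ℝ)) ^ n)
            ≤ ApartLen Pr env β h n := by
        unfold ApartLen
        have hconst : (∫⁻ _ω : Ω, ENNReal.ofReal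
            (Real.exp (-((∑ j, |h j|) * n) - β * M * n) * (1 / (2 * d : ℝ)) ^ n) ∂Pr)
            = ENNReal.ofReal
              (Real.exp (-((∑ j, |h j|) * n) - β * M * n) * (1 / (2 * d : ℝ)) ^ n) := by
          rw [lintegral_const, measure_univ, mul_one]
        rw [← hconst]
        exact lintegral_mono (fun ω => hQlb n ω)
      refine lt_of_lt_of_le ?_ hlb
      apply ENNReal.ofReal_pos.2
      have hd' : (0:ℝ) < d := by exact_mod_cast hd
      positivity
    -- the bad sets and Borel–Cantelli
    set S : ℕ → Set Ω := fun n => {ω |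
      ENNReal.ofReal (Real.exp (-(c/2) * n)) * ApartLen Pr env β h n
        ≤ QpartLenE β h (fun z => env.V z ω) n (E n)} with hSdef
    have ht0 : ∀ n : ℕ, ENNReal.ofReal (Real.exp (-(c/2) * n)) * ApartLen Pr env β h n ≠ 0 :=
      fun n => mul_ne_zero (by simp [Real.exp_pos]) (hApos n).ne'
    have httop : ∀ n : ℕ, ENNReal.ofReal (Real.exp (-(c/2) * n)) * ApartLen Pr env β h n ≠ ⊤ :=
      fun n => ENNReal.mul_ne_top ENNReal.ofReal_ne_top (hAtop n)
    obtain ⟨N₀, hN₀⟩ := eventually_atTop.1 hE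
    have hS : ∀ n, N₀ ≤ n → Pr (S n) ≤ ENNReal.ofReal (Real.exp (-(c/2))) ^ n := by
      intro n hn
      have hmeas : AEMeasurable
          (fun ω => QpartLenE β h (fun z => env.V z ω) n (E n)) Pr :=
        (PolymerAux.measurable_QpartLenE env.V env.meas β h n (E n)).aemeasurable
      have hmar := meas_ge_le_lintegral_div hmeas (ht0 n) (httop n)
      have hAE : ApartLenE Pr env β h n (E n)
          ≤ ENNReal.ofReal (Real.exp (-c * n)) * ApartLen Pr env β h n := by
        have hh := hN₀ n hn
        unfold AmeasLen at hh
        exact (ENNReal.div_le_iff_le_mul (Or.inl (hApos n).ne') (Or.inl (hAtop n))).1 hh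
      have hint : (∫⁻ ω, QpartLenE β h (fun z => env.V z ω) n (E n) ∂Pr)
          = ApartLenE Pr env β h n (E n) := rfl
      calc Pr (S n)
          ≤ (∫⁻ ω, QpartLenE β h (fun z => env.V z ω) n (E n) ∂Pr) /
            (ENNReal.ofReal (Real.exp (-(c/2) * n)) * ApartLen Pr env β h n) := hmar
        _ ≤ (ENNReal.ofReal (Real.exp (-c * n)) * ApartLen Pr env β h n) /
            (ENNReal.ofReal (Real.exp (-(c/2) * n)) * ApartLen Pr env β h n) := by
            apply ENNReal.div_le_div_right
            rw [hint]; exact hAE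
        _ ≤ ENNReal.ofReal (Real.exp (-(c/2) * n)) := by
            rw [ENNReal.div_le_iff_le_mul (Or.inl (ht0 n)) (Or.inl (httop n)),
              ← mul_assoc, ← ENNReal.ofReal_mul (Real.exp_nonneg _), ← Real.exp_add]
            apply mul_le_mul_left
            apply ENNReal.ofReal_le_ofReal
            apply Real.exp_le_exp.2
            nlinarith [sq_nonneg (c * (n:ℝ))]
        _ = ENNReal.ofReal (Real.exp (-(c/2))) ^ n := by
            rw [show (-(c/2) * n : ℝ) = (n : ℝ) * (-(c/2)) by ring, Real.exp_nat_mul,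
              ENNReal.ofReal_pow (Real.exp_nonneg _)]
    have hr1 : ENNReal.ofReal (Real.exp (-(c/2))) < 1 := by
      rw [← ENNReal.ofReal_one]
      exact ENNReal.ofReal_lt_ofReal_iff_of_nonneg (Real.exp_nonneg _) |>.2
        (by rw [← Real.exp_zero]; exact Real.exp_lt_exp.2 (by linarith))
    have hsum : (∑' m : ℕ, Pr (S (m + N₀))) ≠ ⊤ := by
      have hle : ∀ m : ℕ, Pr (S (m + N₀)) ≤ ENNReal.ofReal (Real.exp (-(c/2))) ^ m := by
        intro m
        calc Pr (S (m + N₀)) ≤ ENNReal.ofReal (Real.exp (-(c/2))) ^ (m + N₀) :=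
              hS _ (Nat.le_add_left _ _)
          _ = ENNReal.ofReal (Real.exp (-(c/2))) ^ m *
                ENNReal.ofReal (Real.exp (-(c/2))) ^ N₀ := pow_add _ m N₀
          _ ≤ ENNReal.ofReal (Real.exp (-(c/2))) ^ m * 1 :=
              mul_le_mul_right (pow_le_one' hr1.le N₀) _
          _ = _ := mul_one _
      have hts := ENNReal.tsum_le_tsum hle
      rw [ENNReal.tsum_geometric] at hts
      refine ne_top_of_le_ne_top ?_ hts
      refine ENNReal.inv_ne_top.2 ?_
      intro hz
      exact absurd (tsub_eq_zero_iff_le.1 hz) (not_le.2 hr1)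
    have hBC := MeasureTheory.ae_eventually_notMem hsum
    -- conclusion
    refine ⟨c/4, by linarith, ?_⟩
    filter_upwards [hQ, hBC] with ω hq hbc
    obtain ⟨m₀, hm₀⟩ := eventually_atTop.1 hbc
    have e1 : ∀ᶠ n : ℕ in atTop, ω ∉ S n := by
      rw [eventually_atTop]
      refine ⟨m₀ + N₀, fun n hn => ?_⟩
      have h1 : (n - N₀) + N₀ = n := by omega
      have h2 := hm₀ (n - N₀) (by omega)
      rwa [h1] at h2
    have e2 : ∀ᶠ n : ℕ in atTop,
        Λ - c/8 < (1/(n:ℝ)) * Real.log (QpartLen β h (fun z => env.V z ω) n).toReal :=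
      hq.eventually (eventually_gt_nhds (by linarith))
    have e3 : ∀ᶠ n : ℕ in atTop,
        (1/(n:ℝ)) * Real.log (ApartLen Pr env β h n).toReal < Λ + c/8 :=
      hA.eventually (eventually_lt_nhds (by linarith))
    filter_upwards [e1, e2, e3, eventually_ge_atTop 1] with n h1 h2 h3 h4
    set q := (QpartLen β h (fun z => env.V z ω) n).toReal with hqdef
    set a := (ApartLen Pr env β h n).toReal with hadef
    have hnpos : (0:ℝ) < n := by exact_mod_cast h4
    have hqpos : 0 < q := ENNReal.toReal_pos (hQpos n ω).ne' (hQtop n ω)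
    have hapos : 0 < a := ENNReal.toReal_pos (hApos n).ne' (hAtop n)
    have hlogq : (Λ - c/8) * n < Real.log q := by
      have hmul := mul_lt_mul_of_pos_right h2 hnpos
      have heq : (1/(n:ℝ)) * Real.log q * n = Real.log q := by field_simp
      rwa [heq] at hmul
    have hloga : Real.log a < (Λ + c/8) * n := by
      have hmul := mul_lt_mul_of_pos_right h3 hnpos
      have heq : (1/(n:ℝ)) * Real.log a * n = Real.log a := by field_simp
      rwa [heq] at hmul
    have hqge : Real.exp ((Λ - c/8) * n) < q := by
      have hh := Real.exp_lt_exp.2 hlogq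
      rwa [Real.exp_log hqpos] at hh
    have hale : a ≤ Real.exp ((Λ + c/8) * n) := by
      calc a = Real.exp (Real.log a) := (Real.exp_log hapos).symm
        _ ≤ Real.exp ((Λ + c/8) * n) := Real.exp_le_exp.2 hloga.le
    have hnum : QpartLenE β h (fun z => env.V z ω) n (E n)
        ≤ ENNReal.ofReal (Real.exp (-(c/2) * n)) * ApartLen Pr env β h n := by
      have hh : ¬ (ENNReal.ofReal (Real.exp (-(c/2) * n)) * ApartLen Pr env β h n
          ≤ QpartLenE β h (fun z => env.V z ω) n (E n)) := h1
      exact (not_le.1 hh).le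
    have hQr : QpartLen β h (fun z => env.V z ω) n = ENNReal.ofReal q :=
      (ENNReal.ofReal_toReal (hQtop n ω)).symm
    have hAr : ApartLen Pr env β h n = ENNReal.ofReal a :=
      (ENNReal.ofReal_toReal (hAtop n)).symm
    unfold Qmeas
    calc QpartLenE β h (fun z => env.V z ω) n (E n) / QpartLen β h (fun z => env.V z ω) n
        ≤ (ENNReal.ofReal (Real.exp (-(c/2) * n)) * ApartLen Pr env β h n) /
            QpartLen β h (fun z => env.V z ω) n := ENNReal.div_le_div_right hnum _
      _ = ENNReal.ofReal (Real.exp (-(c/2) * n) * a) / ENNReal.ofReal q := by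
          rw [hQr, hAr, ← ENNReal.ofReal_mul (Real.exp_nonneg _)]
      _ = ENNReal.ofReal (Real.exp (-(c/2) * n) * a / q) := by
          rw [ENNReal.ofReal_div_of_pos hqpos]
      _ ≤ ENNReal.ofReal (Real.exp (-(c/4) * n)) := by
          apply ENNReal.ofReal_le_ofReal
          have hdiv : Real.exp (-(c/2) * n) * a / q
              ≤ Real.exp (-(c/2) * n) * Real.exp ((Λ + c/8) * n) / Real.exp ((Λ - c/8) * n) :=
            div_le_div₀ (by positivity)
              (mul_le_mul_of_nonneg_left hale (Real.exp_nonneg _)) (Real.exp_pos _) hqge.le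
          refine le_trans hdiv ?_
          rw [← Real.exp_add, ← Real.exp_sub]
          apply Real.exp_le_exp.2
          ring_nf
          nlinarith [sq_nonneg (c * (n:ℝ))]

end
end

section
/- Quenched law of large numbers under weak disorder (Lemma 11): Let β ≥ 0 and h ∈ ℝ^d with 𝔞*_0(h) > 1, and assume weak disorder at (h, β): ℙ-almost surely lim_{n→∞} (1/n) log Q_n(h) exists and equals Λ_a(h) = lim_{n→∞} (1/n) log A_n(h) > 0. Let v = ∇Λ_a(h) be the macroscopic extension under the annealed path measure. Then for every ε > 0 there exists c' > 0 such that, ℙ-almost surely, ℚ_n^h(|X(γ)/n − v| > ε) ≤ e^{−c'n} for all n large enough; in particular ℚ_n^h(|X(γ)/n − v| > ε) → 0 ℙ-a.s. -/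
open MeasureTheory ProbabilityTheory Real Filter Topology
open scoped ENNReal NNReal BigOperators Classical

noncomputable section

variable {Ω : Type*} [MeasurableSpace Ω]

namespace QLLN

variable {d : ℕ}

/-- Extensionality for polymers. -/
lemma Polymer.ext' {γ γ' : Polymer d} (h1 : γ.len = γ'.len) (h2 : γ.path = γ'.path) :
    γ = γ' := by
  cases γ; cases γ'; simp_all

instance : Countable (Polymer d) := by
  have : Function.Injective (fun γ : Polymer d => (⟨γ.len, fun i => γ.path i⟩ :
      Σ n : ℕ, Fin (n + 1) → Fin d → ℤ)) := by
    intro γ γ' hh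
    obtain ⟨l, p, s1, s2, s3⟩ := γ
    obtain ⟨l', p', t1, t2, t3⟩ := γ'
    simp only at hh
    obtain ⟨h1, h2⟩ := Sigma.mk.inj_iff.1 hh
    subst h1
    rw [heq_iff_eq] at h2
    have hp : p = p' := by
      funext i
      rcases le_or_gt i l with hi | hi
      · exact congrFun h2 ⟨i, by omega⟩
      · have e1 : p i = p l := s3 i hi.le
        have e2 : p' i = p' l := t3 i hi.le
        have e3 : p l = p' l := congrFun h2 ⟨l, by omega⟩
        rw [e1, e2, e3]
    subst hp
    rfl
  exact this.countable

/-- Coordinates of the path grow at most linearly. -/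
lemma abs_path_le (γ : Polymer d) (i : ℕ) (j : Fin d) : |γ.path i j| ≤ i := by
  induction i with
  | zero => simp [γ.start]
  | succ i ih =>
      rcases lt_or_ge i γ.len with hi | hi
      · have hstep : |γ.path (i + 1) j - γ.path i j| ≤ 1 := by
          have := γ.step i hi
          calc |γ.path (i + 1) j - γ.path i j| ≤ ∑ k, |γ.path (i + 1) k - γ.path i k| :=
                Finset.single_le_sum (f := fun k => |γ.path (i + 1) k - γ.path i k|)
                  (fun k _ => abs_nonneg _) (Finset.mem_univ j)
          _ = 1 := this
        have : |γ.path (i + 1) j| ≤ |γ.path i j| + |γ.path (i + 1) j - γ.path i j| := by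
          have := abs_add_le (γ.path i j) (γ.path (i + 1) j - γ.path i j)
          simpa using this
        have := this.trans (add_le_add ih hstep)
        exact_mod_cast this.trans (by push_cast; omega)
      · have : γ.path (i + 1) = γ.path i := by
          rw [γ.frozen (i + 1) (by omega), γ.frozen i hi]
        rw [this]
        exact ih.trans (by omega)

/-- `|X(γ) j| ≤ |γ|`. -/
lemma abs_X_le (γ : Polymer d) (j : Fin d) : |γ.X j| ≤ γ.len := abs_path_le γ γ.len j

def sgn (b : Bool) : ℝ := if b then 1 else -1

/-- A unit step of the lattice is `± e_j` for some `j`. -/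
lemma exists_dir (e : Fin d → ℤ) (he : (∑ j, |e j|) = 1) :
    ∃ p : Fin d × Bool, ∀ k, e k = if k = p.1 then (if p.2 then 1 else -1) else 0 := by
  have hex : ∃ j, e j ≠ 0 := by
    by_contra hc
    push_neg at hc
    simp [hc] at he
  obtain ⟨j, hj⟩ := hex
  have h1 : |e j| ≤ 1 := by
    rw [← he]
    exact Finset.single_le_sum (f := fun k => |e k|) (fun k _ => abs_nonneg _)
      (Finset.mem_univ j)
  have h2 : 1 ≤ |e j| := Int.one_le_abs (by exact_mod_cast hj)
  have habs : |e j| = 1 := le_antisymm h1 h2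
  have hzero : ∀ k, k ≠ j → e k = 0 := by
    intro k hk
    have hsum : ∑ l ∈ Finset.univ.erase j, |e l| = 0 := by
      have h3 := Finset.add_sum_erase Finset.univ (fun l => |e l|) (Finset.mem_univ j)
      rw [habs, he] at h3
      omega
    have := (Finset.sum_eq_zero_iff_of_nonneg (fun l _ => abs_nonneg (e l))).1 hsum k
      (Finset.mem_erase.2 ⟨hk, Finset.mem_univ k⟩)
    exact abs_eq_zero.1 this
  rcases (abs_eq (by norm_num : (0:ℤ) ≤ 1)).1 habs with h | h
  · refine ⟨(j, true), fun k => ?_⟩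
    by_cases hk : k = j
    · subst hk; simp [h]
    · simp [hk, hzero k hk]
  · refine ⟨(j, false), fun k => ?_⟩
    by_cases hk : k = j
    · subst hk; simp [h]
    · simp [hk, hzero k hk]

/-- The steps of `γ` as elements of `Fin d × Bool`. -/
noncomputable def encode (n : ℕ) (γ : {γ : Polymer d // γ.len = n}) : Fin n → Fin d × Bool :=
  fun i => Classical.choose (exists_dir (fun j => γ.1.path (i + 1) j - γ.1.path i j)
    (γ.1.step i (by omega)))

lemma encode_spec (n : ℕ) (γ : {γ : Polymer d // γ.len = n}) (i : Fin n) :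
    ∀ k, γ.1.path (i + 1) k - γ.1.path i k =
      if k = (encode n γ i).1 then (if (encode n γ i).2 then 1 else -1) else 0 :=
  Classical.choose_spec (exists_dir (fun j => γ.1.path (i + 1) j - γ.1.path i j)
    (γ.1.step i (by omega)))

lemma encode_injective (n : ℕ) : Function.Injective (encode (d := d) n) := by
  intro γ γ' hh
  have hl := γ.2
  have hl' := γ'.2
  have hpath : ∀ i, γ.1.path i = γ'.1.path i := by
    intro i
    induction i with
    | zero => rw [γ.1.start, γ'.1.start]
    | succ i ih =>
        rcases lt_or_ge i n with hi | hi
        · funext k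
          have e1 := encode_spec n γ ⟨i, hi⟩ k
          have e2 := encode_spec n γ' ⟨i, hi⟩ k
          rw [hh] at e1
          simp only [Fin.val_mk] at e1 e2
          have : γ.1.path (i + 1) k - γ.1.path i k = γ'.1.path (i + 1) k - γ'.1.path i k := by
            rw [e1, e2]
          have hik := congrFun ih k
          omega
        · rw [γ.1.frozen (i + 1) (by omega), γ.1.frozen i (by omega),
            γ'.1.frozen (i + 1) (by omega), γ'.1.frozen i (by omega)] at *
          exact ih
  exact Subtype.ext (Polymer.ext' (hl.trans hl'.symm) (funext hpath))

instance finLen (n : ℕ) : Finite {γ : Polymer d // γ.len = n} :=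
  Finite.of_injective _ (encode_injective n)

lemma card_len_le (n : ℕ) : Nat.card {γ : Polymer d // γ.len = n} ≤ (2 * d) ^ n := by
  have := Nat.card_le_card_of_injective _ (encode_injective (d := d) n)
  calc Nat.card {γ : Polymer d // γ.len = n} ≤ Nat.card (Fin n → Fin d × Bool) := this
  _ = (2 * d) ^ n := by
      simp [Nat.card_eq_fintype_card, Fintype.card_fun, Fintype.card_prod, mul_comm]

/-- The ℓ¹ norm of `h`. -/
def H1 (h : Fin d → ℝ) : ℝ := ∑ j, |h j|

lemma dotZ_le (h : Fin d → ℝ) (γ : Polymer d) : dotZ h γ.X ≤ γ.len * H1 h := by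
  have : ∀ j ∈ Finset.univ, h j * (γ.X j : ℝ) ≤ |h j| * (γ.len : ℝ) := by
    intro j _
    calc h j * (γ.X j : ℝ) ≤ |h j * (γ.X j : ℝ)| := le_abs_self _
    _ = |h j| * |(γ.X j : ℝ)| := abs_mul _ _
    _ ≤ |h j| * (γ.len : ℝ) := by
        refine mul_le_mul_of_nonneg_left ?_ (abs_nonneg _)
        rw [← Int.cast_abs]
        exact_mod_cast abs_X_le γ j
  calc dotZ h γ.X ≤ ∑ j, |h j| * (γ.len : ℝ) := Finset.sum_le_sum this
  _ = γ.len * H1 h := by rw [← Finset.sum_mul, mul_comm]; rfl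

lemma qweight_le {β : ℝ} (hβ : 0 ≤ β) (h : Fin d → ℝ) {v : (Fin d → ℤ) → ℝ}
    (hv : ∀ x, 0 ≤ v x) (γ : Polymer d) :
    qweight β 0 h v γ ≤
      ENNReal.ofReal (Real.exp (γ.len * H1 h) * (1 / (2 * d : ℝ)) ^ γ.len) := by
  unfold qweight
  refine ENNReal.ofReal_le_ofReal (mul_le_mul_of_nonneg_right ?_ (by positivity))
  refine Real.exp_le_exp.2 ?_
  have h1 := dotZ_le h γ
  have h2 : 0 ≤ β * ∑ i ∈ Finset.Icc 1 γ.len, v (γ.path i) :=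
    mul_nonneg hβ (Finset.sum_nonneg fun i _ => hv _)
  linarith

lemma tsum_sub_le (g : Polymer d → ℝ≥0∞) (P Q : Polymer d → Prop) (hPQ : ∀ γ, P γ → Q γ) :
    ∑' γ : {γ : Polymer d // P γ}, g γ.1 ≤ ∑' γ : {γ : Polymer d // Q γ}, g γ.1 := by
  rw [show (∑' γ : {γ : Polymer d // P γ}, g γ.1) = ∑' γ : {γ | P γ}, g γ from rfl,
    show (∑' γ : {γ : Polymer d // Q γ}, g γ.1) = ∑' γ : {γ | Q γ}, g γ from rfl,
    tsum_subtype, tsum_subtype]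
  exact Summable.tsum_le_tsum (fun γ => Set.indicator_le_indicator_of_subset hPQ (fun _ => zero_le) γ)
    ENNReal.summable ENNReal.summable

lemma QpartLenE_le_QpartLen {β : ℝ} (h : Fin d → ℝ) (v : (Fin d → ℤ) → ℝ) (n : ℕ)
    (E : Set (Polymer d)) : QpartLenE β h v n E ≤ QpartLen β h v n :=
  tsum_sub_le _ _ _ (fun _ hp => hp.1)

lemma QpartLen_le (hd : 0 < d) {β : ℝ} (hβ : 0 ≤ β) (h : Fin d → ℝ)
    {v : (Fin d → ℤ) → ℝ} (hv : ∀ x, 0 ≤ v x) (n : ℕ) :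
    QpartLen β h v n ≤ ENNReal.ofReal (Real.exp (n * H1 h)) := by
  letI : Fintype {γ : Polymer d // γ.len = n} := Fintype.ofFinite _
  have h2d : (0:ℝ) < 2 * d := by positivity
  calc QpartLen β h v n
      = ∑ γ : {γ : Polymer d // γ.len = n}, qweight β 0 h v γ.1 := tsum_fintype _
  _ ≤ ∑ _γ : {γ : Polymer d // γ.len = n},
        ENNReal.ofReal (Real.exp (n * H1 h) * (1 / (2 * d : ℝ)) ^ n) := by
      refine Finset.sum_le_sum fun γ _ => ?_
      have := qweight_le hβ h hv γ.1
      rw [γ.2] at this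
      exact this
  _ = (Fintype.card {γ : Polymer d // γ.len = n} : ℝ≥0∞) *
        ENNReal.ofReal (Real.exp (n * H1 h) * (1 / (2 * d : ℝ)) ^ n) := by
      rw [Finset.sum_const, Finset.card_univ, nsmul_eq_mul]
  _ ≤ (((2 * d) ^ n : ℕ) : ℝ≥0∞) *
        ENNReal.ofReal (Real.exp (n * H1 h) * (1 / (2 * d : ℝ)) ^ n) := by
      refine mul_le_mul_left ?_ _
      have hcard : Fintype.card {γ : Polymer d // γ.len = n} ≤ (2 * d) ^ n := by
        rw [← Nat.card_eq_fintype_card]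
        exact card_len_le n
      exact_mod_cast hcard
  _ = ENNReal.ofReal ((((2 * d) ^ n : ℕ) : ℝ) *
        (Real.exp (n * H1 h) * (1 / (2 * d : ℝ)) ^ n)) := by
      rw [← ENNReal.ofReal_natCast ((2 * d) ^ n), ← ENNReal.ofReal_mul (by positivity)]
  _ = ENNReal.ofReal (Real.exp (n * H1 h)) := by
      congr 1
      push_cast
      rw [mul_comm, mul_assoc, ← mul_pow]
      field_simp
      simp

/-- The direction `± e_j` indexed by `p = (j, sign)`. -/
def dir (p : Fin d × Bool) : Fin d → ℝ := fun k => if k = p.1 then sgn p.2 else 0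

lemma dir_eq_smul_single (p : Fin d × Bool) :
    dir p = sgn p.2 • (Pi.single p.1 (1 : ℝ) : Fin d → ℝ) := by
  funext k
  simp [dir, Pi.single_apply, mul_ite]

lemma dotZ_add_dir (h : Fin d → ℝ) (s : ℝ) (p : Fin d × Bool) (x : Fin d → ℤ) :
    dotZ (h + s • dir p) x = dotZ h x + s * (sgn p.2 * (x p.1 : ℝ)) := by
  unfold dotZ
  simp only [Pi.add_apply, Pi.smul_apply, smul_eq_mul, add_mul]
  rw [Finset.sum_add_distrib]
  congr 1
  have : ∀ j, s * dir p j * (x j : ℝ) =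
      if j = p.1 then s * (sgn p.2 * (x j : ℝ)) else 0 := by
    intro j
    by_cases hj : j = p.1 <;> simp [dir, hj] <;> ring
  rw [Finset.sum_congr rfl fun j _ => this j, Finset.sum_ite_eq']
  simp

lemma measurable_QpartLenE {Ω : Type*} [MeasurableSpace Ω] {Pr : Measure Ω}
    (env : Environment d Pr) (β : ℝ) (h : Fin d → ℝ) (n : ℕ) (E : Set (Polymer d)) :
    Measurable fun ω => QpartLenE β h (fun z => env.V z ω) n E := by
  unfold QpartLenE qweight
  refine Measurable.ennreal_tsum fun γ => ?_
  refine ENNReal.measurable_ofReal.comp (Measurable.mul ?_ measurable_const)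
  refine Real.measurable_exp.comp (Measurable.sub measurable_const ?_)
  exact (Finset.measurable_sum _ fun i _ => env.meas _).const_mul β

lemma measurable_QpartLen {Ω : Type*} [MeasurableSpace Ω] {Pr : Measure Ω}
    (env : Environment d Pr) (β : ℝ) (h : Fin d → ℝ) (n : ℕ) :
    Measurable fun ω => QpartLen β h (fun z => env.V z ω) n := by
  unfold QpartLen qweight
  refine Measurable.ennreal_tsum fun γ => ?_
  refine ENNReal.measurable_ofReal.comp (Measurable.mul ?_ measurable_const)
  refine Real.measurable_exp.comp (Measurable.sub measurable_const ?_)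
  exact (Finset.measurable_sum _ fun i _ => env.meas _).const_mul β

lemma ApartLen_le {Ω : Type*} [MeasurableSpace Ω] (Pr : Measure Ω) [IsProbabilityMeasure Pr]
    (env : Environment d Pr) (hd : 0 < d) {β : ℝ} (hβ : 0 ≤ β) (f : Fin d → ℝ) (n : ℕ) :
    ApartLen Pr env β f n ≤ ENNReal.ofReal (Real.exp (n * H1 f)) := by
  unfold ApartLen
  calc ∫⁻ ω, QpartLen β f (fun z => env.V z ω) n ∂Pr
      ≤ ∫⁻ _ω, ENNReal.ofReal (Real.exp (n * H1 f)) ∂Pr :=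
        lintegral_mono fun ω => QpartLen_le hd hβ f (fun x => env.nonneg x ω) n
  _ = ENNReal.ofReal (Real.exp (n * H1 f)) := by simp

lemma key_tilt {β : ℝ} (h : Fin d → ℝ) (venv : (Fin d → ℤ) → ℝ) (vbar : Fin d → ℝ)
    (ε δ s : ℝ) (hs : 0 < s) (n : ℕ) (hn : 1 ≤ n)
    (hcov : ∀ w : Fin d → ℝ, ε < enorm' w → ∃ p : Fin d × Bool, δ < sgn p.2 * w p.1) :
    QpartLenE β h venv n {γ : Polymer d | ε < enorm' (fun j => (γ.X j : ℝ) / n - vbar j)} ≤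
      ∑ p : Fin d × Bool,
        ENNReal.ofReal (Real.exp (-(n : ℝ) * (s * (sgn p.2 * vbar p.1 + δ)))) *
          QpartLen β (h + s • dir p) venv n := by
  set E := {γ : Polymer d | ε < enorm' (fun j => (γ.X j : ℝ) / n - vbar j)} with hE
  have hn' : (0 : ℝ) < n := by exact_mod_cast hn
  have hkey : ∀ γ : {γ : Polymer d // γ.len = n ∧ γ ∈ E},
      qweight β 0 h venv γ.1 ≤ ∑ p : Fin d × Bool,
        ENNReal.ofReal (Real.exp (-(n : ℝ) * (s * (sgn p.2 * vbar p.1 + δ)))) *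
          qweight β 0 (h + s • dir p) venv γ.1 := by
    rintro ⟨γ, hγn, hγE⟩
    obtain ⟨p, hp⟩ := hcov _ hγE
    have hXb : (n : ℝ) * (sgn p.2 * vbar p.1 + δ) ≤ sgn p.2 * (γ.X p.1 : ℝ) := by
      have heq : sgn p.2 * ((γ.X p.1 : ℝ) / n - vbar p.1) * n =
          sgn p.2 * (γ.X p.1 : ℝ) - sgn p.2 * vbar p.1 * n := by
        field_simp
      have := mul_lt_mul_of_pos_right hp hn'
      rw [heq] at this
      nlinarith
    have hterm : qweight β 0 h venv γ ≤
        ENNReal.ofReal (Real.exp (-(n : ℝ) * (s * (sgn p.2 * vbar p.1 + δ)))) *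
          qweight β 0 (h + s • dir p) venv γ := by
      unfold qweight
      rw [← ENNReal.ofReal_mul (le_of_lt (Real.exp_pos _))]
      refine ENNReal.ofReal_le_ofReal ?_
      rw [← mul_assoc, ← Real.exp_add]
      refine mul_le_mul_of_nonneg_right (Real.exp_le_exp.2 ?_) (by positivity)
      rw [dotZ_add_dir]
      nlinarith [mul_le_mul_of_nonneg_left hXb hs.le]
    exact hterm.trans (Finset.single_le_sum
      (f := fun p : Fin d × Bool =>
        ENNReal.ofReal (Real.exp (-(n : ℝ) * (s * (sgn p.2 * vbar p.1 + δ)))) *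
          qweight β 0 (h + s • dir p) venv γ)
      (fun p _ => zero_le) (Finset.mem_univ p))
  calc QpartLenE β h venv n E
      ≤ ∑' γ : {γ : Polymer d // γ.len = n ∧ γ ∈ E}, ∑ p : Fin d × Bool,
          ENNReal.ofReal (Real.exp (-(n : ℝ) * (s * (sgn p.2 * vbar p.1 + δ)))) *
            qweight β 0 (h + s • dir p) venv γ.1 :=
        Summable.tsum_le_tsum hkey ENNReal.summable ENNReal.summable
  _ = ∑ p : Fin d × Bool, ∑' γ : {γ : Polymer d // γ.len = n ∧ γ ∈ E},
          ENNReal.ofReal (Real.exp (-(n : ℝ) * (s * (sgn p.2 * vbar p.1 + δ)))) *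
            qweight β 0 (h + s • dir p) venv γ.1 :=
        Summable.tsum_finsetSum (fun _ _ => ENNReal.summable)
  _ ≤ ∑ p : Fin d × Bool,
        ENNReal.ofReal (Real.exp (-(n : ℝ) * (s * (sgn p.2 * vbar p.1 + δ)))) *
          QpartLen β (h + s • dir p) venv n := by
      refine Finset.sum_le_sum fun p _ => ?_
      rw [ENNReal.tsum_mul_left]
      exact mul_le_mul_right (tsum_sub_le _ _ _ fun γ hγ => hγ.1) _

end QLLN

open QLLN


set_option maxHeartbeats 1000000 in
/-- Quenched law of large numbers under weak disorder (Lemma 11): if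
`𝔞*_0(h) > 1` and weak disorder holds at `(h, β)` (`ℙ`-a.s.
`lim (1/n) log Q_n(h) = Λ_a(h) > 0`), then, with `v = ∇Λ_a(h)`, for every `ε > 0` there
is `c' > 0` such that `ℙ`-a.s. `ℚ_n^h(|X(γ)/n − v| > ε) ≤ e^{−c'n}` for all large `n`;
in particular `ℚ_n^h(|X(γ)/n − v| > ε) → 0` `ℙ`-a.s. -/
theorem quenched_LLN_weak_disorder
    {d : ℕ} {Ω : Type*} [MeasurableSpace Ω] (Pr : Measure Ω) [IsProbabilityMeasure Pr]
    (env : Environment d Pr) (β : ℝ) (hβ : 0 ≤ β) (h : Fin d → ℝ)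
    (a0 : (Fin d → ℝ) → ℝ)
    (haL : IsAnnealedLyapunov Pr env β 0 a0) (haN : IsEquivNorm a0)
    (hsup : 1 < polar a0 h)
    (Λa : (Fin d → ℝ) → ℝ)
    (hΛ : ∀ f : Fin d → ℝ,
      Tendsto (fun n : ℕ => (1 / (n : ℝ)) * Real.log (ApartLen Pr env β f n).toReal)
        atTop (𝓝 (Λa f)))
    (hpos : 0 < Λa h)
    (hweak : ∀ᵐ ω ∂Pr,
      Tendsto (fun n : ℕ =>
          (1 / (n : ℝ)) * Real.log (QpartLen β h (fun z => env.V z ω) n).toReal)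
        atTop (𝓝 (Λa h)))
    (L : (Fin d → ℝ) →L[ℝ] ℝ) (hL : HasFDerivAt Λa L h)
    (v : Fin d → ℝ) (hv : v = fun j => L (Pi.single j 1)) :
    ∀ ε : ℝ, 0 < ε → ∃ c' : ℝ, 0 < c' ∧ ∀ᵐ ω ∂Pr,
      (∀ᶠ n : ℕ in atTop,
        Qmeas β h (fun z => env.V z ω) n
            {γ : Polymer d | ε < enorm' (fun j => (γ.X j : ℝ) / n - v j)} ≤
          ENNReal.ofReal (Real.exp (-c' * n))) ∧
      Tendsto (fun n : ℕ =>
          Qmeas β h (fun z => env.V z ω) n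
            {γ : Polymer d | ε < enorm' (fun j => (γ.X j : ℝ) / n - v j)})
        atTop (𝓝 0) := by
  intro ε hε
  -- the degenerate case `d = 0` contradicts `0 < Λa h`
  rcases Nat.eq_zero_or_pos d with hd0 | hd
  · exfalso
    subst hd0
    have hA0 : ∀ n : ℕ, 1 ≤ n → ApartLen Pr env β h n = 0 := by
      intro n hn
      have hemp : IsEmpty {γ : Polymer 0 // γ.len = n} := by
        refine ⟨fun γ => ?_⟩
        have := γ.1.step 0 (by omega)
        simpa using this
      have hQ : ∀ ω : Ω, QpartLen β h (fun z => env.V z ω) n = 0 := by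
        intro ω
        unfold QpartLen
        exact tsum_empty
      unfold ApartLen
      simp [hQ]
    have h0 : Tendsto (fun n : ℕ =>
        (1 / (n : ℝ)) * Real.log (ApartLen Pr env β h n).toReal) atTop (𝓝 0) := by
      refine Tendsto.congr' ?_ tendsto_const_nhds
      filter_upwards [eventually_ge_atTop 1] with n hn
      rw [hA0 n hn]
      simp
    have := tendsto_nhds_unique (hΛ h) (by simpa using h0)
    linarith
  -- main case
  have hsd : (0 : ℝ) < Real.sqrt d := Real.sqrt_pos.2 (by exact_mod_cast hd)
  set δ : ℝ := ε / Real.sqrt d with hδdef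
  have hδ : 0 < δ := div_pos hε hsd
  -- covering of the complement of the ball by half-spaces
  have hcov : ∀ w : Fin d → ℝ, ε < enorm' w → ∃ p : Fin d × Bool, δ < sgn p.2 * w p.1 := by
    intro w hw
    by_contra hc
    push_neg at hc
    have habs : ∀ j, |w j| ≤ δ := by
      intro j
      have h1 := hc (j, true)
      have h2 := hc (j, false)
      simp [sgn] at h1 h2
      rw [abs_le]
      constructor <;> linarith [h1, h2]
    have hsum : (∑ j, w j ^ 2) ≤ d * δ ^ 2 := by
      calc (∑ j, w j ^ 2) ≤ ∑ _j : Fin d, δ ^ 2 := by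
            refine Finset.sum_le_sum fun j _ => ?_
            calc w j ^ 2 = |w j| ^ 2 := (sq_abs _).symm
            _ ≤ δ ^ 2 := pow_le_pow_left₀ (abs_nonneg _) (habs j) 2
      _ = d * δ ^ 2 := by simp [Finset.sum_const, nsmul_eq_mul]
    have hle : enorm' w ≤ ε := by
      unfold enorm'
      calc Real.sqrt (∑ j, w j ^ 2) ≤ Real.sqrt (d * δ ^ 2) := Real.sqrt_le_sqrt hsum
      _ = Real.sqrt d * δ := by
          rw [Real.sqrt_mul (by positivity), Real.sqrt_sq hδ.le]
      _ = ε := by rw [hδdef, mul_div_cancel₀ _ hsd.ne']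
    linarith
  -- directional derivatives of `Λa` at `h`
  have hderiv : ∀ p : Fin d × Bool,
      HasDerivAt (fun t : ℝ => Λa (h + t • dir p)) (sgn p.2 * v p.1) 0 := by
    intro p
    have hline : HasDerivAt (fun t : ℝ => h + t • dir p) (dir p) 0 := by
      simpa using ((hasDerivAt_id (0 : ℝ)).smul_const (dir p)).const_add h
    have hL' : HasFDerivAt Λa L (h + (0 : ℝ) • dir p) := by simpa using hL
    have hcomp := hL'.comp_hasDerivAt (x := (0 : ℝ)) hline
    have hval : L (dir p) = sgn p.2 * v p.1 := by
      rw [dir_eq_smul_single, L.map_smul, smul_eq_mul, hv]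
    rwa [hval] at hcomp
  -- choice of the tilting parameter `s`
  have hslope : ∀ᶠ t : ℝ in 𝓝[>] (0 : ℝ), ∀ p : Fin d × Bool,
      (Λa (h + t • dir p) - Λa h) / t < sgn p.2 * v p.1 + δ / 2 := by
    rw [eventually_all]
    intro p
    have h1 : Tendsto (slope (fun t : ℝ => Λa (h + t • dir p)) 0) (𝓝[≠] (0 : ℝ))
        (𝓝 (sgn p.2 * v p.1)) := hasDerivAt_iff_tendsto_slope.1 (hderiv p)
    have h2 : Tendsto (slope (fun t : ℝ => Λa (h + t • dir p)) 0) (𝓝[>] (0 : ℝ))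
        (𝓝 (sgn p.2 * v p.1)) :=
      h1.mono_left (nhdsWithin_mono 0 fun x hx => ne_of_gt hx)
    have h3 := h2.eventually_lt_const
      (show sgn p.2 * v p.1 < sgn p.2 * v p.1 + δ / 2 by linarith)
    filter_upwards [h3] with t ht
    simpa [slope_def_field, div_eq_inv_mul] using ht
  obtain ⟨s, hs_slope, hs_mem⟩ := (hslope.and self_mem_nhdsWithin).exists
  have hs : (0 : ℝ) < s := hs_mem
  have hgap : ∀ p : Fin d × Bool,
      Λa (h + s • dir p) - Λa h < s * (sgn p.2 * v p.1 + δ / 2) := by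
    intro p
    have := hs_slope p
    rw [div_lt_iff₀ hs] at this
    linarith [this]
  set κ : ℝ := s * δ with hκdef
  have hκ : 0 < κ := mul_pos hs hδ
  -- the annealed per-direction bound
  have hA1 : ∀ p : Fin d × Bool, ∀ᶠ n : ℕ in atTop,
      ENNReal.ofReal (Real.exp (-(n : ℝ) * (s * (sgn p.2 * v p.1 + δ)))) *
        ApartLen Pr env β (h + s • dir p) n ≤
        ENNReal.ofReal (Real.exp ((n : ℝ) * (Λa h - κ / 2 + κ / 16))) := by
    intro p
    have hev1 := (hΛ (h + s • dir p)).eventually_lt_const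
      (show Λa (h + s • dir p) < Λa (h + s • dir p) + κ / 16 by linarith)
    filter_upwards [hev1, eventually_ge_atTop 1] with n hn1 hn2
    have hnpos : (0 : ℝ) < n := by exact_mod_cast hn2
    have hfin : ApartLen Pr env β (h + s • dir p) n ≠ ⊤ :=
      ((ApartLen_le Pr env hd hβ _ n).trans_lt ENNReal.ofReal_lt_top).ne
    have hlog : Real.log (ApartLen Pr env β (h + s • dir p) n).toReal <
        n * (Λa (h + s • dir p) + κ / 16) := by
      have h4 := mul_lt_mul_of_pos_left hn1 hnpos
      have h5 : (n : ℝ) * ((1 / (n : ℝ)) *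
          Real.log (ApartLen Pr env β (h + s • dir p) n).toReal) =
          Real.log (ApartLen Pr env β (h + s • dir p) n).toReal := by
        field_simp
      rwa [h5] at h4
    have hAle : ApartLen Pr env β (h + s • dir p) n ≤
        ENNReal.ofReal (Real.exp ((n : ℝ) * (Λa (h + s • dir p) + κ / 16))) := by
      rw [← ENNReal.ofReal_toReal hfin]
      refine ENNReal.ofReal_le_ofReal ?_
      rcases le_or_gt (ApartLen Pr env β (h + s • dir p) n).toReal 0 with h0 | h0
      · exact h0.trans (Real.exp_pos _).le
      · exact ((Real.log_lt_iff_lt_exp h0).1 hlog).le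
    calc ENNReal.ofReal (Real.exp (-(n : ℝ) * (s * (sgn p.2 * v p.1 + δ)))) *
          ApartLen Pr env β (h + s • dir p) n
        ≤ ENNReal.ofReal (Real.exp (-(n : ℝ) * (s * (sgn p.2 * v p.1 + δ)))) *
          ENNReal.ofReal (Real.exp ((n : ℝ) * (Λa (h + s • dir p) + κ / 16))) :=
          mul_le_mul_right hAle _
    _ = ENNReal.ofReal (Real.exp (-(n : ℝ) * (s * (sgn p.2 * v p.1 + δ)) +
          (n : ℝ) * (Λa (h + s • dir p) + κ / 16))) := by
        rw [← ENNReal.ofReal_mul (Real.exp_pos _).le, ← Real.exp_add]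
    _ ≤ ENNReal.ofReal (Real.exp ((n : ℝ) * (Λa h - κ / 2 + κ / 16))) := by
        refine ENNReal.ofReal_le_ofReal (Real.exp_le_exp.2 ?_)
        have hfac : Λa (h + s • dir p) - s * (sgn p.2 * v p.1 + δ) + κ / 16 ≤
            Λa h - κ / 2 + κ / 16 := by
          have := hgap p
          rw [hκdef]
          nlinarith
        calc -(n : ℝ) * (s * (sgn p.2 * v p.1 + δ)) +
              (n : ℝ) * (Λa (h + s • dir p) + κ / 16)
            = (n : ℝ) * (Λa (h + s • dir p) - s * (sgn p.2 * v p.1 + δ) + κ / 16) := by ring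
        _ ≤ (n : ℝ) * (Λa h - κ / 2 + κ / 16) := mul_le_mul_of_nonneg_left hfac hnpos.le
  -- the annealed bound on the restricted partition function
  have hA : ∀ᶠ n : ℕ in atTop,
      ApartLenE Pr env β h n
          {γ : Polymer d | ε < enorm' (fun j => (γ.X j : ℝ) / n - v j)} ≤
        ENNReal.ofReal (Real.exp ((n : ℝ) * (Λa h - 3 * κ / 8))) := by
    have h2d : ∀ᶠ n : ℕ in atTop, (2 * d : ℝ) ≤ Real.exp ((n : ℝ) * (κ / 16)) := by
      have ht : Tendsto (fun n : ℕ => Real.exp ((n : ℝ) * (κ / 16))) atTop atTop :=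
        Real.tendsto_exp_atTop.comp
          (Tendsto.atTop_mul_const (by linarith) (tendsto_natCast_atTop_atTop (R := ℝ)))
      exact ht.eventually_ge_atTop _
    filter_upwards [h2d, eventually_ge_atTop 1, eventually_all.2 hA1] with n hn2d hn1 hnp
    have hstep : ApartLenE Pr env β h n
        {γ : Polymer d | ε < enorm' (fun j => (γ.X j : ℝ) / n - v j)} ≤
        ∑ p : Fin d × Bool,
          ENNReal.ofReal (Real.exp (-(n : ℝ) * (s * (sgn p.2 * v p.1 + δ)))) *
            ApartLen Pr env β (h + s • dir p) n := by
      unfold ApartLenE ApartLen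
      calc ∫⁻ ω, QpartLenE β h (fun z => env.V z ω) n
            {γ : Polymer d | ε < enorm' (fun j => (γ.X j : ℝ) / n - v j)} ∂Pr
          ≤ ∫⁻ ω, ∑ p : Fin d × Bool,
              ENNReal.ofReal (Real.exp (-(n : ℝ) * (s * (sgn p.2 * v p.1 + δ)))) *
                QpartLen β (h + s • dir p) (fun z => env.V z ω) n ∂Pr :=
            lintegral_mono fun ω => key_tilt h _ v ε δ s hs n hn1 hcov
      _ = ∑ p : Fin d × Bool, ∫⁻ ω,
              ENNReal.ofReal (Real.exp (-(n : ℝ) * (s * (sgn p.2 * v p.1 + δ)))) *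
                QpartLen β (h + s • dir p) (fun z => env.V z ω) n ∂Pr :=
            lintegral_finset_sum _ fun p _ =>
              ((measurable_QpartLen env β _ n).const_mul _)
      _ = ∑ p : Fin d × Bool,
              ENNReal.ofReal (Real.exp (-(n : ℝ) * (s * (sgn p.2 * v p.1 + δ)))) *
                ∫⁻ ω, QpartLen β (h + s • dir p) (fun z => env.V z ω) n ∂Pr :=
            Finset.sum_congr rfl fun p _ =>
              lintegral_const_mul' _ _ ENNReal.ofReal_ne_top
    calc ApartLenE Pr env β h n
          {γ : Polymer d | ε < enorm' (fun j => (γ.X j : ℝ) / n - v j)}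
        ≤ ∑ p : Fin d × Bool,
            ENNReal.ofReal (Real.exp (-(n : ℝ) * (s * (sgn p.2 * v p.1 + δ)))) *
              ApartLen Pr env β (h + s • dir p) n := hstep
    _ ≤ ∑ _p : Fin d × Bool,
          ENNReal.ofReal (Real.exp ((n : ℝ) * (Λa h - κ / 2 + κ / 16))) :=
        Finset.sum_le_sum fun p _ => hnp p
    _ = (2 * d : ℕ) • ENNReal.ofReal (Real.exp ((n : ℝ) * (Λa h - κ / 2 + κ / 16))) := by
        rw [Finset.sum_const, Finset.card_univ]
        congr 1
        simp [mul_comm]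
    _ ≤ ENNReal.ofReal (Real.exp ((n : ℝ) * (Λa h - 3 * κ / 8))) := by
        rw [nsmul_eq_mul, ← ENNReal.ofReal_natCast,
          ← ENNReal.ofReal_mul (by positivity)]
        refine ENNReal.ofReal_le_ofReal ?_
        calc ((2 * d : ℕ) : ℝ) * Real.exp ((n : ℝ) * (Λa h - κ / 2 + κ / 16))
            ≤ Real.exp ((n : ℝ) * (κ / 16)) *
              Real.exp ((n : ℝ) * (Λa h - κ / 2 + κ / 16)) := by
              refine mul_le_mul_of_nonneg_right ?_ (Real.exp_pos _).le
              push_cast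
              exact hn2d
        _ = Real.exp ((n : ℝ) * (κ / 16) + (n : ℝ) * (Λa h - κ / 2 + κ / 16)) :=
              (Real.exp_add _ _).symm
        _ = Real.exp ((n : ℝ) * (Λa h - 3 * κ / 8)) := by ring_nf
  -- Markov + Borel–Cantelli for the numerator
  set bad : ℕ → Set Ω := fun n => {ω | ENNReal.ofReal (Real.exp ((n : ℝ) * (Λa h - κ / 4))) ≤
      QpartLenE β h (fun z => env.V z ω) n
        {γ : Polymer d | ε < enorm' (fun j => (γ.X j : ℝ) / n - v j)}} with hbad
  set r : ℝ≥0∞ := ENNReal.ofReal (Real.exp (-(κ / 8))) with hrdef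
  have hr1 : r < 1 := by
    rw [hrdef]
    refine ENNReal.ofReal_lt_one.2 ?_
    simpa using Real.exp_lt_exp.2 (show -(κ / 8) < 0 by linarith)
  have hr0 : r ≠ 0 := (ENNReal.ofReal_pos.2 (Real.exp_pos _)).ne'
  have hPrbad : ∀ᶠ n : ℕ in atTop, Pr (bad n) ≤ r ^ n := by
    filter_upwards [hA] with n hn
    have hm := meas_ge_le_lintegral_div (μ := Pr)
      (measurable_QpartLenE env β h n
        {γ : Polymer d | ε < enorm' (fun j => (γ.X j : ℝ) / n - v j)}).aemeasurable
      (ε := ENNReal.ofReal (Real.exp ((n : ℝ) * (Λa h - κ / 4))))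
      (ENNReal.ofReal_pos.2 (Real.exp_pos _)).ne' ENNReal.ofReal_ne_top
    calc Pr (bad n) ≤ (∫⁻ ω, QpartLenE β h (fun z => env.V z ω) n
          {γ : Polymer d | ε < enorm' (fun j => (γ.X j : ℝ) / n - v j)} ∂Pr) /
          ENNReal.ofReal (Real.exp ((n : ℝ) * (Λa h - κ / 4))) := hm
    _ ≤ ENNReal.ofReal (Real.exp ((n : ℝ) * (Λa h - 3 * κ / 8))) /
          ENNReal.ofReal (Real.exp ((n : ℝ) * (Λa h - κ / 4))) :=
        ENNReal.div_le_div hn le_rfl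
    _ = ENNReal.ofReal (Real.exp ((n : ℝ) * (Λa h - 3 * κ / 8)) /
          Real.exp ((n : ℝ) * (Λa h - κ / 4))) :=
        (ENNReal.ofReal_div_of_pos (Real.exp_pos _)).symm
    _ = r ^ n := by
        rw [← Real.exp_sub, hrdef, ← ENNReal.ofReal_pow (Real.exp_pos _).le,
          ← Real.exp_nat_mul]
        congr 1
        ring
  obtain ⟨N, hN⟩ := eventually_atTop.1 hPrbad
  have hCall : ∀ n, Pr (bad n) ≤ (r ^ N)⁻¹ * r ^ n := by
    intro n
    rcases le_or_gt N n with hn | hn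
    · calc Pr (bad n) ≤ r ^ n := hN n hn
      _ = 1 * r ^ n := (one_mul _).symm
      _ ≤ (r ^ N)⁻¹ * r ^ n := by
          refine mul_le_mul_left ?_ _
          simpa using ENNReal.inv_le_inv.2 (pow_le_one₀ zero_le hr1.le)
    · calc Pr (bad n) ≤ 1 := prob_le_one
      _ = (r ^ N)⁻¹ * r ^ N :=
          (ENNReal.inv_mul_cancel (pow_ne_zero N hr0)
            (ENNReal.pow_ne_top ENNReal.ofReal_ne_top)).symm
      _ ≤ (r ^ N)⁻¹ * r ^ n :=
          mul_le_mul_right (pow_le_pow_of_le_one zero_le hr1.le hn.le) _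
  have hsum : (∑' n, Pr (bad n)) ≠ ⊤ := by
    refine ne_top_of_le_ne_top ?_ (ENNReal.tsum_le_tsum hCall)
    rw [ENNReal.tsum_mul_left, ENNReal.tsum_geometric]
    exact ENNReal.mul_ne_top (ENNReal.inv_ne_top.2 (pow_ne_zero N hr0))
      (ENNReal.inv_ne_top.2 (tsub_pos_of_lt hr1).ne')
  have hae1 : ∀ᵐ ω ∂Pr, ∀ᶠ n : ℕ in atTop, ω ∉ bad n := by
    have h0 := measure_limsup_atTop_eq_zero hsum
    have h1 := (measure_eq_zero_iff_ae_notMem (μ := Pr)).1 h0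
    filter_upwards [h1] with ω hω
    exact Filter.not_frequently.1 fun hf => hω (mem_limsup_iff_frequently_mem.2 hf)
  -- choice of `θ` for the denominator
  set θ : ℝ := min (κ / 8) (Λa h / 2) with hθdef
  have hθpos : 0 < θ := lt_min (by linarith) (by linarith)
  refine ⟨κ / 8, by linarith, ?_⟩
  filter_upwards [hae1, hweak] with ω hω1 hω2
  -- almost sure lower bound on the denominator
  have hden : ∀ᶠ n : ℕ in atTop,
      ENNReal.ofReal (Real.exp ((n : ℝ) * (Λa h - θ))) ≤
        QpartLen β h (fun z => env.V z ω) n := by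
    have hev := hω2.eventually_const_lt (show Λa h - θ < Λa h by linarith)
    filter_upwards [hev, eventually_ge_atTop 1] with n hn1 hn2
    have hnpos : (0 : ℝ) < n := by exact_mod_cast hn2
    have hlog : (n : ℝ) * (Λa h - θ) <
        Real.log (QpartLen β h (fun z => env.V z ω) n).toReal := by
      have h4 := mul_lt_mul_of_pos_left hn1 hnpos
      have h5 : (n : ℝ) * ((1 / (n : ℝ)) *
          Real.log (QpartLen β h (fun z => env.V z ω) n).toReal) =
          Real.log (QpartLen β h (fun z => env.V z ω) n).toReal := by
        field_simp
      rwa [h5] at h4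
    have hc : 0 < (n : ℝ) * (Λa h - θ) := by
      have hθ2 : θ ≤ Λa h / 2 := min_le_right _ _
      nlinarith
    have hTpos : 0 < (QpartLen β h (fun z => env.V z ω) n).toReal := by
      rcases lt_or_eq_of_le (ENNReal.toReal_nonneg
        (a := QpartLen β h (fun z => env.V z ω) n)) with hT | hT
      · exact hT
      · rw [← hT, Real.log_zero] at hlog
        linarith
    have hfin : QpartLen β h (fun z => env.V z ω) n ≠ ⊤ :=
      ((QpartLen_le hd hβ h (fun x => env.nonneg x ω) n).trans_lt ENNReal.ofReal_lt_top).ne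
    rw [← ENNReal.ofReal_toReal hfin]
    exact ENNReal.ofReal_le_ofReal ((Real.lt_log_iff_exp_lt hTpos).1 hlog).le
  have hnum : ∀ᶠ n : ℕ in atTop,
      QpartLenE β h (fun z => env.V z ω) n
          {γ : Polymer d | ε < enorm' (fun j => (γ.X j : ℝ) / n - v j)} ≤
        ENNReal.ofReal (Real.exp ((n : ℝ) * (Λa h - κ / 4))) := by
    filter_upwards [hω1] with n hn
    exact (not_le.1 hn).le
  have hfinal : ∀ᶠ n : ℕ in atTop,
      Qmeas β h (fun z => env.V z ω) n
          {γ : Polymer d | ε < enorm' (fun j => (γ.X j : ℝ) / n - v j)} ≤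
        ENNReal.ofReal (Real.exp (-(κ / 8) * n)) := by
    filter_upwards [hnum, hden] with n h1 h2
    unfold Qmeas
    calc QpartLenE β h (fun z => env.V z ω) n
          {γ : Polymer d | ε < enorm' (fun j => (γ.X j : ℝ) / n - v j)} /
          QpartLen β h (fun z => env.V z ω) n
        ≤ ENNReal.ofReal (Real.exp ((n : ℝ) * (Λa h - κ / 4))) /
          ENNReal.ofReal (Real.exp ((n : ℝ) * (Λa h - θ))) := ENNReal.div_le_div h1 h2
    _ = ENNReal.ofReal (Real.exp ((n : ℝ) * (Λa h - κ / 4)) /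
          Real.exp ((n : ℝ) * (Λa h - θ))) :=
        (ENNReal.ofReal_div_of_pos (Real.exp_pos _)).symm
    _ ≤ ENNReal.ofReal (Real.exp (-(κ / 8) * n)) := by
        rw [← Real.exp_sub]
        refine ENNReal.ofReal_le_ofReal (Real.exp_le_exp.2 ?_)
        have hθle : θ ≤ κ / 8 := min_le_left _ _
        have hn0 : (0 : ℝ) ≤ n := Nat.cast_nonneg n
        nlinarith
  refine ⟨hfinal, ?_⟩
  have hub : Tendsto (fun n : ℕ => ENNReal.ofReal (Real.exp (-(κ / 8) * n)))
      atTop (𝓝 0) := by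
    have hgeom : Tendsto (fun n : ℕ => Real.exp (-(κ / 8)) ^ n) atTop (𝓝 0) :=
      tendsto_pow_atTop_nhds_zero_of_lt_one (Real.exp_pos _).le
        (by simpa using Real.exp_lt_exp.2 (show -(κ / 8) < 0 by linarith))
    have hreal : Tendsto (fun n : ℕ => Real.exp (-(κ / 8) * n)) atTop (𝓝 0) := by
      refine hgeom.congr fun n => ?_
      rw [← Real.exp_nat_mul]
      congr 1
      ring
    have := ENNReal.tendsto_ofReal (m := fun n : ℕ => Real.exp (-(κ / 8) * n)) hreal
    rwa [ENNReal.ofReal_zero] at this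
  exact tendsto_of_tendsto_of_tendsto_of_le_of_le' tendsto_const_nhds hub
    (Eventually.of_forall fun n => zero_le) hfinal

end
end
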